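/- arXiv:2506.11500 — 4 statements merged into one kernel-verified Lean document; each statement's English description precedes it below -/
import Mathlib

section
/- There exists a countably infinite abelian group G such that for all natural numbers n < m, the topology Z_n(G) is strictly contained in the topology Z_m(G). In particular, for every n ∈ ℕ, Z(G) = Z±(G) ≠ Z±_n(G) = Z_n(G). -/
open Topology TopologicalSpace

/-- Evaluation of the semigroup polynomial `a₀ x a₁ x ⋯ x aₙ`, encoded by its first
coefficient `a` and the list `l = [a₁, …, aₙ]` of remaining coefficients
(so the degree is `l.length`). -/
def sgEval {M : Type*} [Monoid M] (x a : M) (l : List M) : M :=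
  a * (l.map (fun b => x * b)).prod

/-- The semigroup Zariski topology `Z(M)`, generated by the sets
`{x | f x ≠ g x}` with `f, g` semigroup polynomials. -/
def sgZariski (M : Type*) [Monoid M] : TopologicalSpace M :=
  generateFrom {U | ∃ (a : M) (l : List M) (b : M) (m : List M),
    U = {x | sgEval x a l ≠ sgEval x b m}}

/-- The bounded semigroup Zariski topology `Z_n(M)`, generated by the sets
`{x | f x ≠ g x}` with `f, g` semigroup polynomials of degree at most `n`. -/
def sgZariskiLe (M : Type*) [Monoid M] (n : ℕ) : TopologicalSpace M :=
  generateFrom {U | ∃ (a : M) (l : List M) (b : M) (m : List M),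
    l.length ≤ n ∧ m.length ≤ n ∧ U = {x | sgEval x a l ≠ sgEval x b m}}

/-- Evaluation of the group polynomial `a₀ x^{ε₁} a₁ ⋯ x^{εₙ} aₙ`, encoded by its first
coefficient `a` and the list `l = [(ε₁,a₁), …, (εₙ,aₙ)]`, where `true` stands for the
exponent `1` and `false` for the exponent `-1` (so the degree is `l.length`). -/
def gpEval {G : Type*} [Group G] (x a : G) (l : List (Bool × G)) : G :=
  a * (l.map (fun p => (if p.1 then x else x⁻¹) * p.2)).prod

/-- The group Zariski topology `Z±(G)`, generated by the sets `{x | f x ≠ 1}`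
with `f` a group polynomial. -/
def gpZariski (G : Type*) [Group G] : TopologicalSpace G :=
  generateFrom {U | ∃ (a : G) (l : List (Bool × G)), U = {x | gpEval x a l ≠ 1}}

/-- The bounded group Zariski topology `Z±_n(G)`, generated by the sets `{x | f x ≠ 1}`
with `f` a group polynomial of degree at most `n`. -/
def gpZariskiLe (G : Type*) [Group G] (n : ℕ) : TopologicalSpace G :=
  generateFrom {U | ∃ (a : G) (l : List (Bool × G)), l.length ≤ n ∧ U = {x | gpEval x a l ≠ 1}}

section Norm
variable {H : Type*} [CommGroup H]

lemma sgEval_eq (x a : H) (l : List H) : sgEval x a l = a * l.prod * x ^ l.length := by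
  unfold sgEval
  induction l with
  | nil => simp
  | cons h t ih =>
    simp only [List.map_cons, List.prod_cons, List.length_cons]
    rw [← mul_assoc, mul_comm a (x*h), mul_assoc, ih, pow_succ]
    simp [mul_comm, mul_left_comm, mul_assoc]

def esum {G : Type*} (l : List (Bool × G)) : ℤ := (l.map (fun p => if p.1 then (1:ℤ) else -1)).sum

omit [CommGroup H] in
lemma esum_natAbs_le (l : List (Bool × H)) : (esum l).natAbs ≤ l.length := by
  induction l with
  | nil => simp [esum]
  | cons h t ih =>
    obtain ⟨b, c⟩ := h
    cases b <;> simp [esum] at ih ⊢ <;> omega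

lemma gpEval_eq (x a : H) (l : List (Bool × H)) :
    gpEval x a l = a * (l.map Prod.snd).prod * x ^ esum l := by
  unfold gpEval
  induction l with
  | nil => simp [esum]
  | cons h t ih =>
    obtain ⟨b, c⟩ := h
    cases b <;>
      simp only [esum, List.map_cons, List.prod_cons, List.sum_cons, if_true, if_false] at * <;>
      rw [← mul_assoc, mul_comm a _, mul_assoc, ih, zpow_add] <;>
      simp [mul_comm, mul_left_comm, mul_assoc]

lemma eqkey (x c₁ c₂ : H) (k j : ℕ) :
    c₁ * x ^ k = c₂ * x ^ j ↔ x ^ ((k:ℤ) - j) = c₁⁻¹ * c₂ := by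
  rw [zpow_sub, zpow_natCast, zpow_natCast, mul_inv_eq_iff_eq_mul, mul_assoc,
    eq_inv_mul_iff_mul_eq]

lemma zpow_natAbs (x c : H) (e : ℤ) :
    x ^ e = c ↔ x ^ (e.natAbs) = (if 0 ≤ e then c else c⁻¹) := by
  rcases le_or_gt 0 e with he | he
  · have h2 : e = (e.natAbs : ℤ) := by omega
    rw [if_pos he]; conv_lhs => rw [h2, zpow_natCast]
  · have h2 : e = -(e.natAbs : ℤ) := by omega
    rw [if_neg (not_le.mpr he)]
    conv_lhs => rw [h2, zpow_neg, zpow_natCast]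
    rw [inv_eq_iff_eq_inv]
end Norm

section TTs
variable (H : Type*) [CommGroup H]

def tset (e : ℤ) (c : H) : Set H := {x | x ^ e ≠ c}
def TT (n : ℕ) : Set (Set H) := {U | ∃ (e : ℤ) (c : H), e.natAbs ≤ n ∧ U = tset H e c}
def TTall : Set (Set H) := {U | ∃ (e : ℤ) (c : H), U = tset H e c}

variable {H}

lemma sg_set_eq (a b : H) (l m : List H) :
    {x | sgEval x a l ≠ sgEval x b m} =
      tset H ((l.length : ℤ) - m.length) ((a * l.prod)⁻¹ * (b * m.prod)) := by
  ext x
  simp only [tset, Set.mem_setOf_eq, sgEval_eq]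
  exact not_congr (eqkey x (a * l.prod) (b * m.prod) l.length m.length)

lemma tset_sg_eq (e : ℤ) (c : H) :
    tset H e c = {x | sgEval x 1 (List.replicate e.natAbs 1) ≠
      sgEval x (if 0 ≤ e then c else c⁻¹) []} := by
  ext x
  simp only [tset, Set.mem_setOf_eq, sgEval_eq, List.prod_replicate, List.length_replicate,
    one_pow, one_mul, List.prod_nil, mul_one, List.length_nil, pow_zero]
  exact not_congr (zpow_natAbs x c e)

lemma gp_set_eq (a : H) (l : List (Bool × H)) :
    {x | gpEval x a l ≠ 1} = tset H (esum l) ((a * (l.map Prod.snd).prod)⁻¹) := by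
  ext x
  simp only [tset, Set.mem_setOf_eq, gpEval_eq]
  exact not_congr ((mul_eq_one_iff_inv_eq).trans eq_comm)

lemma tset_gp_eq (e : ℤ) (c : H) :
    tset H e c = {x | gpEval x c⁻¹ (List.replicate e.natAbs (decide (0 ≤ e), 1)) ≠ 1} := by
  ext x
  have hs : esum (List.replicate e.natAbs ((decide (0 ≤ e)), (1:H))) = e := by
    unfold esum
    rw [List.map_replicate, List.sum_replicate]
    rcases le_or_gt 0 e with he | he
    · simp [he, decide_eq_true he]
    · have h : decide (0 ≤ e) = false := decide_eq_false (not_le.mpr he)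
      rw [h]
      simp only [Bool.false_eq_true, if_false, nsmul_eq_mul]
      omega
  simp only [tset, Set.mem_setOf_eq, gpEval_eq, hs, List.map_replicate, List.prod_replicate,
    one_pow, mul_one]
  exact (not_congr ((mul_eq_one_iff_inv_eq).trans (eq_comm.trans (by rw [inv_inv])))).symm

lemma sgLe_eq (n : ℕ) : sgZariskiLe H n = generateFrom (TT H n) := by
  unfold sgZariskiLe
  congr 1
  ext U
  constructor
  · rintro ⟨a, l, b, m, hl, hm, rfl⟩
    exact ⟨(l.length : ℤ) - m.length, (a * l.prod)⁻¹ * (b * m.prod), by omega, sg_set_eq a b l m⟩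
  · rintro ⟨e, c, he, rfl⟩
    exact ⟨1, List.replicate e.natAbs 1, (if 0 ≤ e then c else c⁻¹), [],
      by simpa using he, by simp, tset_sg_eq e c⟩

lemma sg_eq : sgZariski H = generateFrom (TTall H) := by
  unfold sgZariski
  congr 1
  ext U
  constructor
  · rintro ⟨a, l, b, m, rfl⟩
    exact ⟨(l.length : ℤ) - m.length, (a * l.prod)⁻¹ * (b * m.prod), sg_set_eq a b l m⟩
  · rintro ⟨e, c, rfl⟩
    exact ⟨1, List.replicate e.natAbs 1, (if 0 ≤ e then c else c⁻¹), [], tset_sg_eq e c⟩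

lemma gpLe_eq (n : ℕ) : gpZariskiLe H n = generateFrom (TT H n) := by
  unfold gpZariskiLe
  congr 1
  ext U
  constructor
  · rintro ⟨a, l, hl, rfl⟩
    exact ⟨esum l, (a * (l.map Prod.snd).prod)⁻¹, le_trans (esum_natAbs_le l) hl, gp_set_eq a l⟩
  · rintro ⟨e, c, he, rfl⟩
    exact ⟨c⁻¹, List.replicate e.natAbs (decide (0 ≤ e), 1), by simpa using he, tset_gp_eq e c⟩

lemma gp_eq : gpZariski H = generateFrom (TTall H) := by
  unfold gpZariski
  congr 1
  ext U
  constructor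
  · rintro ⟨a, l, rfl⟩
    exact ⟨esum l, (a * (l.map Prod.snd).prod)⁻¹, gp_set_eq a l⟩
  · rintro ⟨e, c, rfl⟩
    exact ⟨c⁻¹, List.replicate e.natAbs (decide (0 ≤ e), 1), tset_gp_eq e c⟩
end TTs

abbrev QZ : Type := ℚ ⧸ AddSubgroup.zmultiples (1 : ℚ)
instance : Countable QZ := inferInstanceAs (Countable (Quotient _))
abbrev AA : Type := ℕ →₀ QZ
abbrev Gg : Type := Multiplicative AA
instance : Countable Gg := inferInstanceAs (Countable AA)

def qmk (r : ℚ) : QZ := QuotientAddGroup.mk r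

lemma qz_smul (e : ℤ) (q : ℕ) (hq : q ≠ 0) : e • qmk ((q:ℚ)⁻¹) = 0 ↔ (q:ℤ) ∣ e := by
  have h1 : e • qmk ((q:ℚ)⁻¹) = qmk (e • (q:ℚ)⁻¹) :=
    (map_zsmul (QuotientAddGroup.mk' _) e ((q:ℚ)⁻¹)).symm
  rw [h1]
  unfold qmk
  rw [QuotientAddGroup.eq_zero_iff, AddSubgroup.mem_zmultiples_iff]
  constructor
  · rintro ⟨k, hk⟩
    have hq' : (q:ℚ) ≠ 0 := Nat.cast_ne_zero.mpr hq
    rw [zsmul_eq_mul, mul_one] at hk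
    rw [zsmul_eq_mul] at hk
    have : (k:ℚ) * q = e := by field_simp at hk ⊢; linarith [hk]
    have h2 : e = k * (q:ℤ) := by exact_mod_cast this.symm
    exact Dvd.intro_left k h2.symm
  · rintro ⟨k, rfl⟩
    refine ⟨k, ?_⟩
    have hq' : (q:ℚ) ≠ 0 := Nat.cast_ne_zero.mpr hq
    rw [zsmul_eq_mul, mul_one, zsmul_eq_mul]
    push_cast
    field_simp
instance : Nontrivial QZ := by
  refine ⟨qmk ((2:ℚ))⁻¹, 0, fun h => ?_⟩
  have : (1:ℤ) • qmk ((2:ℕ):ℚ)⁻¹ = 0 := by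
    rw [one_smul]; exact_mod_cast h
  rw [qz_smul 1 2 (by norm_num)] at this
  omega
instance : Infinite AA := Finsupp.infinite_of_left
instance : Infinite Gg := inferInstanceAs (Infinite AA)

open Multiplicative in
def small (n : ℕ) (C : Set Gg) : Prop :=
  ∃ L : List (ℤ × Gg), (∀ p ∈ L, p.1 ≠ 0 ∧ p.1.natAbs ≤ n) ∧
    C ⊆ {x | ∃ p ∈ L, x ^ p.1 = p.2}

lemma gen_inv {n : ℕ} {V : Set Gg} (h : GenerateOpen (TT Gg n) V) :
    V = ∅ ∨ small n Vᶜ := by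
  induction h with
  | basic U hU =>
    obtain ⟨e, c, he, rfl⟩ := hU
    by_cases h0 : e = 0
    · subst h0
      by_cases hc : c = 1
      · left; ext x; simp [tset, hc]
      · right
        refine ⟨[], by simp, fun x hx => absurd ?_ (by simpa using hx)⟩
        simp only [tset, Set.mem_compl_iff, Set.mem_setOf_eq, not_not] at hx
        simpa [eq_comm] using hc (by simpa using hx.symm)
    · right
      refine ⟨[(e, c)], by simp [h0, he], fun x hx => ?_⟩
      simp only [tset, Set.mem_compl_iff, Set.mem_setOf_eq, not_not] at hx
      exact ⟨(e, c), List.mem_singleton_self _, hx⟩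
  | univ => right; exact ⟨[], by simp, by simp⟩
  | inter U V hU hV ihU ihV =>
    rcases ihU with h1 | h1
    · left; rw [h1, Set.empty_inter]
    rcases ihV with h2 | h2
    · left; rw [h2, Set.inter_empty]
    right
    obtain ⟨L1, hc1, hs1⟩ := h1
    obtain ⟨L2, hc2, hs2⟩ := h2
    refine ⟨L1 ++ L2, ?_, ?_⟩
    · intro p hp
      rcases List.mem_append.mp hp with h | h
      exacts [hc1 p h, hc2 p h]
    · rw [Set.compl_inter]
      refine Set.union_subset (hs1.trans ?_) (hs2.trans ?_) <;>
        · rintro x ⟨p, hp, hx⟩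
          exact ⟨p, List.mem_append.mpr (by first | exact Or.inl hp | exact Or.inr hp), hx⟩
  | sUnion S hS ih =>
    by_cases hall : ∀ t ∈ S, t = ∅
    · left
      ext x; simp only [Set.mem_sUnion, Set.mem_empty_iff_false, iff_false, not_exists]
      rintro t ⟨ht, hx⟩
      rw [hall t ht] at hx; exact hx
    · right
      push_neg at hall
      obtain ⟨t, ht, htne⟩ := hall
      rcases ih t ht with h | ⟨L, hc, hs⟩
      · exact absurd h (Set.nonempty_iff_ne_empty.mp htne)
      refine ⟨L, hc, le_trans ?_ hs⟩
      exact Set.compl_subset_compl.mpr (Set.subset_sUnion_of_mem ht)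

lemma qz_zsmul_single (e : ℤ) (j : ℕ) (w : QZ) :
    e • (Finsupp.single j w : AA) = Finsupp.single j (e • w) :=
  (map_zsmul (Finsupp.singleAddHom j) e w).symm

lemma qzu_ne (k : ℕ) (e : ℤ) (hk : k ≠ 0) (hnd : ¬ ((k:ℤ) ∣ e)) (j : ℕ) :
    e • (Finsupp.single j (qmk ((k:ℚ)⁻¹)) : AA) ≠ 0 := by
  intro h
  rw [qz_zsmul_single] at h
  have h2 : e • qmk ((k:ℚ)⁻¹) = 0 := by
    have := congrArg (fun v : AA => v j) h
    simpa using this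
  exact hnd ((qz_smul e k hk).mp h2)

open Multiplicative in
lemma main_notopen {n m : ℕ} (h : n < m) :
    ¬ IsOpen[sgZariskiLe Gg n] (tset Gg (m:ℤ) 1) := by
  intro hop
  rw [sgLe_eq] at hop
  have hgen : GenerateOpen (TT Gg n) (tset Gg (m:ℤ) 1) := hop
  have hm0 : m ≠ 0 := by omega
  rcases gen_inv hgen with h1 | ⟨L, hLc, hLs⟩
  · have hmem : (ofAdd (Finsupp.single 0 (qmk ((2*m:ℕ):ℚ)⁻¹) : AA)) ∈ tset Gg (m:ℤ) 1 := by
      simp only [tset, Set.mem_setOf_eq]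
      intro hx
      have hx2 := congrArg toAdd hx
      rw [toAdd_zpow, toAdd_ofAdd, toAdd_one] at hx2
      refine qzu_ne (2*m) (m:ℤ) (by omega) ?_ 0 hx2
      intro hd
      have := Int.le_of_dvd (by exact_mod_cast Nat.pos_of_ne_zero hm0) hd
      omega
    rw [h1] at hmem
    exact hmem
  · set u : QZ := qmk ((m:ℚ)⁻¹) with hu
    have hu0 : (m:ℤ) • u = 0 := (qz_smul (m:ℤ) m hm0).mpr dvd_rfl
    set xj : Fin (L.length + 1) → Gg := fun j => ofAdd (Finsupp.single (j:ℕ) u) with hxj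
    have hxmem : ∀ j, xj j ∈ (tset Gg (m:ℤ) 1)ᶜ := by
      intro j
      simp only [tset, Set.mem_compl_iff, Set.mem_setOf_eq, not_not, hxj]
      apply toAdd.injective
      rw [toAdd_zpow, toAdd_ofAdd, toAdd_one, qz_zsmul_single, hu0, Finsupp.single_zero]
    have hcov : ∀ j, ∃ i : Fin L.length, (xj j) ^ (L.get i).1 = (L.get i).2 := by
      intro j
      obtain ⟨p, hp, hx⟩ := hLs (hxmem j)
      obtain ⟨i, hi⟩ := List.mem_iff_get.mp hp
      exact ⟨i, by rw [hi]; exact hx⟩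
    choose f hf using hcov
    obtain ⟨j, j', hne, hfe⟩ := Fintype.exists_ne_map_eq_of_card_lt f (by simp)
    set p := L.get (f j) with hp
    have h1 : (xj j) ^ p.1 = p.2 := hf j
    have h2 : (xj j') ^ p.1 = p.2 := by rw [hp, hfe]; exact hf j'
    have h3 : toAdd ((xj j) ^ p.1) = toAdd ((xj j') ^ p.1) := by rw [h1, h2]
    rw [toAdd_zpow, toAdd_zpow, hxj] at h3
    simp only [toAdd_ofAdd] at h3
    rw [qz_zsmul_single, qz_zsmul_single] at h3
    have h4 := congrArg (fun v : AA => v (j:ℕ)) h3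
    have hjj : (j:ℕ) ≠ (j':ℕ) := fun hc => hne (Fin.val_injective hc)
    rw [show ((Finsupp.single (j:ℕ) (p.1 • u) : AA) (j:ℕ)) = p.1 • u from
      Finsupp.single_eq_same] at h4
    rw [show ((Finsupp.single (j':ℕ) (p.1 • u) : AA) (j:ℕ)) = 0 from
      Finsupp.single_eq_of_ne' hjj.symm] at h4
    have h5 : (m:ℤ) ∣ p.1 := (qz_smul p.1 m hm0).mp h4
    have hpL := hLc p (L.get_mem _)
    have h6 : (m:ℤ).natAbs ∣ p.1.natAbs := Int.natAbs_dvd_natAbs.mpr h5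
    have h7 : m ≤ p.1.natAbs := Nat.le_of_dvd (Int.natAbs_pos.mpr hpL.1) (by simpa using h6)
    omega

/-- There exists a countably infinite abelian group `G` such that the bounded Zariski
topologies `Z_n(G)` are strictly increasing in `n`; in particular, for every `n`,
`Z(G) = Z±(G) ≠ Z±_n(G) = Z_n(G)`. -/
theorem statement0 :
    ∃ (G : Type) (_ : CommGroup G), Countable G ∧ Infinite G ∧
      (∀ n m : ℕ, n < m →
        (∀ U : Set G, IsOpen[sgZariskiLe G n] U → IsOpen[sgZariskiLe G m] U) ∧
        ∃ U : Set G, IsOpen[sgZariskiLe G m] U ∧ ¬ IsOpen[sgZariskiLe G n] U) ∧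
      sgZariski G = gpZariski G ∧
      ∀ n : ℕ, gpZariski G ≠ gpZariskiLe G n ∧ gpZariskiLe G n = sgZariskiLe G n := by
  refine ⟨Gg, inferInstance, inferInstance, inferInstance, ?_, sg_eq.trans gp_eq.symm, ?_⟩
  · intro n m hnm
    constructor
    · intro U hU
      rw [sgLe_eq] at hU ⊢
      have hsub : TT Gg n ⊆ TT Gg m := by
        rintro V ⟨e, c, he, rfl⟩
        exact ⟨e, c, he.trans hnm.le, rfl⟩
      exact (TopologicalSpace.generateFrom_anti hsub) U hU
    · refine ⟨tset Gg (m:ℤ) 1, ?_, main_notopen hnm⟩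
      rw [sgLe_eq]
      exact GenerateOpen.basic _ ⟨(m:ℤ), 1, by simp, rfl⟩
  · intro n
    refine ⟨?_, (gpLe_eq n).trans (sgLe_eq n).symm⟩
    intro heq
    have hop : IsOpen[gpZariski Gg] (tset Gg ((n+1:ℕ):ℤ) 1) := by
      rw [gp_eq]
      exact GenerateOpen.basic _ ⟨((n+1:ℕ):ℤ), 1, rfl⟩
    rw [heq, gpLe_eq, ← sgLe_eq] at hop
    exact main_notopen (Nat.lt_succ_self n) hop
end

section
/- Let X be an infinite set and let G be a subgroup of Sym(X) with Sym_ω(X) ⊆ G. Then Z±_4(G) = Z±(G), and this topology equals the topology of pointwise convergence on G; in particular, Z±(G) is totally disconnected. -/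
open Topology TopologicalSpace

/-- The topology of pointwise convergence on `Sym(X) = Equiv.Perm X`: the subspace topology
induced from the product space `X → X`, where `X` carries the discrete topology. -/
def permPtwise (X : Type*) : TopologicalSpace (Equiv.Perm X) :=
  TopologicalSpace.induced (fun (g : Equiv.Perm X) (x : X) => g x)
    (@Pi.topologicalSpace X (fun _ => X) (fun _ => ⊥))

/-- The topology of pointwise convergence on a subgroup `G ≤ Sym(X)`. -/
def subPtwise {X : Type*} (G : Subgroup (Equiv.Perm X)) : TopologicalSpace ↥G :=
  TopologicalSpace.induced Subtype.val (permPtwise X)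

section Aux

open scoped commutatorElement

variable {X : Type*}

/-- The 3-cycle `α → β → γ → α`. -/
def cyc [DecidableEq X] (α β γ : X) : Equiv.Perm X := Equiv.swap α γ * Equiv.swap α β

section cyc
variable [DecidableEq X] {α β γ : X}

lemma cyc_apply_of_ne {x : X} (h1 : x ≠ α) (h2 : x ≠ β) (h3 : x ≠ γ) : cyc α β γ x = x := by
  simp [cyc, Equiv.swap_apply_of_ne_of_ne, h1, h2, h3]

lemma cyc_apply_fst (hab : α ≠ β) (hbc : β ≠ γ) : cyc α β γ α = β := by
  simp [cyc, Equiv.swap_apply_of_ne_of_ne, hab.symm, hbc]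

lemma cyc_apply_snd (hab : α ≠ β) (hac : α ≠ γ) : cyc α β γ β = γ := by
  simp [cyc, Equiv.swap_apply_of_ne_of_ne, hab.symm]

lemma cyc_apply_thd (hac : α ≠ γ) (hbc : β ≠ γ) : cyc α β γ γ = α := by
  simp [cyc, Equiv.swap_apply_of_ne_of_ne, hac.symm, hbc.symm]

lemma swap_cyc_not_commute {m b : X} {u : Equiv.Perm X} (hmb : m ≠ b)
    (hub : u b = b) (hum : u m ≠ m) : ¬ Commute (Equiv.swap m b) u := by
  intro h
  have h2 := DFunLike.congr_fun h.eq b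
  simp [Equiv.Perm.mul_apply, hub, Equiv.swap_apply_right] at h2
  exact hum h2.symm

end cyc

lemma not_commute_witness [DecidableEq X] {m b α β γ : X} {k ρ : Equiv.Perm X}
    (hρ : ∀ x, x ≠ α → x ≠ β → x ≠ γ → ρ x = x)
    (h : ¬ Commute (Equiv.swap m b) (k * ρ * k⁻¹)) :
    (k α = m ∨ k α = b) ∨ (k β = m ∨ k β = b) ∨ (k γ = m ∨ k γ = b) := by
  by_contra hc
  push_neg at hc
  obtain ⟨⟨hα1, hα2⟩, ⟨hβ1, hβ2⟩, hγ1, hγ2⟩ := hc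
  apply h
  apply Equiv.Perm.Disjoint.commute
  intro x
  rcases ne_or_eq x m with hxm | rfl
  · rcases ne_or_eq x b with hxb | rfl
    · exact Or.inl (Equiv.swap_apply_of_ne_of_ne hxm hxb)
    · right
      have key : ∀ z, k z ≠ x → k⁻¹ x ≠ z := fun z h1 hE => h1 (by rw [← hE, ← Equiv.Perm.mul_apply, mul_inv_cancel, Equiv.Perm.one_apply])
      have hfix : ρ (k⁻¹ x) = k⁻¹ x := hρ _ (key _ hα2) (key _ hβ2) (key _ hγ2)
      show (k * ρ * k⁻¹) x = x
      rw [Equiv.Perm.mul_apply, Equiv.Perm.mul_apply, hfix, ← Equiv.Perm.mul_apply, mul_inv_cancel, Equiv.Perm.one_apply]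
  · right
    have key : ∀ z, k z ≠ x → k⁻¹ x ≠ z := fun z h1 hE => h1 (by rw [← hE, ← Equiv.Perm.mul_apply, mul_inv_cancel, Equiv.Perm.one_apply])
    have hfix : ρ (k⁻¹ x) = k⁻¹ x := hρ _ (key _ hα1) (key _ hβ1) (key _ hγ1)
    show (k * ρ * k⁻¹) x = x
    rw [Equiv.Perm.mul_apply, Equiv.Perm.mul_apply, hfix, ← Equiv.Perm.mul_apply, mul_inv_cancel, Equiv.Perm.one_apply]

lemma four_aux [DecidableEq X] (v : Fin 9 → X) (hv : Function.Injective v) (I : Finset X)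
    (hIcard : I.card = 3) :
    ∀ i j l m : Fin 9, i ≠ j → i ≠ l → i ≠ m → j ≠ l → j ≠ m → l ≠ m →
      v i ∈ I → v j ∈ I → v l ∈ I → v m ∈ I → False := by
  have hne : ∀ {i j : Fin 9}, i ≠ j → v i ≠ v j := fun h => hv.ne h
  intro i j l m d1 d2 d3 d4 d5 d6 mi mj ml mm
  have hsub : ({v i, v j, v l, v m} : Finset X) ⊆ I := by
    intro x hx
    simp only [Finset.mem_insert, Finset.mem_singleton] at hx
    rcases hx with rfl | rfl | rfl | rfl <;> assumption
  have hcard : ({v i, v j, v l, v m} : Finset X).card = 4 := by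
    rw [Finset.card_insert_of_notMem (by
        simp only [Finset.mem_insert, Finset.mem_singleton]
        push_neg
        exact ⟨hne d1, hne d2, hne d3⟩),
      Finset.card_insert_of_notMem (by
        simp only [Finset.mem_insert, Finset.mem_singleton]
        push_neg
        exact ⟨hne d4, hne d5⟩),
      Finset.card_insert_of_notMem (by
        simp only [Finset.mem_singleton]
        exact hne d6), Finset.card_singleton]
  have := Finset.card_le_card hsub
  omega

lemma pigeon [DecidableEq X] (k : Equiv.Perm X) (v : Fin 9 → X) (hv : Function.Injective v)
    (h₀ : (k (v 0) = v 0 ∨ k (v 0) = v 3) ∨ (k (v 1) = v 0 ∨ k (v 1) = v 3) ∨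
          (k (v 2) = v 0 ∨ k (v 2) = v 3))
    (h₁ : (k (v 0) = v 0 ∨ k (v 0) = v 4) ∨ (k (v 1) = v 0 ∨ k (v 1) = v 4) ∨
          (k (v 2) = v 0 ∨ k (v 2) = v 4))
    (h₂ : (k (v 0) = v 1 ∨ k (v 0) = v 5) ∨ (k (v 1) = v 1 ∨ k (v 1) = v 5) ∨
          (k (v 2) = v 1 ∨ k (v 2) = v 5))
    (h₃ : (k (v 0) = v 1 ∨ k (v 0) = v 6) ∨ (k (v 1) = v 1 ∨ k (v 1) = v 6) ∨
          (k (v 2) = v 1 ∨ k (v 2) = v 6))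
    (h₄ : (k (v 0) = v 2 ∨ k (v 0) = v 7) ∨ (k (v 1) = v 2 ∨ k (v 1) = v 7) ∨
          (k (v 2) = v 2 ∨ k (v 2) = v 7))
    (h₅ : (k (v 0) = v 2 ∨ k (v 0) = v 8) ∨ (k (v 1) = v 2 ∨ k (v 1) = v 8) ∨
          (k (v 2) = v 2 ∨ k (v 2) = v 8)) :
    k (v 0) = v 0 ∨ k (v 0) = v 1 ∨ k (v 0) = v 2 := by
  classical
  set F : Finset X := {v 0, v 1, v 2} with hF
  have hne : ∀ {i j : Fin 9}, i ≠ j → v i ≠ v j := fun h => hv.ne h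
  have hFcard : F.card = 3 := by
    rw [hF, Finset.card_insert_of_notMem
        (by simp [hne (by decide : (0:Fin 9) ≠ 1), hne (by decide : (0:Fin 9) ≠ 2)]),
      Finset.card_insert_of_notMem (by simp [hne (by decide : (1:Fin 9) ≠ 2)]),
      Finset.card_singleton]
  set I : Finset X := F.image k with hI
  have hIcard : I.card = 3 := by
    rw [hI, Finset.card_image_of_injective _ k.injective, hFcard]
  have four := four_aux v hv I hIcard
  have step : ∀ {z w w' : X}, z ∈ F → (k z = w ∨ k z = w') → w ∈ I ∨ w' ∈ I := by
    rintro z w w' hz (h | h)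
    · exact Or.inl (h ▸ Finset.mem_image_of_mem _ hz)
    · exact Or.inr (h ▸ Finset.mem_image_of_mem _ hz)
  have m0 : v 0 ∈ F := by simp [hF]
  have m1 : v 1 ∈ F := by simp [hF]
  have m2 : v 2 ∈ F := by simp [hF]
  have H0 : v 0 ∈ I ∨ v 3 ∈ I := by
    rcases h₀ with h | h | h
    exacts [step m0 h, step m1 h, step m2 h]
  have H1 : v 0 ∈ I ∨ v 4 ∈ I := by
    rcases h₁ with h | h | h
    exacts [step m0 h, step m1 h, step m2 h]
  have H2 : v 1 ∈ I ∨ v 5 ∈ I := by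
    rcases h₂ with h | h | h
    exacts [step m0 h, step m1 h, step m2 h]
  have H3 : v 1 ∈ I ∨ v 6 ∈ I := by
    rcases h₃ with h | h | h
    exacts [step m0 h, step m1 h, step m2 h]
  have H4 : v 2 ∈ I ∨ v 7 ∈ I := by
    rcases h₄ with h | h | h
    exacts [step m0 h, step m1 h, step m2 h]
  have H5 : v 2 ∈ I ∨ v 8 ∈ I := by
    rcases h₅ with h | h | h
    exacts [step m0 h, step m1 h, step m2 h]
  clear h₀ h₁ h₂ h₃ h₄ h₅ step
  have pair : ∀ {a b c : X}, (a ∈ I ∨ b ∈ I) → (a ∈ I ∨ c ∈ I) → a ∈ I ∨ (b ∈ I ∧ c ∈ I) := by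
    rintro a b c (h | h) (h' | h')
    exacts [Or.inl h, Or.inl h, Or.inl h', Or.inr ⟨h, h'⟩]
  have hA : v 0 ∈ I ∨ (v 3 ∈ I ∧ v 4 ∈ I) := pair H0 H1
  have hB : v 1 ∈ I ∨ (v 5 ∈ I ∧ v 6 ∈ I) := pair H2 H3
  have hC : v 2 ∈ I ∨ (v 7 ∈ I ∧ v 8 ∈ I) := pair H4 H5
  rcases hA with hA | ⟨h3, h4⟩
  · rcases hB with hB | ⟨h5, h6⟩
    · rcases hC with hC | ⟨h7, h8⟩
      · have hsub : F ⊆ I := by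
          intro x hx
          simp only [hF, Finset.mem_insert, Finset.mem_singleton] at hx
          rcases hx with rfl | rfl | rfl <;> assumption
        have hFI : F = I := Finset.eq_of_subset_of_card_le hsub (by omega)
        have : k (v 0) ∈ F := by rw [hFI]; exact Finset.mem_image_of_mem _ m0
        simpa [hF] using this
      · exact (four 0 1 7 8 (by decide) (by decide) (by decide) (by decide) (by decide)
          (by decide) hA hB h7 h8).elim
    · rcases hC with hC | ⟨h7, h8⟩
      · exact (four 0 5 6 2 (by decide) (by decide) (by decide) (by decide) (by decide)
          (by decide) hA h5 h6 hC).elim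
      · exact (four 5 6 7 8 (by decide) (by decide) (by decide) (by decide) (by decide)
          (by decide) h5 h6 h7 h8).elim
  · rcases hB with hB | ⟨h5, h6⟩
    · rcases hC with hC | ⟨h7, h8⟩
      · exact (four 3 4 1 2 (by decide) (by decide) (by decide) (by decide) (by decide)
          (by decide) h3 h4 hB hC).elim
      · exact (four 3 4 7 8 (by decide) (by decide) (by decide) (by decide) (by decide)
          (by decide) h3 h4 h7 h8).elim
    · exact (four 3 4 5 6 (by decide) (by decide) (by decide) (by decide) (by decide)
        (by decide) h3 h4 h5 h6).elim

/-- The basic open set given by the degree-4 polynomial `s·(x g₀⁻¹) t (x g₀⁻¹)⁻¹·s⁻¹·(x g₀⁻¹) t⁻¹ (x g₀⁻¹)⁻¹`. -/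
def Cset {H : Type*} [Group H] (g₀ s t : H) : Set H :=
  {g | gpEval g s [(true, g₀⁻¹ * t * g₀), (false, s⁻¹), (true, g₀⁻¹ * t⁻¹ * g₀), (false, 1)] ≠ 1}

lemma Cset_eval {H : Type*} [Group H] (g₀ s t g : H) :
    gpEval g s [(true, g₀⁻¹ * t * g₀), (false, s⁻¹), (true, g₀⁻¹ * t⁻¹ * g₀), (false, 1)]
      = ⁅s, (g * g₀⁻¹) * t * (g * g₀⁻¹)⁻¹⁆ := by
  simp only [gpEval, List.map_cons, List.map_nil, List.prod_cons, List.prod_nil,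
    commutatorElement_def, Bool.false_eq_true, if_true, if_false]
  group

lemma Cset_mem_iff {H : Type*} [Group H] {g₀ s t g : H} :
    g ∈ Cset g₀ s t ↔ ¬ Commute s ((g * g₀⁻¹) * t * (g * g₀⁻¹)⁻¹) := by
  rw [Cset, Set.mem_setOf_eq, Cset_eval, Ne, commutatorElement_eq_one_iff_commute]

lemma commute_subgroup_iff {H : Subgroup (Equiv.Perm X)} (a b : ↥H) :
    Commute a b ↔ Commute (a : Equiv.Perm X) (b : Equiv.Perm X) := by
  rw [Commute, SemiconjBy, Commute, SemiconjBy, Subtype.ext_iff, Subgroup.coe_mul,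
    Subgroup.coe_mul]

variable (G : Subgroup (Equiv.Perm X))

lemma subPtwise_eq_induced :
    subPtwise G = TopologicalSpace.induced (fun (g : ↥G) (x : X) => (g : Equiv.Perm X) x)
      (@Pi.topologicalSpace X (fun _ => X) (fun _ => ⊥)) := by
  rw [subPtwise, permPtwise, induced_compose]
  rfl

lemma subPtwise_eq_iInf :
    subPtwise G = ⨅ p : X, TopologicalSpace.induced
      (fun g : ↥G => (g : Equiv.Perm X) p) (⊥ : TopologicalSpace X) := by
  rw [subPtwise_eq_induced]
  have hPi : (@Pi.topologicalSpace X (fun _ => X) (fun _ => ⊥))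
      = ⨅ p : X, TopologicalSpace.induced (fun f : X → X => f p) ⊥ := rfl
  rw [hPi, induced_iInf]
  simp only [induced_compose]
  rfl

section cont
variable {G}

lemma cont_apply (p : X) :
    @Continuous _ _ (subPtwise G) ⊥ (fun g : ↥G => (g : Equiv.Perm X) p) := by
  rw [subPtwise_eq_iInf]
  exact continuous_iff_le_induced.mpr (iInf_le _ p)

lemma cont_apply_inv (p : X) :
    @Continuous _ _ (subPtwise G) ⊥ (fun g : ↥G => ((g : Equiv.Perm X))⁻¹ p) := by
  letI : TopologicalSpace X := ⊥
  haveI : DiscreteTopology X := ⟨rfl⟩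
  letI : TopologicalSpace ↥G := subPtwise G
  rw [continuous_discrete_rng]
  intro q
  have : (fun g : ↥G => ((g : Equiv.Perm X))⁻¹ p) ⁻¹' {q}
      = (fun g : ↥G => (g : Equiv.Perm X) q) ⁻¹' {p} := by
    ext g
    simp only [Set.mem_preimage, Set.mem_singleton_iff]
    constructor
    · intro h; rw [← h, ← Equiv.Perm.mul_apply, mul_inv_cancel, Equiv.Perm.one_apply]
    · intro h; rw [← h, ← Equiv.Perm.mul_apply, inv_mul_cancel, Equiv.Perm.one_apply]
  rw [this]
  exact (cont_apply q).isOpen_preimage _ (isOpen_discrete _)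

lemma cont_eval {α : Type*} [tα : TopologicalSpace α] (F : α → Equiv.Perm X) (e : α → X)
    (hF : ∀ p, @Continuous _ _ tα ⊥ (fun a => F a p)) (he : @Continuous _ _ tα ⊥ e) :
    @Continuous _ _ tα ⊥ (fun a => F a (e a)) := by
  letI : TopologicalSpace X := ⊥
  haveI : DiscreteTopology X := ⟨rfl⟩
  rw [continuous_discrete_rng]
  intro q
  have : (fun a => F a (e a)) ⁻¹' {q} = ⋃ u : X, ((fun a => F a u) ⁻¹' {q}) ∩ (e ⁻¹' {u}) := by
    ext a
    simp only [Set.mem_preimage, Set.mem_singleton_iff, Set.mem_iUnion, Set.mem_inter_iff]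
    exact ⟨fun h => ⟨e a, h, rfl⟩, fun ⟨u, h1, h2⟩ => by rw [h2]; exact h1⟩
  rw [this]
  exact isOpen_iUnion fun u => ((hF u).isOpen_preimage _ (isOpen_discrete _)).inter
    (he.isOpen_preimage _ (isOpen_discrete _))

lemma cont_gpEval_apply (l : List (Bool × ↥G)) :
    ∀ (A : ↥G → ↥G), (∀ p : X, @Continuous _ _ (subPtwise G) ⊥
        (fun g => ((A g : Equiv.Perm X)) p)) →
    ∀ p : X, @Continuous _ _ (subPtwise G) ⊥
      (fun g : ↥G =>
        (((A g * (l.map (fun b => (if b.1 then g else g⁻¹) * b.2)).prod : ↥G)) : Equiv.Perm X) p) := by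
  induction l with
  | nil => intro A hA p; simpa using hA p
  | cons q l ih =>
      obtain ⟨b, c⟩ := q
      intro A hA p
      cases b
      · have key := ih (fun g => A g * (g⁻¹ * c)) ?_ p
        · simpa only [List.map_cons, List.prod_cons, Bool.false_eq_true, if_false, mul_assoc]
            using key
        · intro pt
          have hcoe : ∀ g : ↥G, ((A g * (g⁻¹ * c) : ↥G) : Equiv.Perm X) pt
              = (A g : Equiv.Perm X) (((g : Equiv.Perm X))⁻¹ ((c : Equiv.Perm X) pt)) :=
            fun g => rfl
          simp only [hcoe]
          exact cont_eval (tα := subPtwise G) (fun g : ↥G => (A g : Equiv.Perm X)) _ hA (cont_apply_inv _)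
      · have key := ih (fun g => A g * (g * c)) ?_ p
        · simpa only [List.map_cons, List.prod_cons, if_true, mul_assoc] using key
        · intro pt
          have hcoe : ∀ g : ↥G, ((A g * (g * c) : ↥G) : Equiv.Perm X) pt
              = (A g : Equiv.Perm X) ((g : Equiv.Perm X) ((c : Equiv.Perm X) pt)) :=
            fun g => rfl
          simp only [hcoe]
          exact cont_eval (tα := subPtwise G) (fun g : ↥G => (A g : Equiv.Perm X)) _ hA (cont_apply _)

lemma ptwise_le_zariski :
    subPtwise G ≤ generateFrom {U | ∃ (a : ↥G) (l : List (Bool × ↥G)), U = {x | gpEval x a l ≠ 1}} := by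
  apply le_generateFrom
  rintro U ⟨a, l, rfl⟩
  letI : TopologicalSpace X := ⊥
  haveI : DiscreteTopology X := ⟨rfl⟩
  letI : TopologicalSpace ↥G := subPtwise G
  have : {x : ↥G | gpEval x a l ≠ 1}
      = ⋃ p : X, (fun g : ↥G => ((gpEval g a l : ↥G) : Equiv.Perm X) p) ⁻¹' ({p}ᶜ) := by
    ext g
    simp only [Set.mem_setOf_eq, Set.mem_iUnion, Set.mem_preimage, Set.mem_compl_iff,
      Set.mem_singleton_iff]
    constructor
    · intro h
      by_contra hc
      push_neg at hc
      apply h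
      apply Subtype.ext
      exact Equiv.ext fun p => hc p
    · rintro ⟨p, hp⟩ h
      exact hp (by rw [h]; rfl)
  rw [this]
  apply isOpen_iUnion
  intro p
  have hc : @Continuous _ _ (subPtwise G) ⊥
      (fun g : ↥G => ((gpEval g a l : ↥G) : Equiv.Perm X) p) := by
    have := cont_gpEval_apply l (fun _ => a) (fun pt => by
      simpa using (continuous_const : @Continuous _ _ (subPtwise G) ⊥ (fun _ : ↥G => (a : Equiv.Perm X) pt))) p
    simpa [gpEval] using this
  exact hc.isOpen_preimage _ (isOpen_discrete _)

end cont

variable {G}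

lemma mem_Cset_self {H : Subgroup (Equiv.Perm X)} {g₀ s t : ↥H}
    (h : ¬ Commute (s : Equiv.Perm X) (t : Equiv.Perm X)) : g₀ ∈ Cset g₀ s t := by
  rw [Cset_mem_iff]
  intro hc
  apply h
  rw [← commute_subgroup_iff]
  simpa using hc

lemma Cset_witness {H : Subgroup (Equiv.Perm X)} {g₀ s t g : ↥H}
    (h : g ∈ Cset g₀ s t) :
    ¬ Commute (s : Equiv.Perm X)
      (((g * g₀⁻¹ : ↥H) : Equiv.Perm X) * t * ((g * g₀⁻¹ : ↥H) : Equiv.Perm X)⁻¹) := by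
  rw [Cset_mem_iff] at h
  intro hc
  apply h
  rw [commute_subgroup_iff]
  simpa using hc

lemma nc_fst [DecidableEq X] {α β γ b : X} (hαβ : α ≠ β) (hβγ : β ≠ γ)
    (hbα : b ≠ α) (hbβ : b ≠ β) (hbγ : b ≠ γ) :
    ¬ Commute (Equiv.swap α b) (cyc α β γ) :=
  swap_cyc_not_commute hbα.symm (cyc_apply_of_ne hbα hbβ hbγ)
    (by rw [cyc_apply_fst hαβ hβγ]; exact hαβ.symm)

lemma nc_snd [DecidableEq X] {α β γ b : X} (hαβ : α ≠ β) (hαγ : α ≠ γ) (hβγ : β ≠ γ)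
    (hbα : b ≠ α) (hbβ : b ≠ β) (hbγ : b ≠ γ) :
    ¬ Commute (Equiv.swap β b) (cyc α β γ) :=
  swap_cyc_not_commute hbβ.symm (cyc_apply_of_ne hbα hbβ hbγ)
    (by rw [cyc_apply_snd hαβ hαγ]; exact hβγ.symm)

lemma nc_thd [DecidableEq X] {α β γ b : X} (hαβ : α ≠ β) (hαγ : α ≠ γ) (hβγ : β ≠ γ)
    (hbα : b ≠ α) (hbβ : b ≠ β) (hbγ : b ≠ γ) :
    ¬ Commute (Equiv.swap γ b) (cyc α β γ) :=
  swap_cyc_not_commute hbγ.symm (cyc_apply_of_ne hbα hbβ hbγ)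
    (by rw [cyc_apply_thd hαγ hβγ]; exact hαγ)


def vec9 (a0 a1 a2 a3 a4 a5 a6 a7 a8 : X) : Fin 9 → X := fun i =>
  match i with
  | 0 => a0 | 1 => a1 | 2 => a2 | 3 => a3 | 4 => a4 | 5 => a5 | 6 => a6 | 7 => a7 | 8 => a8

lemma triple_core [DecidableEq X] (k : Equiv.Perm X) (α β γ b0 b1 b2 b3 b4 b5 : X)
    (hv : Function.Injective (vec9 α β γ b0 b1 b2 b3 b4 b5))
    (h0 : ¬ Commute (Equiv.swap α b0) (k * cyc α β γ * k⁻¹))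
    (h1 : ¬ Commute (Equiv.swap α b1) (k * cyc α β γ * k⁻¹))
    (h2 : ¬ Commute (Equiv.swap β b2) (k * cyc α β γ * k⁻¹))
    (h3 : ¬ Commute (Equiv.swap β b3) (k * cyc α β γ * k⁻¹))
    (h4 : ¬ Commute (Equiv.swap γ b4) (k * cyc α β γ * k⁻¹))
    (h5 : ¬ Commute (Equiv.swap γ b5) (k * cyc α β γ * k⁻¹)) :
    k α = α ∨ k α = β ∨ k α = γ := by
  have hρ : ∀ x, x ≠ α → x ≠ β → x ≠ γ → cyc α β γ x = x :=
    fun x a b c => cyc_apply_of_ne a b c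
  exact pigeon k (vec9 α β γ b0 b1 b2 b3 b4 b5) hv
    (not_commute_witness hρ h0) (not_commute_witness hρ h1)
    (not_commute_witness hρ h2) (not_commute_witness hρ h3)
    (not_commute_witness hρ h4) (not_commute_witness hρ h5)

lemma inj9 (q : X) (w : ℕ → X) (hw : Function.Injective w) (hwq : ∀ n, w n ≠ q)
    (n1 n2 n3 n4 n5 n6 n7 n8 : ℕ)
    (hn : ([n1, n2, n3, n4, n5, n6, n7, n8] : List ℕ).Nodup) :
    Function.Injective (vec9 q (w n1) (w n2) (w n3) (w n4) (w n5) (w n6) (w n7) (w n8)) := by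
  simp only [List.nodup_cons, List.mem_cons, List.mem_singleton, List.not_mem_nil,
    or_false, List.nodup_nil, and_true, not_or] at hn
  intro i j hij
  fin_cases i <;> fin_cases j <;>
    simp_all [vec9, hw.eq_iff, hwq _, (hwq _).symm]

lemma cylinder_open [Infinite X] [DecidableEq X] (G : Subgroup (Equiv.Perm X))
    (hG : ∀ g : Equiv.Perm X, {x : X | g x ≠ x}.Finite → g ∈ G) (p q : X) :
    IsOpen[gpZariskiLe ↥G 4] {g : ↥G | (g : Equiv.Perm X) p = q} := by
  letI : TopologicalSpace ↥G := gpZariskiLe ↥G 4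
  -- swaps and 3-cycles are in G
  have hswap : ∀ a b : X, Equiv.swap a b ∈ G := by
    intro a b
    apply hG
    apply Set.Finite.subset ((Set.finite_singleton b).insert a)
    intro x hx
    simp only [Set.mem_setOf_eq] at hx
    by_contra hc
    simp only [Set.mem_insert_iff, Set.mem_singleton_iff, not_or] at hc
    exact hx (Equiv.swap_apply_of_ne_of_ne hc.1 hc.2)
  have hcyc : ∀ a b c : X, cyc a b c ∈ G := fun a b c => G.mul_mem (hswap _ _) (hswap _ _)
  -- fresh points
  have hqc : ({q}ᶜ : Set X).Infinite := (Set.finite_singleton q).infinite_compl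
  set w : ℕ → X := fun n => ((Set.Infinite.natEmbedding _ hqc) n : X) with hwdef
  have hw : Function.Injective w := fun a b h =>
    (Set.Infinite.natEmbedding _ hqc).injective (Subtype.ext h)
  have hwq : ∀ n, w n ≠ q := fun n => ((Set.Infinite.natEmbedding _ hqc) n).2
  -- the permutations
  let sG : X → X → ↥G := fun a b => ⟨Equiv.swap a b, hswap a b⟩
  let tG0 : ↥G := ⟨cyc q (w 0) (w 1), hcyc _ _ _⟩
  let tG1 : ↥G := ⟨cyc q (w 2) (w 3), hcyc _ _ _⟩
  -- the neighborhood of g₀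
  let N : ↥G → Set ↥G := fun g₀ =>
    Cset g₀ (sG q (w 4)) tG0 ∩ (Cset g₀ (sG q (w 5)) tG0 ∩
    (Cset g₀ (sG (w 0) (w 6)) tG0 ∩ (Cset g₀ (sG (w 0) (w 7)) tG0 ∩
    (Cset g₀ (sG (w 1) (w 8)) tG0 ∩ (Cset g₀ (sG (w 1) (w 9)) tG0 ∩
    (Cset g₀ (sG q (w 10)) tG1 ∩ (Cset g₀ (sG q (w 11)) tG1 ∩
    (Cset g₀ (sG (w 2) (w 12)) tG1 ∩ (Cset g₀ (sG (w 2) (w 13)) tG1 ∩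
    (Cset g₀ (sG (w 3) (w 14)) tG1 ∩ Cset g₀ (sG (w 3) (w 15)) tG1))))))))))
  have hCopen : ∀ (g₀ s t : ↥G), IsOpen (Cset g₀ s t) := by
    intro g₀ s t
    apply isOpen_generateFrom_of_mem
    exact ⟨s, [(true, g₀⁻¹ * t * g₀), (false, s⁻¹), (true, g₀⁻¹ * t⁻¹ * g₀), (false, 1)],
      by simp, rfl⟩
  have hNopen : ∀ g₀ : ↥G, IsOpen (N g₀) := fun g₀ =>
    ((hCopen _ _ _).inter ((hCopen _ _ _).inter ((hCopen _ _ _).inter ((hCopen _ _ _).inter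
      ((hCopen _ _ _).inter ((hCopen _ _ _).inter ((hCopen _ _ _).inter ((hCopen _ _ _).inter
      ((hCopen _ _ _).inter ((hCopen _ _ _).inter ((hCopen _ _ _).inter (hCopen _ _ _))))))))))))
  -- the set is the union of the neighborhoods
  have hSN : {g : ↥G | (g : Equiv.Perm X) p = q}
      = ⋃ g₀ : {h : ↥G // (h : Equiv.Perm X) p = q}, N (g₀ : ↥G) := by
    ext g
    simp only [Set.mem_setOf_eq, Set.mem_iUnion]
    constructor
    · -- identity membership: g ∈ N g
      intro hg
      refine ⟨⟨g, hg⟩, ?_⟩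
      have hq0 : q ≠ w 0 := fun h => hwq 0 h.symm
      have hq1 : q ≠ w 1 := fun h => hwq 1 h.symm
      have hq2 : q ≠ w 2 := fun h => hwq 2 h.symm
      have hq3 : q ≠ w 3 := fun h => hwq 3 h.symm
      have hwinj : ∀ {a b : ℕ}, a ≠ b → w a ≠ w b := fun h => hw.ne h
      refine ⟨?_, ?_, ?_, ?_, ?_, ?_, ?_, ?_, ?_, ?_, ?_, ?_⟩ <;> apply mem_Cset_self
      · exact nc_fst hq0 (hwinj (by omega)) (hwq 4) (hwinj (by omega)) (hwinj (by omega))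
      · exact nc_fst hq0 (hwinj (by omega)) (hwq 5) (hwinj (by omega)) (hwinj (by omega))
      · exact nc_snd hq0 hq1 (hwinj (by omega)) (hwq 6) (hwinj (by omega)) (hwinj (by omega))
      · exact nc_snd hq0 hq1 (hwinj (by omega)) (hwq 7) (hwinj (by omega)) (hwinj (by omega))
      · exact nc_thd hq0 hq1 (hwinj (by omega)) (hwq 8) (hwinj (by omega)) (hwinj (by omega))
      · exact nc_thd hq0 hq1 (hwinj (by omega)) (hwq 9) (hwinj (by omega)) (hwinj (by omega))
      · exact nc_fst hq2 (hwinj (by omega)) (hwq 10) (hwinj (by omega)) (hwinj (by omega))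
      · exact nc_fst hq2 (hwinj (by omega)) (hwq 11) (hwinj (by omega)) (hwinj (by omega))
      · exact nc_snd hq2 hq3 (hwinj (by omega)) (hwq 12) (hwinj (by omega)) (hwinj (by omega))
      · exact nc_snd hq2 hq3 (hwinj (by omega)) (hwq 13) (hwinj (by omega)) (hwinj (by omega))
      · exact nc_thd hq2 hq3 (hwinj (by omega)) (hwq 14) (hwinj (by omega)) (hwinj (by omega))
      · exact nc_thd hq2 hq3 (hwinj (by omega)) (hwq 15) (hwinj (by omega)) (hwinj (by omega))
    · rintro ⟨g₀, hg⟩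
      obtain ⟨c1, c2, c3, c4, c5, c6, c7, c8, c9, c10, c11, c12⟩ := hg
      set k : Equiv.Perm X := ((g * (g₀ : ↥G)⁻¹ : ↥G) : Equiv.Perm X) with hk
      have w1 := triple_core k q (w 0) (w 1) (w 4) (w 5) (w 6) (w 7) (w 8) (w 9)
        (inj9 q w hw hwq 0 1 4 5 6 7 8 9 (by norm_num))
        (Cset_witness c1) (Cset_witness c2) (Cset_witness c3)
        (Cset_witness c4) (Cset_witness c5) (Cset_witness c6)
      have w2 := triple_core k q (w 2) (w 3) (w 10) (w 11) (w 12) (w 13) (w 14) (w 15)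
        (inj9 q w hw hwq 2 3 10 11 12 13 14 15 (by norm_num))
        (Cset_witness c7) (Cset_witness c8) (Cset_witness c9)
        (Cset_witness c10) (Cset_witness c11) (Cset_witness c12)
      have hkq : k q = q := by
        rcases w1 with h | h | h
        · exact h
        · rcases w2 with h' | h' | h'
          · exact h'
          · exact absurd (h.symm.trans h') (hw.ne (by omega))
          · exact absurd (h.symm.trans h') (hw.ne (by omega))
        · rcases w2 with h' | h' | h'
          · exact h'
          · exact absurd (h.symm.trans h') (hw.ne (by omega))
          · exact absurd (h.symm.trans h') (hw.ne (by omega))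
      -- conclude
      have hp : ((g₀ : ↥G) : Equiv.Perm X)⁻¹ q = p := by
        exact Equiv.Perm.inv_eq_iff_eq.mpr g₀.2.symm
      calc (g : Equiv.Perm X) p = k q := by
            rw [hk]
            simp only [Subgroup.coe_mul, Subgroup.coe_inv, Equiv.Perm.mul_apply]
            exact congrArg _ hp.symm
          _ = q := hkq
  rw [hSN]
  exact isOpen_iUnion fun g₀ => hNopen _

lemma zariski4_le_ptwise [Infinite X] (G : Subgroup (Equiv.Perm X))
    (hG : ∀ g : Equiv.Perm X, {x : X | g x ≠ x}.Finite → g ∈ G) :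
    gpZariskiLe ↥G 4 ≤ subPtwise G := by
  classical
  rw [subPtwise_eq_iInf]
  refine le_iInf fun p => ?_
  letI : TopologicalSpace X := ⊥
  haveI : DiscreteTopology X := ⟨rfl⟩
  letI : TopologicalSpace ↥G := gpZariskiLe ↥G 4
  refine continuous_iff_le_induced.mp (continuous_discrete_rng.mpr fun q => ?_)
  have : (fun g : ↥G => (g : Equiv.Perm X) p) ⁻¹' {q} = {g : ↥G | (g : Equiv.Perm X) p = q} := by
    ext g; simp
  rw [this]
  exact cylinder_open G hG p q


end Aux

/-- If `X` is infinite and `Sym_ω(X) ⊆ G ⊆ Sym(X)`, then `Z±_4(G) = Z±(G)` and this topology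
is the topology of pointwise convergence on `G`; in particular `Z±(G)` is totally
disconnected. -/
theorem statement3 {X : Type*} [Infinite X] (G : Subgroup (Equiv.Perm X))
    (hG : ∀ g : Equiv.Perm X, {x : X | g x ≠ x}.Finite → g ∈ G) :
    gpZariskiLe ↥G 4 = gpZariski ↥G ∧ gpZariski ↥G = subPtwise G ∧
      @TotallyDisconnectedSpace ↥G (gpZariski ↥G) := by
  classical
  have h1 : gpZariski ↥G ≤ gpZariskiLe ↥G 4 := by
    apply generateFrom_anti
    rintro U ⟨a, l, hlen, hU⟩
    exact ⟨a, l, hU⟩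
  have h2 : subPtwise G ≤ gpZariski ↥G := ptwise_le_zariski
  have h3 : gpZariskiLe ↥G 4 ≤ subPtwise G := zariski4_le_ptwise G hG
  have e2 : gpZariski ↥G = subPtwise G := le_antisymm (h1.trans h3) h2
  have e1 : gpZariskiLe ↥G 4 = gpZariski ↥G := le_antisymm (h3.trans h2) h1
  refine ⟨e1, e2, ?_⟩
  rw [e2]
  letI : TopologicalSpace X := ⊥
  haveI : DiscreteTopology X := ⟨rfl⟩
  letI : TopologicalSpace ↥G := subPtwise G
  have hemb : Topology.IsEmbedding (fun (g : ↥G) (x : X) => (g : Equiv.Perm X) x) := by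
    refine ⟨⟨subPtwise_eq_induced G⟩, ?_⟩
    intro a b hab
    apply Subtype.ext
    exact Equiv.ext fun x => congrFun hab x
  exact hemb.isTotallyDisconnected_range.mp
    (isTotallyDisconnected_of_totallyDisconnectedSpace _)
end

section
/- Let X be a set and let G be a subgroup of Sym(X) with no algebraicity. Then the semigroup Zariski topology Z(G) is hyperconnected. -/
open Topology TopologicalSpace

/-- A subgroup `G ≤ Sym(X)` has no algebraicity if for every finite `S ⊆ X` and every
`q ∈ X \ S`, the set `{g q | g ∈ G, g fixes S pointwise}` is infinite. -/
def NoAlgebraicity {X : Type*} (G : Subgroup (Equiv.Perm X)) : Prop :=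
  ∀ S : Finset X, ∀ q : X, q ∉ S →
    {a : X | ∃ g ∈ G, (∀ x ∈ S, g x = x) ∧ g q = a}.Infinite

/-- A topology is hyperconnected if any two nonempty open sets have nonempty intersection. -/
def Hyperconnected {Y : Type*} (t : TopologicalSpace Y) : Prop :=
  ∀ U V : Set Y, IsOpen[t] U → IsOpen[t] V → U.Nonempty → V.Nonempty → (U ∩ V).Nonempty

namespace S4
variable {X : Type*} [DecidableEq X]
-- ===== traces =====


/-- trace evaluation, consumes letters innermost-first -/
def trE (h : Equiv.Perm X) : List (Equiv.Perm X) → X → X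
  | [], w => w
  | e :: L, w => trE h L (h (e w))

@[simp] lemma trE_nil (h : Equiv.Perm X) (w : X) : trE h [] w = w := rfl
@[simp] lemma trE_cons (h e : Equiv.Perm X) (L : List (Equiv.Perm X)) (w : X) :
    trE h (e :: L) w = trE h L (h (e w)) := rfl

lemma trE_append (h : Equiv.Perm X) (L M : List (Equiv.Perm X)) (w : X) :
    trE h (L ++ M) w = trE h M (trE h L w) := by
  induction L generalizing w with
  | nil => rfl
  | cons e L ih => simp [ih]

lemma prod_apply_eq_trE (x : Equiv.Perm X) (l : List (Equiv.Perm X)) (p : X) :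
    ((l.map (fun b => x * b)).prod : Equiv.Perm X) p = trE x l.reverse p := by
  induction l generalizing p with
  | nil => rfl
  | cons b t ih =>
      simp only [List.map_cons, List.prod_cons, List.reverse_cons, Equiv.Perm.mul_apply]
      rw [trE_append, ih]
      rfl

lemma sgEval_apply (G : Subgroup (Equiv.Perm X)) (x a : ↥G) (l : List ↥G) (p : X) :
    ((sgEval x a l : ↥G) : Equiv.Perm X) p
      = (a : Equiv.Perm X)
          (trE (x : Equiv.Perm X) ((l.map (fun b => (b : Equiv.Perm X))).reverse) p) := by
  have h1 : ((sgEval x a l : ↥G) : Equiv.Perm X)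
      = (a : Equiv.Perm X) *
        (((l.map (fun b => (b : Equiv.Perm X))).map
            (fun b => (x : Equiv.Perm X) * b)).prod) := by
    simp [sgEval, List.map_map, Function.comp_def]
  rw [h1, Equiv.Perm.mul_apply, prod_apply_eq_trE]


variable {X : Type*} [DecidableEq X]
lemma ext_lemma {G : Subgroup (Equiv.Perm X)} (hna : NoAlgebraicity G)
    (h₀ : Equiv.Perm X) (h₀G : h₀ ∈ G) (A B : Finset X) (q : X) (hq : q ∉ A) :
    ∃ h₁, h₁ ∈ G ∧ (∀ z ∈ A, h₁ z = h₀ z) ∧ h₁ q ∉ B := by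
  have hq' : h₀ q ∉ A.image h₀ := by
    simp only [Finset.mem_image, not_exists]
    rintro z ⟨hz, hzq⟩
    exact hq ((h₀.injective hzq) ▸ hz)
  obtain ⟨α, hα, hαB⟩ := (hna (A.image h₀) (h₀ q) hq').exists_notMem_finset B
  obtain ⟨g, hgG, hgfix, hgq⟩ := hα
  refine ⟨g * h₀, mul_mem hgG h₀G, fun z hz => ?_, ?_⟩
  · simpa [Equiv.Perm.mul_apply] using hgfix _ (Finset.mem_image_of_mem h₀ hz)
  · simpa [Equiv.Perm.mul_apply, hgq] using hαB
variable (𝔏 : Finset (Equiv.Perm X)) (P : Finset X)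
structure Good (h : Equiv.Perm X) (C I : Finset X) : Prop where
  r1 : ∀ z ∈ C ∪ I, ∀ z' ∈ C ∪ I, ∀ e ∈ 𝔏, ∀ f ∈ 𝔏, e (h z) = f (h z') → z = z'
  r3 : ∀ z ∈ C ∪ I, ∀ e ∈ 𝔏, e (h z) ∉ C ∧ e (h z) ∉ P
  r5 : ∀ t ∈ I, ∃ e ∈ 𝔏, ∃ z ∈ C ∪ I, t = e (h z)
lemma Good.transport {h h' : Equiv.Perm X} {C I : Finset X}
    (inv : Good 𝔏 P h C I) (hagree : ∀ z ∈ C ∪ I, h' z = h z) :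
    Good 𝔏 P h' C I := by
  constructor
  · intro z hz z' hz' e he f hf hef
    exact inv.r1 z hz z' hz' e he f hf (by rwa [hagree z hz, hagree z' hz'] at hef)
  · intro z hz e he
    rw [hagree z hz]; exact inv.r3 z hz e he
  · intro t ht
    obtain ⟨e, he, z, hz, h⟩ := inv.r5 t ht
    exact ⟨e, he, z, hz, by rw [hagree z hz]; exact h⟩
def avd (S : Finset X) : Finset X :=
  (𝔏 ×ˢ 𝔏).biUnion (fun ef => S.image fun s => ef.1⁻¹ (ef.2 s))
lemma avd_spec {S : Finset X} {ξ : X} (hξ : ξ ∉ avd 𝔏 S)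
    {e f : Equiv.Perm X} (he : e ∈ 𝔏) (hf : f ∈ 𝔏) {s : X} (hs : s ∈ S) :
    e ξ ≠ f s := by
  intro hcontra
  apply hξ
  refine Finset.mem_biUnion.2 ⟨(e, f), Finset.mem_product.2 ⟨he, hf⟩, ?_⟩
  exact Finset.mem_image.2 ⟨s, hs, by simp [← hcontra]⟩
lemma avd_spec₁ {S : Finset X} {ξ : X} (hξ : ξ ∉ avd 𝔏 S)
    (h1 : (1 : Equiv.Perm X) ∈ 𝔏) {s : X} (hs : s ∈ S) : ξ ≠ s := by
  have := avd_spec 𝔏 hξ h1 h1 hs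
  simpa using this

-- ============ chunk 3: commit lemmas ============
variable {G : Subgroup (Equiv.Perm X)}

/-- Common core: extend `h` at a fresh point `t`, with very generic value. -/
lemma commit_core (hna : NoAlgebraicity G) (h1 : (1 : Equiv.Perm X) ∈ 𝔏)
    {h : Equiv.Perm X} (hG : h ∈ G) {C I : Finset X}
    {t : X} (ht : t ∉ C ∪ I) (B E : Finset X) :
    ∃ h₁, h₁ ∈ G ∧ (∀ z ∈ C ∪ I, h₁ z = h z) ∧ h₁ t ∉ B ∧
      (∀ e ∈ 𝔏, ∀ f ∈ 𝔏, ∀ s ∈ (C ∪ I ∪ P ∪ {t}) ∪ (C ∪ I).image h, e (h₁ t) ≠ f s) ∧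
      (∀ e ∈ 𝔏, ∀ s ∈ E, e (h₁ t) ≠ s) := by
  obtain ⟨h₁, h₁G, hagr, hB⟩ := ext_lemma hna h hG (C ∪ I)
    (B ∪ avd 𝔏 (((C ∪ I ∪ P ∪ {t}) ∪ (C ∪ I).image h) ∪ E)) t ht
  have hnB : h₁ t ∉ B := fun hb => hB (Finset.mem_union_left _ hb)
  have hnavd : h₁ t ∉ avd 𝔏 (((C ∪ I ∪ P ∪ {t}) ∪ (C ∪ I).image h) ∪ E) :=
    fun hb => hB (Finset.mem_union_right _ hb)
  refine ⟨h₁, h₁G, hagr, hnB, ?_, ?_⟩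
  · intro e he f hf s hs
    exact avd_spec 𝔏 hnavd he hf (Finset.mem_union_left _ hs)
  · intro e he s hs
    have := avd_spec 𝔏 hnavd he h1 (Finset.mem_union_right _ hs)
    simpa using this

lemma commit_internal (hna : NoAlgebraicity G) (h1 : (1 : Equiv.Perm X) ∈ 𝔏)
    {h : Equiv.Perm X} (hG : h ∈ G) {C I : Finset X} (inv : Good 𝔏 P h C I)
    {t : X} (ht : t ∉ C ∪ I)
    {e₀ : Equiv.Perm X} (he₀ : e₀ ∈ 𝔏) {z₀ : X} (hz₀ : z₀ ∈ C ∪ I)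
    (hte : t = e₀ (h z₀)) (B E : Finset X) :
    ∃ h₁, h₁ ∈ G ∧ (∀ z ∈ C ∪ I, h₁ z = h z) ∧
      Good 𝔏 P h₁ C (I ∪ {t}) ∧ h₁ t ∉ B ∧ (∀ e ∈ 𝔏, ∀ s ∈ E, e (h₁ t) ≠ s) := by
  obtain ⟨h₁, h₁G, hagr, hB, hfar, hfarE⟩ := commit_core 𝔏 P hna h1 hG ht B E
  have hmem : ∀ z ∈ C ∪ I, z ∈ C ∪ (I ∪ {t}) := by
    intro z hz
    simp only [Finset.mem_union] at hz ⊢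
    tauto
  have hval : ∀ z ∈ C ∪ I, h₁ z = h z := hagr
  have htmem : t ∈ C ∪ (I ∪ {t}) := by simp
  have hcase : ∀ z ∈ C ∪ (I ∪ {t}), z = t ∨ z ∈ C ∪ I := by
    intro z hz
    simp only [Finset.mem_union, Finset.mem_singleton] at hz
    rcases hz with h' | h' | h'
    · exact Or.inr (Finset.mem_union_left _ h')
    · exact Or.inr (Finset.mem_union_right _ h')
    · exact Or.inl h'
  refine ⟨h₁, h₁G, hagr, ?_, hB, hfarE⟩
  constructor
  · -- r1
    intro z hz z' hz' e he f hf hef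
    rcases hcase z hz with rfl | hzold
    · rcases hcase z' hz' with rfl | hz'old
      · rfl
      · exact absurd hef (hfar e he f hf _ (by
          rw [hval z' hz'old] at *
          exact Finset.mem_union_right _ (Finset.mem_image_of_mem h hz'old)))
    · rcases hcase z' hz' with rfl | hz'old
      · exact absurd hef.symm (hfar f hf e he _ (by
          rw [hval z hzold] at *
          exact Finset.mem_union_right _ (Finset.mem_image_of_mem h hzold)))
      · rw [hval z hzold, hval z' hz'old] at hef
        exact inv.r1 z hzold z' hz'old e he f hf hef
  · -- r3
    intro z hz e he
    rcases hcase z hz with rfl | hzold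
    · constructor
      · intro hc
        exact hfar e he 1 h1 _ (by
          simp only [Finset.mem_union]
          exact Or.inl (Or.inl (Or.inl (Or.inl hc)))) (by simpa using hc.symm ▸ rfl)
      · intro hc
        exact hfar e he 1 h1 _ (by
          simp only [Finset.mem_union]
          exact Or.inl (Or.inl (Or.inr hc))) (by simp)
    · rw [hval z hzold]
      exact inv.r3 z hzold e he
  · -- r5
    intro s hs
    rcases Finset.mem_union.1 hs with hsI | hst
    · obtain ⟨e, he, z, hz, hpar⟩ := inv.r5 s hsI
      exact ⟨e, he, z, hmem z hz, by rw [hval z hz]; exact hpar⟩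
    · rw [Finset.mem_singleton] at hst
      subst hst
      exact ⟨e₀, he₀, z₀, hmem z₀ hz₀, by rw [hval z₀ hz₀]; exact hte⟩

lemma commit_candidate (hna : NoAlgebraicity G) (h1 : (1 : Equiv.Perm X) ∈ 𝔏)
    {h : Equiv.Perm X} (hG : h ∈ G) {C I : Finset X} (inv : Good 𝔏 P h C I)
    {x : X} (hx : x ∉ C ∪ I)
    (hxP : x ∈ P ∨ ∀ z ∈ C ∪ I, ∀ e ∈ 𝔏, e (h z) ≠ x) (B E : Finset X) :
    ∃ h₁, h₁ ∈ G ∧ (∀ z ∈ C ∪ I, h₁ z = h z) ∧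
      Good 𝔏 P h₁ (C ∪ {x}) I ∧ h₁ x ∉ B ∧ (∀ e ∈ 𝔏, ∀ s ∈ E, e (h₁ x) ≠ s) := by
  obtain ⟨h₁, h₁G, hagr, hB, hfar, hfarE⟩ := commit_core 𝔏 P hna h1 hG hx B E
  have hval : ∀ z ∈ C ∪ I, h₁ z = h z := hagr
  have himg : ∀ z ∈ C ∪ I, h₁ z ∈ (C ∪ I ∪ P ∪ {x}) ∪ (C ∪ I).image h := by
    intro z hz
    rw [hval z hz]
    exact Finset.mem_union_right _ (Finset.mem_image_of_mem _ hz)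
  have hcase : ∀ z ∈ (C ∪ {x}) ∪ I, z = x ∨ z ∈ C ∪ I := by
    intro z hz
    simp only [Finset.mem_union, Finset.mem_singleton] at hz
    rcases hz with (h' | h') | h'
    · exact Or.inr (Finset.mem_union_left _ h')
    · exact Or.inl h'
    · exact Or.inr (Finset.mem_union_right _ h')
  have hmem : ∀ z ∈ C ∪ I, z ∈ (C ∪ {x}) ∪ I := by
    intro z hz
    simp only [Finset.mem_union] at hz ⊢
    tauto
  refine ⟨h₁, h₁G, hagr, ?_, hB, hfarE⟩
  constructor
  · intro z hz z' hz' e he f hf hef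
    rcases hcase z hz with rfl | hzold
    · rcases hcase z' hz' with rfl | hz'old
      · rfl
      · exact absurd hef (hfar e he f hf _ (himg z' hz'old))
    · rcases hcase z' hz' with rfl | hz'old
      · exact absurd hef.symm (hfar f hf e he _ (himg z hzold))
      · rw [hval z hzold, hval z' hz'old] at hef
        exact inv.r1 z hzold z' hz'old e he f hf hef
  · intro z hz e he
    rcases hcase z hz with rfl | hzold
    · constructor
      · intro hc
        rcases Finset.mem_union.1 hc with hcC | hcx
        · exact hfar e he 1 h1 _ (by
            simp only [Finset.mem_union]
            exact Or.inl (Or.inl (Or.inl (Or.inl hcC)))) (by simp)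
        · rw [Finset.mem_singleton] at hcx
          refine hfar e he 1 h1 (e (h₁ z)) ?_ (by simp)
          simp only [Finset.mem_union, Finset.mem_singleton]
          exact Or.inl (Or.inr hcx)
      · intro hc
        exact hfar e he 1 h1 _ (by
          simp only [Finset.mem_union]
          exact Or.inl (Or.inl (Or.inr hc))) (by simp)
    · rw [hval z hzold]
      have h3 := inv.r3 z hzold e he
      refine ⟨?_, h3.2⟩
      intro hc
      rcases Finset.mem_union.1 hc with hcC | hcx
      · exact h3.1 hcC
      · rw [Finset.mem_singleton] at hcx
        rcases hxP with hxP' | hxP'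
        · exact h3.2 (hcx ▸ hxP')
        · exact hxP' z hzold e he hcx
  · intro s hs
    obtain ⟨e, he, z, hz, hpar⟩ := inv.r5 s hs
    exact ⟨e, he, z, hmem z hz, by rw [hval z hz]; exact hpar⟩

-- ============ Chn: value chains ============
def Chn (h : Equiv.Perm X) (A : Finset X) : X → List X → Prop
  | _, [] => True
  | prev, v :: vs => (∃ e ∈ 𝔏, e prev ∈ A ∧ h (e prev) = v) ∧ Chn h A v vs

lemma Chn.mono {h h' : Equiv.Perm X} {A A' : Finset X} (hsub : A ⊆ A')
    (hagree : ∀ z ∈ A, h' z = h z) :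
    ∀ {prev : X} {vs : List X}, Chn 𝔏 h A prev vs → Chn 𝔏 h' A' prev vs := by
  intro prev vs
  induction vs generalizing prev with
  | nil => intro; trivial
  | cons v vs ih =>
      rintro ⟨⟨e, he, heA, hev⟩, hchain⟩
      exact ⟨⟨e, he, hsub heA, by rw [hagree _ heA]; exact hev⟩, ih hchain⟩

/-- every member of a chain is an `h`-value of a committed point -/
lemma Chn.vals {h : Equiv.Perm X} {A : Finset X} :
    ∀ {prev : X} {vs : List X}, Chn 𝔏 h A prev vs → ∀ v ∈ vs, ∃ z ∈ A, v = h z := by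
  intro prev vs
  induction vs generalizing prev with
  | nil => intro _ v hv; cases hv
  | cons v vs ih =>
      rintro ⟨⟨e, he, heA, hev⟩, hchain⟩ u hu
      rcases List.mem_cons.1 hu with rfl | hu
      · exact ⟨e prev, heA, hev.symm⟩
      · exact ih hchain u hu

/-- every member of a chain is reached from a predecessor in the chain (or the anchor) -/
lemma Chn.pred {h : Equiv.Perm X} {A : Finset X} :
    ∀ {prev : X} {vs : List X}, Chn 𝔏 h A prev vs → ∀ v ∈ vs,
      ∃ u, (u = prev ∨ u ∈ vs) ∧ ∃ e ∈ 𝔏, e u ∈ A ∧ h (e u) = v := by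
  intro prev vs
  induction vs generalizing prev with
  | nil => intro _ v hv; cases hv
  | cons v vs ih =>
      rintro ⟨⟨e, he, heA, hev⟩, hchain⟩ u hu
      rcases List.mem_cons.1 hu with rfl | hu
      · exact ⟨prev, Or.inl rfl, e, he, heA, hev⟩
      · obtain ⟨u', hu', rest⟩ := ih hchain u hu
        rcases hu' with rfl | hu'
        · exact ⟨u', Or.inr (List.mem_cons_self), rest⟩
        · exact ⟨u', Or.inr (List.mem_cons_of_mem _ hu'), rest⟩


-- ===== the walk =====

lemma noVF {h : Equiv.Perm X} {C I : Finset X}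
    (inv : Good 𝔏 P h C I)
    {x₀ : X} (hx₀ : x₀ ∈ C) {VFt : List X} (hch : Chn 𝔏 h (C ∪ I) (h x₀) VFt)
    {zc : X} (hzc : zc ∈ C ∪ I) (hcur : h zc ∉ (h x₀) :: VFt)
    {f : Equiv.Perm X} (hf : f ∈ 𝔏) {t : X} (htA : t ∈ C ∪ I) (htf : t = f (h zc)) :
    h t ∉ (h x₀) :: VFt := by
  intro hmem
  rcases List.mem_cons.1 hmem with heq | hmem'
  · have hteq : t = x₀ := h.injective heq
    exact (inv.r3 zc hzc f hf).1 (by rw [← htf, hteq]; exact hx₀)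
  · obtain ⟨u, hu, e, he, heA, hev⟩ := Chn.pred 𝔏 hch (h t) hmem'
    have hu' : ∃ zu, zu ∈ C ∪ I ∧ u = h zu := by
      rcases hu with rfl | hu2
      · exact ⟨x₀, Finset.mem_union_left _ hx₀, rfl⟩
      · obtain ⟨zu, hzu, hval⟩ := Chn.vals 𝔏 hch u hu2
        exact ⟨zu, hzu, hval⟩
    obtain ⟨zu, hzu, rfl⟩ := hu'
    have het : e (h zu) = t := h.injective hev
    have hzczu : zc = zu := inv.r1 zc hzc zu hzu f hf e he (by rw [← htf, het])
    apply hcur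
    subst hzczu
    rcases hu with h' | h'
    · rw [h']; exact List.mem_cons_self
    · exact List.mem_cons_of_mem _ h'

lemma walk {G : Subgroup (Equiv.Perm X)} (hna : NoAlgebraicity G)
    (h1 : (1 : Equiv.Perm X) ∈ 𝔏) :
    ∀ (L : List (Equiv.Perm X)), (∀ e ∈ L, e ∈ 𝔏) →
    ∀ (h : Equiv.Perm X), h ∈ G → ∀ (C I : Finset X), Good 𝔏 P h C I →
    ∀ (z₀ : X), z₀ ∈ C ∪ I →
    ∀ (Apre : Finset X),
    ∀ (B : Finset X), (∀ z ∈ C ∪ I, z ∉ Apre → h z ∉ B) →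
    ∀ (x₀ : X), x₀ ∈ C →
    ∀ (VF : List X), (VF = [] ∨ ∃ VFt, VF = h x₀ :: VFt ∧ Chn 𝔏 h (C ∪ I) (h x₀) VFt) →
    h z₀ ∉ VF →
    (h z₀ ∉ B ∨ z₀ ∈ Apre) →
    ∃ h₁ I₁, h₁ ∈ G ∧ I ⊆ I₁ ∧ Good 𝔏 P h₁ C I₁ ∧ (∀ z ∈ C ∪ I, h₁ z = h z) ∧
      (∀ z ∈ C ∪ I₁, z ∉ Apre → h₁ z ∉ B) ∧
      ∃ z₁, z₁ ∈ C ∪ I₁ ∧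
        (∀ h₂ : Equiv.Perm X, (∀ z ∈ C ∪ I₁, h₂ z = h₁ z) → trE h₂ L (h₂ z₀) = h₂ z₁) ∧
        (h₁ z₁ ∉ B ∨ z₁ ∈ Apre) ∧
        h₁ z₁ ∉ VF ∧
        ∃ VFn, Chn 𝔏 h₁ (C ∪ I₁) (h₁ z₀) VFn ∧ h₁ z₁ ∈ h₁ z₀ :: VFn := by
  intro L
  induction L with
  | nil =>
      intro _ h hG C I inv z₀ hz₀ Apre B hnewB x₀ hx₀ VF hVF hcur hB
      exact ⟨h, I, hG, subset_rfl, inv, fun _ _ => rfl, hnewB, z₀, hz₀,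
        fun h₂ _ => rfl, hB, hcur, [], trivial, List.mem_cons_self⟩
  | cons e L ih =>
      intro hL h hG C I inv z₀ hz₀ Apre B hnewB x₀ hx₀ VF hVF hcur hB
      have he : e ∈ 𝔏 := hL e (List.mem_cons_self)
      have hL' : ∀ e' ∈ L, e' ∈ 𝔏 := fun e' h' => hL e' (List.mem_cons_of_mem _ h')
      by_cases htA : e (h z₀) ∈ C ∪ I
      · -- deterministic step
        have hcur' : h (e (h z₀)) ∉ VF := by
          rcases hVF with rfl | ⟨VFt, rfl, hch⟩
          · simp
          · exact noVF 𝔏 P inv hx₀ hch hz₀ hcur he htA rfl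
        have hB' : h (e (h z₀)) ∉ B ∨ e (h z₀) ∈ Apre := by
          by_cases h' : e (h z₀) ∈ Apre
          · exact Or.inr h'
          · exact Or.inl (hnewB _ htA h')
        obtain ⟨h₁, I₁, h₁G, hI, inv₁, hagr, hnewB₁, z₁, hz₁, hdet, hB₁, hcur₁,
          VFn, hchn, hlast⟩ :=
          ih hL' h hG C I inv (e (h z₀)) htA Apre B hnewB x₀ hx₀ VF hVF hcur' hB'
        have hsub : C ∪ I ⊆ C ∪ I₁ := Finset.union_subset_union_right hI
        refine ⟨h₁, I₁, h₁G, hI, inv₁, hagr, hnewB₁, z₁, hz₁, ?_, hB₁, hcur₁,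
          h₁ (e (h z₀)) :: VFn, ?_, ?_⟩
        · intro h₂ hagr₂
          have hz₀' : h₂ z₀ = h z₀ := by
            rw [hagr₂ z₀ (hsub hz₀), hagr z₀ hz₀]
          rw [trE_cons, hz₀']
          exact hdet h₂ hagr₂
        · refine ⟨⟨e, he, ?_, ?_⟩, hchn⟩
          · rw [hagr z₀ hz₀]; exact hsub htA
          · rw [hagr z₀ hz₀]
        · rw [hagr z₀ hz₀]
          exact List.mem_cons_of_mem _ hlast
      · -- fresh step
        obtain ⟨h₁, h₁G, hagr₁, inv₁, hfresh, -⟩ :=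
          commit_internal 𝔏 P hna h1 hG inv htA he hz₀ rfl (B ∪ VF.toFinset) ∅
        have hfreshB : h₁ (e (h z₀)) ∉ B := fun hb => hfresh (Finset.mem_union_left _ hb)
        have hfreshVF : h₁ (e (h z₀)) ∉ VF := fun hb =>
          hfresh (Finset.mem_union_right _ (List.mem_toFinset.2 hb))
        have hsub : C ∪ I ⊆ C ∪ (I ∪ {e (h z₀)}) := by
          intro z hz
          simp only [Finset.mem_union] at hz ⊢
          tauto
        have htA' : e (h z₀) ∈ C ∪ (I ∪ {e (h z₀)}) := by simp
        have hVF' : VF = [] ∨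
            ∃ VFt, VF = h₁ x₀ :: VFt ∧ Chn 𝔏 h₁ (C ∪ (I ∪ {e (h z₀)})) (h₁ x₀) VFt := by
          rcases hVF with rfl | ⟨VFt, hVFeq, hch⟩
          · exact Or.inl rfl
          · refine Or.inr ⟨VFt, ?_, ?_⟩
            · rw [hagr₁ x₀ (Finset.mem_union_left _ hx₀)]; exact hVFeq
            · rw [hagr₁ x₀ (Finset.mem_union_left _ hx₀)]
              exact Chn.mono 𝔏 hsub hagr₁ hch
        have hnewB' : ∀ z ∈ C ∪ (I ∪ {e (h z₀)}), z ∉ Apre → h₁ z ∉ B := by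
          intro z hz hzn
          rcases Finset.mem_union.1 hz with hzC | hzI
          · rw [hagr₁ z (Finset.mem_union_left _ hzC)]
            exact hnewB z (Finset.mem_union_left _ hzC) hzn
          · rcases Finset.mem_union.1 hzI with hzI | hzt
            · rw [hagr₁ z (Finset.mem_union_right _ hzI)]
              exact hnewB z (Finset.mem_union_right _ hzI) hzn
            · rw [Finset.mem_singleton] at hzt
              subst hzt
              exact hfreshB
        obtain ⟨h₂, I₂, h₂G, hI₂, inv₂, hagr₂, hnewB₂, z₁, hz₁, hdet, hB₂, hcur₂,
          VFn, hchn, hlast⟩ :=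
          ih hL' h₁ h₁G C (I ∪ {e (h z₀)}) inv₁ (e (h z₀)) htA' Apre B hnewB' x₀ hx₀
            VF hVF' hfreshVF (Or.inl hfreshB)
        have hsub₂ : C ∪ (I ∪ {e (h z₀)}) ⊆ C ∪ I₂ := Finset.union_subset_union_right hI₂
        have hagrtot : ∀ z ∈ C ∪ I, h₂ z = h z := by
          intro z hz
          rw [hagr₂ z (hsub hz), hagr₁ z hz]
        refine ⟨h₂, I₂, h₂G, ?_, inv₂, hagrtot, hnewB₂, z₁, hz₁, ?_, hB₂, hcur₂,
          h₂ (e (h z₀)) :: VFn, ?_, ?_⟩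
        · intro i hi
          have := hI₂ (Finset.mem_union_left _ hi)
          exact this
        · intro h₃ hagr₃
          have hz₀' : h₃ z₀ = h z₀ := by
            rw [hagr₃ z₀ (hsub₂ (hsub hz₀)), hagrtot z₀ hz₀]
          rw [trE_cons, hz₀']
          exact hdet h₃ hagr₃
        · refine ⟨⟨e, he, ?_, ?_⟩, hchn⟩
          · rw [hagrtot z₀ hz₀]
            exact hsub₂ htA'
          · rw [hagrtot z₀ hz₀]
        · rw [hagrtot z₀ hz₀]
          exact List.mem_cons_of_mem _ hlast

-- ===== pair processing =====

/-- Values-image helper: the finset of all `𝔏`-images of committed values. -/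
def vimg (h : Equiv.Perm X) (A : Finset X) : Finset X :=
  𝔏.biUnion (fun e => (A.image h).image e)

lemma vimg_spec {h : Equiv.Perm X} {A : Finset X} {e : Equiv.Perm X} (he : e ∈ 𝔏)
    {z : X} (hz : z ∈ A) : e (h z) ∈ vimg 𝔏 h A :=
  Finset.mem_biUnion.2 ⟨e, he, Finset.mem_image_of_mem _ (Finset.mem_image_of_mem _ hz)⟩

lemma pairStep_nilcons {G : Subgroup (Equiv.Perm X)} (hna : NoAlgebraicity G)
    (h1 : (1 : Equiv.Perm X) ∈ 𝔏) (hXinf : Infinite X)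
    (a b : Equiv.Perm X) (d : Equiv.Perm X) (M : List (Equiv.Perm X))
    (hab : (b⁻¹ * a) ∈ 𝔏) (hd : d ∈ 𝔏) (hM : ∀ e ∈ M, e ∈ 𝔏)
    (h : Equiv.Perm X) (hG : h ∈ G) (C I : Finset X) (inv : Good 𝔏 P h C I) :
    ∃ h₁ C₁ I₁, h₁ ∈ G ∧ C ⊆ C₁ ∧ I ⊆ I₁ ∧ Good 𝔏 P h₁ C₁ I₁ ∧
      (∀ z ∈ C ∪ I, h₁ z = h z) ∧
      ∃ p, ∀ h₂ : Equiv.Perm X, (∀ z ∈ C₁ ∪ I₁, h₂ z = h₁ z) →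
        a (trE h₂ [] p) ≠ b (trE h₂ (d :: M) p) := by
  classical
  -- choose a good point p
  obtain ⟨p, -, hp⟩ := (Set.infinite_univ (α := X)).exists_notMem_finset
    (((C ∪ I).image h).image (⇑(a⁻¹ * b)) ∪
      ((C ∪ I) ∪ vimg 𝔏 h (C ∪ I)).image (⇑d⁻¹))
  have hp1 : ∀ z ∈ C ∪ I, (b⁻¹ * a) p ≠ h z := by
    intro z hz hcon
    apply hp
    apply Finset.mem_union_left
    refine Finset.mem_image.2 ⟨h z, Finset.mem_image_of_mem _ hz, ?_⟩
    rw [← hcon]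
    simp [Equiv.Perm.mul_apply]
  have hp2 : d p ∉ C ∪ I := by
    intro hcon
    exact hp (Finset.mem_union_right _ (Finset.mem_image.2 ⟨d p,
      Finset.mem_union_left _ hcon, by simp⟩))
  have hp3 : ∀ z ∈ C ∪ I, ∀ e ∈ 𝔏, e (h z) ≠ d p := by
    intro z hz e he hcon
    exact hp (Finset.mem_union_right _ (Finset.mem_image.2 ⟨d p,
      Finset.mem_union_right _ (hcon ▸ vimg_spec 𝔏 he hz), by simp⟩))
  -- commit t₁ := d p as a candidate
  obtain ⟨h₁, h₁G, hagr₁, inv₁, hξB, -⟩ :=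
    commit_candidate 𝔏 P hna h1 hG inv hp2 (Or.inr hp3) {(b⁻¹ * a) p} ∅
  -- walk along M from t₁
  have hz₀mem : d p ∈ (C ∪ {d p}) ∪ I := by simp
  have hx₀ : d p ∈ C ∪ {d p} := by simp
  obtain ⟨h₂, I₂, h₂G, hI₂, inv₂, hagr₂, -, z₁, hz₁, hdet, hBout, -, -⟩ :=
    walk 𝔏 P hna h1 M hM h₁ h₁G (C ∪ {d p}) I inv₁ (d p) hz₀mem
      ((C ∪ {d p}) ∪ I) {(b⁻¹ * a) p} (fun z hz hzn => absurd hz hzn)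
      (d p) hx₀ [] (Or.inl rfl) (by simp) (Or.inr hz₀mem)
  have hsub1 : C ∪ I ⊆ (C ∪ {d p}) ∪ I := by
    intro z hz
    simp only [Finset.mem_union] at hz ⊢
    tauto
  refine ⟨h₂, C ∪ {d p}, I₂, h₂G, Finset.subset_union_left, hI₂, inv₂, ?_, p, ?_⟩
  · intro z hz
    rw [hagr₂ z (hsub1 hz), hagr₁ z hz]
  · intro h₃ hagr₃
    have hdp : h₃ (d p) = h₁ (d p) := by
      rw [hagr₃ (d p) (Finset.union_subset_union_right hI₂ hz₀mem)]
      exact hagr₂ (d p) hz₀mem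
    have htr : trE h₃ (d :: M) p = h₃ z₁ := by
      rw [trE_cons, hdp]
      have := hdet h₃ hagr₃
      rw [← this, hdp]
    rw [htr]
    simp only [trE_nil]
    intro hcon
    -- a p = b (h₃ z₁) ⇒ h₃ z₁ = (b⁻¹ a) p
    have hz₁' : h₃ z₁ = h₂ z₁ := hagr₃ z₁ hz₁
    have heq : h₂ z₁ = (b⁻¹ * a) p := by
      rw [← hz₁']
      have : b⁻¹ (a p) = b⁻¹ (b (h₃ z₁)) := by rw [hcon]
      simpa [Equiv.Perm.mul_apply] using this.symm
    rcases hBout with hB | hpre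
    · exact hB (by simp [heq])
    · -- z₁ was already committed before the walk
      rcases (by simpa only [Finset.mem_union, Finset.mem_singleton] using hpre :
          (z₁ ∈ C ∨ z₁ = d p) ∨ z₁ ∈ I) with hz₁old | hz₁old
      · rcases hz₁old with hz₁old | rfl
        · -- old committed point
          have : h₂ z₁ = h z₁ := by
            rw [hagr₂ z₁ (hsub1 (Finset.mem_union_left _ hz₁old)),
              hagr₁ z₁ (Finset.mem_union_left _ hz₁old)]
          exact hp1 z₁ (Finset.mem_union_left _ hz₁old) (by rw [← heq, this])
        · -- z₁ = d p, fresh value avoided the bad point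
          have : h₂ (d p) = h₁ (d p) := hagr₂ (d p) hz₀mem
          exact hξB (by rw [← this, heq]; exact Finset.mem_singleton_self _)
      · have : h₂ z₁ = h z₁ := by
          rw [hagr₂ z₁ (hsub1 (Finset.mem_union_right _ hz₁old)),
            hagr₁ z₁ (Finset.mem_union_right _ hz₁old)]
        exact hp1 z₁ (Finset.mem_union_right _ hz₁old) (by rw [← heq, this])

lemma stepCand {G : Subgroup (Equiv.Perm X)} (hna : NoAlgebraicity G)
    (h1 : (1 : Equiv.Perm X) ∈ 𝔏)
    {h : Equiv.Perm X} (hG : h ∈ G) {C I : Finset X} (inv : Good 𝔏 P h C I)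
    (x : X) (hx : x ∈ P ∨ (x ∉ C ∪ I ∧ ∀ z ∈ C ∪ I, ∀ e ∈ 𝔏, e (h z) ≠ x))
    (E : Finset X) :
    ∃ h₁ C₁, h₁ ∈ G ∧ C ⊆ C₁ ∧ C₁ ⊆ C ∪ {x} ∧ x ∈ C₁ ∧ Good 𝔏 P h₁ C₁ I ∧
      (∀ z ∈ C ∪ I, h₁ z = h z) ∧
      ((h₁ = h ∧ C₁ = C) ∨ (x ∉ C ∪ I ∧ ∀ e ∈ 𝔏, ∀ s ∈ E, e (h₁ x) ≠ s)) := by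
  by_cases hxA : x ∈ C ∪ I
  · have hxC : x ∈ C := by
      rcases Finset.mem_union.1 hxA with h' | h'
      · exact h'
      · exfalso
        obtain ⟨e, he, z, hz, hpar⟩ := inv.r5 x h'
        rcases hx with hxP | ⟨hnot, -⟩
        · exact (inv.r3 z hz e he).2 (hpar ▸ hxP)
        · exact hnot hxA
    exact ⟨h, C, hG, subset_rfl, Finset.subset_union_left, hxC, inv,
      fun _ _ => rfl, Or.inl ⟨rfl, rfl⟩⟩
  · have hxP : x ∈ P ∨ ∀ z ∈ C ∪ I, ∀ e ∈ 𝔏, e (h z) ≠ x := by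
      rcases hx with h' | ⟨-, h'⟩
      · exact Or.inl h'
      · exact Or.inr h'
    obtain ⟨h₁, h₁G, hagr, inv₁, -, hfarE⟩ :=
      commit_candidate 𝔏 P hna h1 hG inv hxA hxP ∅ E
    exact ⟨h₁, C ∪ {x}, h₁G, Finset.subset_union_left, subset_rfl, by simp, inv₁,
      hagr, Or.inr ⟨hxA, hfarE⟩⟩

lemma pairStep_conscons {G : Subgroup (Equiv.Perm X)} (hna : NoAlgebraicity G)
    (h1 : (1 : Equiv.Perm X) ∈ 𝔏)
    (a b c d : Equiv.Perm X) (Mf Mh : List (Equiv.Perm X))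
    (hab : (b⁻¹ * a) ∈ 𝔏)
    (hMf : ∀ e ∈ Mf, e ∈ 𝔏) (hMh : ∀ e ∈ Mh, e ∈ 𝔏)
    (hcd : c ≠ d)
    (hcand : {p : X | c p ≠ d p}.Finite → ∀ p : X, c p ≠ d p → c p ∈ P ∧ d p ∈ P)
    (h : Equiv.Perm X) (hG : h ∈ G) (C I : Finset X) (inv : Good 𝔏 P h C I) :
    ∃ h₁ C₁ I₁, h₁ ∈ G ∧ C ⊆ C₁ ∧ I ⊆ I₁ ∧ Good 𝔏 P h₁ C₁ I₁ ∧
      (∀ z ∈ C ∪ I, h₁ z = h z) ∧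
      ∃ p, ∀ h₂ : Equiv.Perm X, (∀ z ∈ C₁ ∪ I₁, h₂ z = h₁ z) →
        a (trE h₂ (c :: Mf) p) ≠ b (trE h₂ (d :: Mh) p) := by
  classical
  have hΛne : {p : X | c p ≠ d p}.Nonempty := by
    rcases Set.eq_empty_or_nonempty {p : X | c p ≠ d p} with hem | hne
    · exact absurd (Equiv.ext fun p => by
        by_contra hne'
        exact Set.eq_empty_iff_forall_notMem.1 hem p hne') hcd
    · exact hne
  obtain ⟨p, hp, hxcase⟩ : ∃ p, c p ≠ d p ∧
      ((c p ∈ P ∧ d p ∈ P) ∨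
        ((c p ∉ C ∪ I ∧ ∀ z ∈ C ∪ I, ∀ e ∈ 𝔏, e (h z) ≠ c p) ∧
         (d p ∉ C ∪ I ∧ ∀ z ∈ C ∪ I, ∀ e ∈ 𝔏, e (h z) ≠ d p))) := by
    by_cases hfin : {p : X | c p ≠ d p}.Finite
    · obtain ⟨p, hp⟩ := hΛne
      exact ⟨p, hp, Or.inl (hcand hfin p hp)⟩
    · have hinf : {p : X | c p ≠ d p}.Infinite := hfin
      obtain ⟨p, hp, hpnot⟩ := hinf.exists_notMem_finset
        (((C ∪ I) ∪ vimg 𝔏 h (C ∪ I)).image (⇑c⁻¹) ∪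
         ((C ∪ I) ∪ vimg 𝔏 h (C ∪ I)).image (⇑d⁻¹))
      have hcp : c p ∉ (C ∪ I) ∪ vimg 𝔏 h (C ∪ I) := by
        intro hcon
        exact hpnot (Finset.mem_union_left _
          (Finset.mem_image.2 ⟨c p, hcon, by simp⟩))
      have hdp : d p ∉ (C ∪ I) ∪ vimg 𝔏 h (C ∪ I) := by
        intro hcon
        exact hpnot (Finset.mem_union_right _
          (Finset.mem_image.2 ⟨d p, hcon, by simp⟩))
      refine ⟨p, hp, Or.inr ⟨⟨?_, ?_⟩, ?_, ?_⟩⟩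
      · exact fun hcon => hcp (Finset.mem_union_left _ hcon)
      · exact fun z hz e he hcon => hcp (Finset.mem_union_right _
          (hcon ▸ vimg_spec 𝔏 he hz))
      · exact fun hcon => hdp (Finset.mem_union_left _ hcon)
      · exact fun z hz e he hcon => hdp (Finset.mem_union_right _
          (hcon ▸ vimg_spec 𝔏 he hz))
  have hxF : c p ∈ P ∨ (c p ∉ C ∪ I ∧ ∀ z ∈ C ∪ I, ∀ e ∈ 𝔏, e (h z) ≠ c p) := by
    rcases hxcase with h' | h'
    · exact Or.inl h'.1
    · exact Or.inr h'.1
  have hxH0 : d p ∈ P ∨ (d p ∉ C ∪ I ∧ ∀ z ∈ C ∪ I, ∀ e ∈ 𝔏, e (h z) ≠ d p) := by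
    rcases hxcase with h' | h'
    · exact Or.inl h'.2
    · exact Or.inr h'.2
  -- commit x_F := c p
  obtain ⟨h₁, C₁, h₁G, hC₁, hC₁sub, hxFC, inv₁, hagr₁, hstep₁⟩ :=
    stepCand 𝔏 P hna h1 hG inv (c p) hxF {d p}
  -- transport x_H's condition
  have hmemC₁ : ∀ z ∈ C₁ ∪ I, z ∈ C ∪ I ∨ z = c p := by
    intro z hz
    rcases Finset.mem_union.1 hz with h' | h'
    · rcases Finset.mem_union.1 (hC₁sub h') with h'' | h''
      · exact Or.inl (Finset.mem_union_left _ h'')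
      · exact Or.inr (Finset.mem_singleton.1 h'')
    · exact Or.inl (Finset.mem_union_right _ h')
  have hxH : d p ∈ P ∨ (d p ∉ C₁ ∪ I ∧ ∀ z ∈ C₁ ∪ I, ∀ e ∈ 𝔏, e (h₁ z) ≠ d p) := by
    rcases hxH0 with h' | ⟨hnot, hval⟩
    · exact Or.inl h'
    · refine Or.inr ⟨?_, ?_⟩
      · intro hmem
        rcases hmemC₁ _ hmem with h'' | h''
        · exact hnot h''
        · exact hp h''.symm
      · intro z hz e he
        rcases hmemC₁ z hz with hzold | heq2
        · rw [hagr₁ z hzold]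
          exact hval z hzold e he
        · rcases hstep₁ with ⟨heqh, hCeq⟩ | ⟨hnotF, hfarE⟩
          · rw [heqh]
            have hz' : z ∈ C ∪ I := by
              rw [hCeq] at hz
              exact hz
            exact hval z hz' e he
          · rw [heq2]
            exact hfarE e he (d p) (Finset.mem_singleton_self _)
  -- commit x_H := d p
  obtain ⟨h₂, C₂, h₂G, hC₂, hC₂sub, hxHC, inv₂, hagr₂, -⟩ :=
    stepCand 𝔏 P hna h1 h₁G inv₁ (d p) hxH ∅
  have hxFC₂ : c p ∈ C₂ := hC₂ hxFC
  -- F walk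
  have hmemF : c p ∈ C₂ ∪ I := Finset.mem_union_left _ hxFC₂
  obtain ⟨h₃, I₃, h₃G, hI₃, inv₃, hagr₃, -, zφ, hzφ, detF, -, -, VFn, hchn, hlastF⟩ :=
    walk 𝔏 P hna h1 Mf hMf h₂ h₂G C₂ I inv₂ (c p) hmemF ∅ ∅
      (fun z hz hzn => by simp) (c p) hxFC₂ [] (Or.inl rfl) (by simp) (Or.inl (by simp))
  -- start of H-walk is not on F's chain
  have hmemH : d p ∈ C₂ ∪ I₃ := Finset.mem_union_left _ hxHC
  have hHnot : h₃ (d p) ∉ h₃ (c p) :: VFn := by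
    intro hmem
    rcases List.mem_cons.1 hmem with heq | hmem'
    · exact hp (h₃.injective heq).symm
    · obtain ⟨u, hu, e, he, heA, hev⟩ := Chn.pred 𝔏 hchn _ hmem'
      have hu' : ∃ zu, zu ∈ C₂ ∪ I₃ ∧ u = h₃ zu := by
        rcases hu with rfl | hu2
        · exact ⟨c p, Finset.union_subset_union_right hI₃ hmemF, rfl⟩
        · obtain ⟨zu, hzu, hval⟩ := Chn.vals 𝔏 hchn u hu2
          exact ⟨zu, hzu, hval⟩
      obtain ⟨zu, hzu, rfl⟩ := hu'
      have : e (h₃ zu) = d p := h₃.injective hev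
      exact (inv₃.r3 zu hzu e he).1 (this ▸ hxHC)
  -- H walk
  obtain ⟨h₄, I₄, h₄G, hI₄, inv₄, hagr₄, -, zψ, hzψ, detH, -, hψVF, -⟩ :=
    walk 𝔏 P hna h1 Mh hMh h₃ h₃G C₂ I₃ inv₃ (d p) hmemH ∅ ∅
      (fun z hz hzn => by simp) (c p) (hxFC₂)
      (h₃ (c p) :: VFn) (Or.inr ⟨VFn, rfl, hchn⟩) hHnot (Or.inl (by simp))
  -- endpoints are distinct
  have hzφ₄ : zφ ∈ C₂ ∪ I₄ := Finset.union_subset_union_right hI₄ hzφ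
  have hφval : h₄ zφ = h₃ zφ := hagr₄ zφ hzφ
  have hφmem : h₄ zφ ∈ h₃ (c p) :: VFn := hφval ▸ hlastF
  have hφψ : zφ ≠ zψ := by
    intro hcon
    exact hψVF (hcon ▸ hφmem)
  -- assemble
  have hsubCI : C ∪ I ⊆ C₂ ∪ I := Finset.union_subset_union_left (hC₁.trans hC₂)
  have hsubCI3 : C₂ ∪ I ⊆ C₂ ∪ I₃ := Finset.union_subset_union_right hI₃
  have hagrtot : ∀ z ∈ C ∪ I, h₄ z = h z := by
    intro z hz
    have hz2 : z ∈ C₂ ∪ I := hsubCI hz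
    rw [hagr₄ z (hsubCI3 hz2), hagr₃ z hz2]
    have hz1 : z ∈ C₁ ∪ I := Finset.union_subset_union_left hC₁ hz
    rw [hagr₂ z hz1, hagr₁ z hz]
  refine ⟨h₄, C₂, I₄, h₄G, hC₁.trans hC₂, hI₃.trans hI₄, inv₄, hagrtot, p, ?_⟩
  intro h₅ hagr₅
  have hagr₅₃ : ∀ z ∈ C₂ ∪ I₃, h₅ z = h₃ z := by
    intro z hz
    rw [hagr₅ z (Finset.union_subset_union_right hI₄ hz), hagr₄ z hz]
  have hF : trE h₅ (c :: Mf) p = h₅ zφ := by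
    rw [trE_cons]
    exact detF h₅ hagr₅₃
  have hH : trE h₅ (d :: Mh) p = h₅ zψ := by
    rw [trE_cons]
    exact detH h₅ hagr₅
  rw [hF, hH, hagr₅ zφ hzφ₄, hagr₅ zψ hzψ]
  intro hcon
  apply hφψ
  refine inv₄.r1 zφ hzφ₄ zψ hzψ (b⁻¹ * a) hab 1 h1 ?_
  have : b⁻¹ (a (h₄ zφ)) = b⁻¹ (b (h₄ zψ)) := by rw [hcon]
  simpa [Equiv.Perm.mul_apply] using this

/-- Conditions tying a (normalized) pair to the global data `𝔏`, `P`. -/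
def pairOK (a b : Equiv.Perm X) (Lf Lh : List (Equiv.Perm X)) : Prop :=
  (b⁻¹ * a) ∈ 𝔏 ∧ (a⁻¹ * b) ∈ 𝔏 ∧ (∀ e ∈ Lf, e ∈ 𝔏) ∧ (∀ e ∈ Lh, e ∈ 𝔏) ∧
  (∀ c d Mf Mh, Lf = c :: Mf → Lh = d :: Mh →
     {p : X | c p ≠ d p}.Finite → ∀ p : X, c p ≠ d p → c p ∈ P ∧ d p ∈ P)

lemma pairStep {G : Subgroup (Equiv.Perm X)} (hna : NoAlgebraicity G)
    (h1 : (1 : Equiv.Perm X) ∈ 𝔏) (hXinf : Infinite X)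
    (a b : Equiv.Perm X) (Lf Lh : List (Equiv.Perm X))
    (hOK : pairOK 𝔏 P a b Lf Lh)
    (hNS : ∀ x, Lf.head? = some x → Lh.head? = some x → False)
    (hwit : ∃ (v : Equiv.Perm X) (p : X), a (trE v Lf p) ≠ b (trE v Lh p))
    (h : Equiv.Perm X) (hG : h ∈ G) (C I : Finset X) (inv : Good 𝔏 P h C I) :
    ∃ h₁ C₁ I₁, h₁ ∈ G ∧ C ⊆ C₁ ∧ I ⊆ I₁ ∧ Good 𝔏 P h₁ C₁ I₁ ∧
      (∀ z ∈ C ∪ I, h₁ z = h z) ∧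
      ∃ p, ∀ h₂ : Equiv.Perm X, (∀ z ∈ C₁ ∪ I₁, h₂ z = h₁ z) →
        a (trE h₂ Lf p) ≠ b (trE h₂ Lh p) := by
  obtain ⟨hab, hba, hLf, hLh, hcand⟩ := hOK
  match hLfs : Lf, hLhs : Lh with
  | [], [] =>
      obtain ⟨v, p, hvp⟩ := hwit
      exact ⟨h, C, I, hG, subset_rfl, subset_rfl, inv, fun _ _ => rfl, p,
        fun h₂ _ => by simpa using hvp⟩
  | [], d :: Mh =>
      obtain ⟨h₁, C₁, I₁, h₁G, hC₁, hI₁, inv₁, hagr, p, hcert⟩ :=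
        pairStep_nilcons 𝔏 P hna h1 hXinf a b d Mh hab
          (hLh d (List.mem_cons_self)) (fun e he => hLh e (List.mem_cons_of_mem _ he))
          h hG C I inv
      exact ⟨h₁, C₁, I₁, h₁G, hC₁, hI₁, inv₁, hagr, p, hcert⟩
  | c :: Mf, [] =>
      obtain ⟨h₁, C₁, I₁, h₁G, hC₁, hI₁, inv₁, hagr, p, hcert⟩ :=
        pairStep_nilcons 𝔏 P hna h1 hXinf b a c Mf hba
          (hLf c (List.mem_cons_self)) (fun e he => hLf e (List.mem_cons_of_mem _ he))
          h hG C I inv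
      exact ⟨h₁, C₁, I₁, h₁G, hC₁, hI₁, inv₁, hagr, p,
        fun h₂ hagr₂ => (hcert h₂ hagr₂).symm⟩
  | c :: Mf, d :: Mh =>
      have hcd : c ≠ d := by
        intro hcon
        exact hNS c rfl (by rw [hcon]; rfl)
      obtain ⟨h₁, C₁, I₁, h₁G, hC₁, hI₁, inv₁, hagr, p, hcert⟩ :=
        pairStep_conscons 𝔏 P hna h1 a b c d Mf Mh hab
          (fun e he => hLf e (List.mem_cons_of_mem _ he))
          (fun e he => hLh e (List.mem_cons_of_mem _ he))
          hcd (fun hfin q hq => hcand c d Mf Mh rfl rfl hfin q hq)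
          h hG C I inv
      exact ⟨h₁, C₁, I₁, h₁G, hC₁, hI₁, inv₁, hagr, p, hcert⟩

/-- Process a list of normalized pairs. -/
lemma mainList {G : Subgroup (Equiv.Perm X)} (hna : NoAlgebraicity G)
    (h1 : (1 : Equiv.Perm X) ∈ 𝔏) (hXinf : Infinite X) :
    ∀ (PS : List (Equiv.Perm X × Equiv.Perm X × List (Equiv.Perm X) × List (Equiv.Perm X))),
    (∀ q ∈ PS, pairOK 𝔏 P q.1 q.2.1 q.2.2.1 q.2.2.2 ∧
       (∀ x, q.2.2.1.head? = some x → q.2.2.2.head? = some x → False) ∧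
       ∃ v p, q.1 (trE v q.2.2.1 p) ≠ q.2.1 (trE v q.2.2.2 p)) →
    ∀ (h : Equiv.Perm X), h ∈ G → ∀ (C I : Finset X), Good 𝔏 P h C I →
    ∃ h₁ C₁ I₁, h₁ ∈ G ∧ C ⊆ C₁ ∧ I ⊆ I₁ ∧ Good 𝔏 P h₁ C₁ I₁ ∧
      (∀ z ∈ C ∪ I, h₁ z = h z) ∧
      ∀ q ∈ PS, ∃ p, q.1 (trE h₁ q.2.2.1 p) ≠ q.2.1 (trE h₁ q.2.2.2 p) := by
  intro PS
  induction PS with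
  | nil =>
      intro _ h hG C I inv
      exact ⟨h, C, I, hG, subset_rfl, subset_rfl, inv, fun _ _ => rfl, fun q hq => absurd hq
        List.not_mem_nil⟩
  | cons q PS ih =>
      intro hPS h hG C I inv
      obtain ⟨hOK, hNS, hwit⟩ := hPS q (List.mem_cons_self)
      obtain ⟨h₁, C₁, I₁, h₁G, hC₁, hI₁, inv₁, hagr₁, p, hcert⟩ :=
        pairStep 𝔏 P hna h1 hXinf q.1 q.2.1 q.2.2.1 q.2.2.2 hOK hNS hwit h hG C I inv
      obtain ⟨h₂, C₂, I₂, h₂G, hC₂, hI₂, inv₂, hagr₂, hall⟩ :=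
        ih (fun q' hq' => hPS q' (List.mem_cons_of_mem _ hq')) h₁ h₁G C₁ I₁ inv₁
      refine ⟨h₂, C₂, I₂, h₂G, hC₁.trans hC₂, hI₁.trans hI₂, inv₂, ?_, ?_⟩
      · intro z hz
        have hz1 : z ∈ C₁ ∪ I₁ :=
          Finset.union_subset_union hC₁ hI₁ hz
        rw [hagr₂ z hz1, hagr₁ z hz]
      · intro q' hq'
        rcases List.mem_cons.1 hq' with rfl | hq'
        · exact ⟨p, hcert h₂ hagr₂⟩
        · exact hall q' hq'

-- ===== normalization =====
section nrm
variable [DecidableEq (Equiv.Perm X)]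

def nrm : List (Equiv.Perm X) → List (Equiv.Perm X) → List (Equiv.Perm X) × List (Equiv.Perm X)
  | c :: L, d :: M => if c = d then nrm L M else (c :: L, d :: M)
  | L, M => (L, M)

lemma nrm_nil_left (M : List (Equiv.Perm X)) : nrm ([] : List (Equiv.Perm X)) M = ([], M) := by
  cases M <;> rfl

lemma nrm_nil_right (L : List (Equiv.Perm X)) : nrm L ([] : List (Equiv.Perm X)) = (L, []) := by
  cases L <;> rfl

lemma nrm_cons (c d : Equiv.Perm X) (L M : List (Equiv.Perm X)) :
    nrm (c :: L) (d :: M) = if c = d then nrm L M else (c :: L, d :: M) := rfl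

lemma nrm_eval (a b h : Equiv.Perm X) :
    ∀ (L M : List (Equiv.Perm X)),
      ((∀ p, a (trE h L p) = b (trE h M p)) ↔
        (∀ p, a (trE h (nrm L M).1 p) = b (trE h (nrm L M).2 p))) := by
  intro L
  induction L with
  | nil => intro M; rw [nrm_nil_left]
  | cons c L ih =>
      intro M
      cases M with
      | nil => rw [nrm_nil_right]
      | cons d M =>
          rw [nrm_cons]
          by_cases hcd : c = d
          · rw [if_pos hcd]
            subst hcd
            constructor
            · intro hyp
              rw [← ih M]
              intro q
              have := hyp (c⁻¹ (h⁻¹ q))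
              simpa using this
            · intro hyp p
              have := (ih M).2 hyp
              simpa using this (h (c p))
          · rw [if_neg hcd]

lemma nrm_NS (L M : List (Equiv.Perm X)) :
    ∀ x, (nrm L M).1.head? = some x → (nrm L M).2.head? = some x → False := by
  induction L generalizing M with
  | nil =>
      rw [nrm_nil_left]
      intro x hx hy
      simp at hx
  | cons c L ih =>
      cases M with
      | nil =>
          rw [nrm_nil_right]
          intro x hx hy
          simp at hy
      | cons d M =>
          rw [nrm_cons]
          by_cases hcd : c = d
          · rw [if_pos hcd]
            exact ih M
          · rw [if_neg hcd]
            intro x hx hy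
            simp only [List.head?_cons, Option.some.injEq] at hx hy
            exact hcd (hx.trans hy.symm)

end nrm

-- ===== glue to sgEval and the topology =====
section glue
variable [DecidableEq (Equiv.Perm X)]
open scoped Classical

/-- normalized pair extracted from raw data -/
def npair {G : Subgroup (Equiv.Perm X)} (q : ↥G × List ↥G × ↥G × List ↥G) :
    Equiv.Perm X × Equiv.Perm X × List (Equiv.Perm X) × List (Equiv.Perm X) :=
  ((q.1 : Equiv.Perm X), (q.2.2.1 : Equiv.Perm X),
   nrm ((q.2.1.map (fun b => (b : Equiv.Perm X))).reverse)
       ((q.2.2.2.map (fun b => (b : Equiv.Perm X))).reverse))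

def pairL (q : Equiv.Perm X × Equiv.Perm X × List (Equiv.Perm X) × List (Equiv.Perm X)) :
    Finset (Equiv.Perm X) :=
  {q.2.1⁻¹ * q.1, q.1⁻¹ * q.2.1, 1} ∪ q.2.2.1.toFinset ∪ q.2.2.2.toFinset

noncomputable def pairP
    (q : Equiv.Perm X × Equiv.Perm X × List (Equiv.Perm X) × List (Equiv.Perm X)) :
    Finset X :=
  match q.2.2.1, q.2.2.2 with
  | c :: _, d :: _ =>
      if hfin : {p : X | c p ≠ d p}.Finite
      then hfin.toFinset.image c ∪ hfin.toFinset.image d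
      else ∅
  | _, _ => ∅

def bigL : List (Equiv.Perm X × Equiv.Perm X × List (Equiv.Perm X) × List (Equiv.Perm X)) →
    Finset (Equiv.Perm X)
  | [] => {1}
  | q :: t => pairL q ∪ bigL t

noncomputable def bigP :
    List (Equiv.Perm X × Equiv.Perm X × List (Equiv.Perm X) × List (Equiv.Perm X)) → Finset X
  | [] => ∅
  | q :: t => pairP q ∪ bigP t

lemma one_mem_bigL (PS : List (Equiv.Perm X × Equiv.Perm X ×
    List (Equiv.Perm X) × List (Equiv.Perm X))) : (1 : Equiv.Perm X) ∈ bigL PS := by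
  induction PS with
  | nil => simp [bigL]
  | cons q t ih => exact Finset.mem_union_right _ ih

lemma pairL_subset {q} {PS : List (Equiv.Perm X × Equiv.Perm X ×
    List (Equiv.Perm X) × List (Equiv.Perm X))} (hq : q ∈ PS) : pairL q ⊆ bigL PS := by
  induction PS with
  | nil => cases hq
  | cons q' t ih =>
      rcases List.mem_cons.1 hq with rfl | hq'
      · exact Finset.subset_union_left
      · exact (ih hq').trans Finset.subset_union_right

lemma pairP_subset {q} {PS : List (Equiv.Perm X × Equiv.Perm X ×
    List (Equiv.Perm X) × List (Equiv.Perm X))} (hq : q ∈ PS) : pairP q ⊆ bigP PS := by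
  induction PS with
  | nil => cases hq
  | cons q' t ih =>
      rcases List.mem_cons.1 hq with rfl | hq'
      · exact Finset.subset_union_left
      · exact (ih hq').trans Finset.subset_union_right

lemma pairOK_of_mem {q} {PS : List (Equiv.Perm X × Equiv.Perm X ×
    List (Equiv.Perm X) × List (Equiv.Perm X))} (hq : q ∈ PS) :
    pairOK (bigL PS) (bigP PS) q.1 q.2.1 q.2.2.1 q.2.2.2 := by
  refine ⟨?_, ?_, ?_, ?_, ?_⟩
  · exact pairL_subset hq (by simp [pairL])
  · exact pairL_subset hq (by simp [pairL])
  · intro e he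
    exact pairL_subset hq (by simp [pairL, List.mem_toFinset.2 he])
  · intro e he
    exact pairL_subset hq (by simp [pairL, List.mem_toFinset.2 he])
  · intro c d Mf Mh hLf hLh hfin p hp
    have hmem : ∀ y, y ∈ pairP q → y ∈ bigP PS := fun y hy => pairP_subset hq hy
    have hpair : pairP q = hfin.toFinset.image c ∪ hfin.toFinset.image d := by
      show pairP (q.1, q.2.1, q.2.2.1, q.2.2.2) = _
      rw [hLf, hLh]
      show (if hfin' : {p : X | c p ≠ d p}.Finite
        then hfin'.toFinset.image c ∪ hfin'.toFinset.image d else ∅) = _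
      rw [dif_pos hfin]
    constructor
    · apply hmem
      rw [hpair]
      exact Finset.mem_union_left _
        (Finset.mem_image_of_mem _ (hfin.mem_toFinset.2 hp))
    · apply hmem
      rw [hpair]
      exact Finset.mem_union_right _
        (Finset.mem_image_of_mem _ (hfin.mem_toFinset.2 hp))

lemma wit_iff {G : Subgroup (Equiv.Perm X)} (q : ↥G × List ↥G × ↥G × List ↥G) (w : ↥G) :
    sgEval w q.1 q.2.1 ≠ sgEval w q.2.2.1 q.2.2.2 ↔
    ∃ p, (npair q).1 (trE (w : Equiv.Perm X) (npair q).2.2.1 p) ≠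
         (npair q).2.1 (trE (w : Equiv.Perm X) (npair q).2.2.2 p) := by
  obtain ⟨a, l, b, m⟩ := q
  have key : (sgEval w a l = sgEval w b m) ↔
      (∀ p, (a : Equiv.Perm X)
          (trE (w : Equiv.Perm X) ((l.map (fun b' => (b' : Equiv.Perm X))).reverse) p)
        = (b : Equiv.Perm X)
          (trE (w : Equiv.Perm X) ((m.map (fun b' => (b' : Equiv.Perm X))).reverse) p)) := by
    rw [← Subtype.coe_inj, Equiv.ext_iff]
    constructor
    · intro hyp p
      rw [← sgEval_apply, ← sgEval_apply]
      exact hyp p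
    · intro hyp p
      rw [sgEval_apply, sgEval_apply]
      exact hyp p
  rw [Ne, key, nrm_eval]
  rw [not_forall]
  constructor
  · rintro ⟨p, hp⟩; exact ⟨p, hp⟩
  · rintro ⟨p, hp⟩; exact ⟨p, hp⟩

lemma Good.empty (h : Equiv.Perm X) : Good 𝔏 P h ∅ ∅ := by
  constructor
  · intro z hz; simp at hz
  · intro z hz; simp at hz
  · intro t ht; simp at ht

end glue

-- ===== topology extraction and the final theorem =====

lemma open_extract {G : Subgroup (Equiv.Perm X)} :
    ∀ (U : Set ↥G), TopologicalSpace.GenerateOpen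
      {U | ∃ (a : ↥G) (l : List ↥G) (b : ↥G) (m : List ↥G),
        U = {x | sgEval x a l ≠ sgEval x b m}} U →
    ∀ u ∈ U, ∃ QS : List (↥G × List ↥G × ↥G × List ↥G),
      (∀ q ∈ QS, sgEval u q.1 q.2.1 ≠ sgEval u q.2.2.1 q.2.2.2) ∧
      (∀ w : ↥G, (∀ q ∈ QS, sgEval w q.1 q.2.1 ≠ sgEval w q.2.2.1 q.2.2.2) → w ∈ U) := by
  intro U hU
  induction hU with
  | basic V hV =>
      obtain ⟨a, l, b, m, rfl⟩ := hV
      intro u hu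
      refine ⟨[(a, l, b, m)], ?_, ?_⟩
      · intro q hq
        rw [List.mem_singleton] at hq
        subst hq
        exact hu
      · intro w hw
        exact hw (a, l, b, m) (List.mem_singleton_self _)
  | univ =>
      intro u _
      exact ⟨[], by simp, fun w _ => trivial⟩
  | inter U V hUo hVo ihU ihV =>
      intro u hu
      obtain ⟨QS₁, h1, h2⟩ := ihU u hu.1
      obtain ⟨QS₂, h3, h4⟩ := ihV u hu.2
      refine ⟨QS₁ ++ QS₂, ?_, ?_⟩
      · intro q hq
        rcases List.mem_append.1 hq with h' | h'
        · exact h1 q h'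
        · exact h3 q h'
      · intro w hw
        exact ⟨h2 w (fun q hq => hw q (List.mem_append_left _ hq)),
               h4 w (fun q hq => hw q (List.mem_append_right _ hq))⟩
  | sUnion S hS ih =>
      intro u hu
      obtain ⟨s, hs, hus⟩ := hu
      obtain ⟨QS, ha, hb⟩ := ih s hs u hus
      exact ⟨QS, ha, fun w hw => Set.mem_sUnion.2 ⟨s, hs, hb w hw⟩⟩

end S4

/-- If `G` is a subgroup of `Sym(X)` with no algebraicity, then the semigroup Zariski
topology `Z(G)` is hyperconnected. -/
theorem statement4 {X : Type*} (G : Subgroup (Equiv.Perm X)) (h : NoAlgebraicity G) :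
    Hyperconnected (sgZariski ↥G) := by
  classical
  intro U V hU hV hUne hVne
  obtain ⟨u, hu⟩ := hUne
  obtain ⟨v, hv⟩ := hVne
  rcases isEmpty_or_nonempty X with hX | hX
  · haveI : Subsingleton (Equiv.Perm X) := by
      constructor
      intro f g
      ext x
      exact (IsEmpty.false x).elim
    have huv : u = v := Subtype.ext (Subsingleton.elim _ _)
    exact ⟨u, hu, huv ▸ hv⟩
  · have hXinf : Infinite X := by
      obtain ⟨q⟩ := hX
      have h2 := h ∅ q (by simp)
      exact Set.infinite_univ_iff.mp (h2.mono (Set.subset_univ _))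
    obtain ⟨QU, hQU, hQUc⟩ := S4.open_extract U hU u hu
    obtain ⟨QV, hQV, hQVc⟩ := S4.open_extract V hV v hv
    set QS := QU ++ QV with hQS
    set PS := QS.map S4.npair with hPS
    have hmemPS : ∀ q ∈ QS, S4.npair q ∈ PS := fun q hq => List.mem_map_of_mem hq
    have hPShyp : ∀ q' ∈ PS, S4.pairOK (S4.bigL PS) (S4.bigP PS)
          q'.1 q'.2.1 q'.2.2.1 q'.2.2.2 ∧
        (∀ x, q'.2.2.1.head? = some x → q'.2.2.2.head? = some x → False) ∧
        ∃ w p, q'.1 (S4.trE w q'.2.2.1 p) ≠ q'.2.1 (S4.trE w q'.2.2.2 p) := by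
      intro q' hq'
      refine ⟨S4.pairOK_of_mem hq', ?_, ?_⟩
      · obtain ⟨q, hq, rfl⟩ := List.mem_map.1 hq'
        exact S4.nrm_NS _ _
      · obtain ⟨q, hq, rfl⟩ := List.mem_map.1 hq'
        rcases List.mem_append.1 hq with hqu | hqv
        · obtain ⟨p, hp⟩ := (S4.wit_iff q u).1 (hQU q hqu)
          exact ⟨(u : Equiv.Perm X), p, hp⟩
        · obtain ⟨p, hp⟩ := (S4.wit_iff q v).1 (hQV q hqv)
          exact ⟨(v : Equiv.Perm X), p, hp⟩
    obtain ⟨h₁, C₁, I₁, h₁G, -, -, -, -, hall⟩ :=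
      S4.mainList (S4.bigL PS) (S4.bigP PS) h (S4.one_mem_bigL PS) hXinf PS hPShyp
        1 (one_mem G) ∅ ∅ (S4.Good.empty _ _ _)
    refine ⟨⟨h₁, h₁G⟩, ?_, ?_⟩
    · apply hQUc
      intro q hq
      apply (S4.wit_iff q ⟨h₁, h₁G⟩).2
      obtain ⟨p, hp⟩ := hall (S4.npair q) (hmemPS q (List.mem_append_left _ hq))
      exact ⟨p, hp⟩
    · apply hQVc
      intro q hq
      apply (S4.wit_iff q ⟨h₁, h₁G⟩).2
      obtain ⟨p, hp⟩ := hall (S4.npair q) (hmemPS q (List.mem_append_right _ hq))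
      exact ⟨p, hp⟩
end

section
/- Let X be an infinite set and let G be a subgroup of Sym(X) with Sym_ω(X) ⊆ G. Then the following dichotomy holds: (i) if n ≥ 4, then Z±_n(G) is the topology of pointwise convergence on G, and in particular is totally disconnected; (ii) if n ≤ 3, then Z±_n(G) is hyperconnected. -/
open Topology TopologicalSpace

set_option linter.unusedSectionVars false

section
variable {G : Type*} [Group G]

lemma gpEval_nil (x a : G) : gpEval x a [] = a := by simp [gpEval]

lemma gpEval_cons (x a : G) (e : Bool) (b : G) (t : List (Bool × G)) :
    gpEval x a ((e,b)::t) = a * ((if e then x else x⁻¹) * gpEval x b t) := by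
  simp [gpEval, mul_assoc]

lemma conj_eq_one (z w : G) : z⁻¹ * w * z = 1 ↔ w = 1 := by
  constructor
  · intro h
    have := congrArg (fun t => z * t * z⁻¹) h
    simpa [mul_assoc] using this
  · intro h; simp [h]

lemma inv_one_iff (w : G) : w⁻¹ = 1 ↔ w = 1 := inv_eq_one

-- rotation, length 3
lemma rot3 (x a b₁ b₂ b₃ : G) (e₁ e₂ e₃ : Bool) :
    gpEval x a [(e₁,b₁),(e₂,b₂),(e₃,b₃)] = 1 ↔
      gpEval x b₁ [(e₂,b₂),(e₃,b₃*a),(e₁,1)] = 1 := by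
  have h : gpEval x b₁ [(e₂,b₂),(e₃,b₃*a),(e₁,1)]
      = (a * (if e₁ then x else x⁻¹))⁻¹ * gpEval x a [(e₁,b₁),(e₂,b₂),(e₃,b₃)]
        * (a * (if e₁ then x else x⁻¹)) := by
    cases e₁ <;> cases e₂ <;> cases e₃ <;> (simp [gpEval]; group)
  rw [h, conj_eq_one]

lemma rot2 (x a b₁ b₂ : G) (e₁ e₂ : Bool) :
    gpEval x a [(e₁,b₁),(e₂,b₂)] = 1 ↔ gpEval x b₁ [(e₂,b₂*a),(e₁,1)] = 1 := by
  have h : gpEval x b₁ [(e₂,b₂*a),(e₁,1)]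
      = (a * (if e₁ then x else x⁻¹))⁻¹ * gpEval x a [(e₁,b₁),(e₂,b₂)]
        * (a * (if e₁ then x else x⁻¹)) := by
    cases e₁ <;> cases e₂ <;> (simp [gpEval]; group)
  rw [h, conj_eq_one]

lemma flip3 (x a b₁ b₂ b₃ : G) (e₁ e₂ e₃ : Bool) :
    gpEval x a [(e₁,b₁),(e₂,b₂),(e₃,b₃)] = 1 ↔
      gpEval x b₃⁻¹ [(!e₃,b₂⁻¹),(!e₂,b₁⁻¹),(!e₁,a⁻¹)] = 1 := by
  have h : gpEval x b₃⁻¹ [(!e₃,b₂⁻¹),(!e₂,b₁⁻¹),(!e₁,a⁻¹)]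
      = (gpEval x a [(e₁,b₁),(e₂,b₂),(e₃,b₃)])⁻¹ := by
    cases e₁ <;> cases e₂ <;> cases e₃ <;> (simp [gpEval]; group)
  rw [h, inv_eq_one]

lemma flip2 (x a b₁ b₂ : G) (e₁ e₂ : Bool) :
    gpEval x a [(e₁,b₁),(e₂,b₂)] = 1 ↔
      gpEval x b₂⁻¹ [(!e₂,b₁⁻¹),(!e₁,a⁻¹)] = 1 := by
  have h : gpEval x b₂⁻¹ [(!e₂,b₁⁻¹),(!e₁,a⁻¹)]
      = (gpEval x a [(e₁,b₁),(e₂,b₂)])⁻¹ := by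
    cases e₁ <;> cases e₂ <;> (simp [gpEval]; group)
  rw [h, inv_eq_one]

lemma flip1 (x a b₁ : G) (e₁ : Bool) :
    gpEval x a [(e₁,b₁)] = 1 ↔ gpEval x b₁⁻¹ [(!e₁,a⁻¹)] = 1 := by
  have h : gpEval x b₁⁻¹ [(!e₁,a⁻¹)] = (gpEval x a [(e₁,b₁)])⁻¹ := by
    cases e₁ <;> (simp [gpEval]; group)
  rw [h, inv_eq_one]

end
section PermBasics
open Equiv

variable {X : Type*}

theorem Equiv.Perm.inv_apply_self (f : Equiv.Perm X) (x : X) : f⁻¹ (f x) = x :=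
  Equiv.symm_apply_apply f x

theorem Equiv.Perm.apply_inv_self (f : Equiv.Perm X) (x : X) : f (f⁻¹ x) = x :=
  Equiv.apply_symm_apply f x

def psupp (f : Equiv.Perm X) : Set X := {z | f z ≠ z}

lemma mem_psupp {f : Perm X} {z : X} : z ∈ psupp f ↔ f z ≠ z := Iff.rfl

lemma psupp_apply_eq {f : Perm X} {z : X} (h : z ∉ psupp f) : f z = z := by
  simpa [psupp] using h

lemma psupp_inv (f : Perm X) : psupp f⁻¹ = psupp f := by
  ext z
  have key : ∀ (g : Perm X) (w : X), g w = w → g⁻¹ w = w := by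
    intro g w h
    nth_rewrite 1 [← h]
    rw [Perm.inv_apply_self]
  simp only [psupp, Set.mem_setOf_eq]
  constructor
  · intro h h'; exact h (key f z h')
  · intro h h'
    have := key f⁻¹ z h'
    simp only [inv_inv] at this
    exact h this

lemma psupp_mul (f g : Perm X) : psupp (f * g) ⊆ psupp f ∪ psupp g := by
  intro z hz
  by_contra h
  simp only [Set.mem_union, not_or] at h
  exact hz (by simp [Perm.mul_apply, psupp_apply_eq h.2, psupp_apply_eq h.1])

lemma psupp_swap [DecidableEq X] (a b : X) : psupp (Equiv.swap a b) ⊆ {a, b} := by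
  intro z hz
  by_contra h
  simp only [Set.mem_insert_iff, Set.mem_singleton_iff, not_or] at h
  exact hz (swap_apply_of_ne_of_ne h.1 h.2)

lemma psupp_one : psupp (1 : Perm X) = ∅ := by simp [psupp]

lemma exists_fresh [Infinite X] (S : Set X) (hS : S.Finite) : ∃ z, z ∉ S := by
  rcases hS.infinite_compl.nonempty with ⟨z, hz⟩
  exact ⟨z, hz⟩

lemma exists_moved_fresh [Infinite X] {b : Perm X} (hb : (psupp b).Infinite)
    (S : Set X) (hS : S.Finite) : ∃ q, b q ≠ q ∧ q ∉ S ∧ b q ∉ S := by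
  have hpre : (⇑b ⁻¹' S).Finite := hS.preimage (Set.injOn_of_injective b.injective)
  rcases (hb.diff (hS.union hpre)).nonempty with ⟨q, hq⟩
  rw [Set.mem_diff, Set.mem_union] at hq
  push_neg at hq
  exact ⟨q, hq.1, hq.2.1, hq.2.2⟩

/-- pinning one value of a finitary permutation off a locked set -/
lemma pin [DecidableEq X] (x₀ : Perm X) (L : Set X) {p r : X}
    (hp : p ∉ L) (hr : r ∉ x₀ '' L) :
    ∃ x₁ : Perm X, psupp x₁ ⊆ psupp x₀ ∪ {r, x₀ p} ∧
      (∀ z ∈ L, x₁ z = x₀ z) ∧ x₁ p = r ∧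
      x₁ '' (insert p L) = insert r (x₀ '' L) := by
  refine ⟨Equiv.swap r (x₀ p) * x₀, ?_, ?_, ?_, ?_⟩
  · intro z hz
    rcases psupp_mul _ _ hz with h | h
    · right; exact psupp_swap _ _ h
    · left; exact h
  · intro z hz
    have h1 : x₀ z ≠ r := fun h => hr ⟨z, hz, h⟩
    have h2 : x₀ z ≠ x₀ p := fun h => hp (by rwa [x₀.injective h] at hz)
    simp [Perm.mul_apply, swap_apply_of_ne_of_ne h1 h2]
  · simp [Perm.mul_apply]
  · rw [Set.image_insert_eq]
    congr 1
    · simp [Perm.mul_apply]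
    · apply Set.image_congr
      intro z hz
      have h1 : x₀ z ≠ r := fun h => hr ⟨z, hz, h⟩
      have h2 : x₀ z ≠ x₀ p := fun h => hp (by rwa [x₀.injective h] at hz)
      simp [Perm.mul_apply, swap_apply_of_ne_of_ne h1 h2]

lemma gp0_apply (x a : Equiv.Perm X) (z : X) : gpEval x a ([] : List (Bool × Perm X)) z = a z := by
  simp [gpEval]

lemma gp1_apply (x a b : Equiv.Perm X) (e : Bool) (z : X) :
    gpEval x a [(e, b)] z = a ((if e then x else x⁻¹) (b z)) := by
  cases e <;> simp [gpEval, Perm.mul_apply]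

lemma gp2_apply (x a b c : Equiv.Perm X) (e₁ e₂ : Bool) (z : X) :
    gpEval x a [(e₁, b), (e₂, c)] z
      = a ((if e₁ then x else x⁻¹) (b ((if e₂ then x else x⁻¹) (c z)))) := by
  cases e₁ <;> cases e₂ <;> simp [gpEval, Perm.mul_apply]

lemma gp3_apply (x a b c d : Equiv.Perm X) (e₁ e₂ e₃ : Bool) (z : X) :
    gpEval x a [(e₁, b), (e₂, c), (e₃, d)] z
      = a ((if e₁ then x else x⁻¹) (b ((if e₂ then x else x⁻¹)
          (c ((if e₃ then x else x⁻¹) (d z)))))) := by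
  cases e₁ <;> cases e₂ <;> cases e₃ <;> simp [gpEval, Perm.mul_apply]

lemma gp1t_apply (x a b : Equiv.Perm X) (z : X) :
    gpEval x a [(true, b)] z = a (x (b z)) := by
  simp [gpEval, Perm.mul_apply]

lemma gp2tt_apply (x a b c : Equiv.Perm X) (z : X) :
    gpEval x a [(true, b), (true, c)] z = a (x (b (x (c z)))) := by
  simp [gpEval, Perm.mul_apply]

lemma gp2tf_apply (x a b c : Equiv.Perm X) (z : X) :
    gpEval x a [(true, b), (false, c)] z = a (x (b (x⁻¹ (c z)))) := by
  simp [gpEval, Perm.mul_apply]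

lemma gp3ttt_apply (x a b c d : Equiv.Perm X) (z : X) :
    gpEval x a [(true, b), (true, c), (true, d)] z = a (x (b (x (c (x (d z)))))) := by
  simp [gpEval, Perm.mul_apply]

lemma gp3ttf_apply (x a b c d : Equiv.Perm X) (z : X) :
    gpEval x a [(true, b), (true, c), (false, d)] z = a (x (b (x (c (x⁻¹ (d z)))))) := by
  simp [gpEval, Perm.mul_apply]

lemma x_inv_pin {x : Perm X} {q ζ : X} (h : x q = ζ) : x⁻¹ ζ = q :=
  Perm.inv_eq_iff_eq.mpr h.symm

lemma perm_ne_one_of_apply {f : Perm X} {z : X} (h : f z ≠ z) : f ≠ 1 :=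
  fun h1 => h (by rw [h1]; rfl)

end PermBasics
section Norm
open Equiv
variable {X : Type*}

def cands (a : Equiv.Perm X) (l : List (Bool × Equiv.Perm X)) : List (Equiv.Perm X) :=
  1 :: ((a :: l.map Prod.snd) ++ (a :: l.map Prod.snd).map (·⁻¹))

def GoodB (a : Equiv.Perm X) (l : List (Bool × Equiv.Perm X)) (B : Set X) : Prop :=
  ∀ u v : Equiv.Perm X, u ∈ cands a l → v ∈ cands a l →
    (psupp (u * v)).Finite → psupp (u * v) ⊆ B

def lastc (a : Equiv.Perm X) (l : List (Bool × Equiv.Perm X)) : Equiv.Perm X :=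
  (l.getLastD (true, 1)).2 * a

def Good (a : Equiv.Perm X) (l : List (Bool × Equiv.Perm X)) (B : Set X) : Prop :=
  (psupp (lastc a l)).Finite → psupp (lastc a l) ⊆ B

lemma GoodB_mono {a : Perm X} {l : List (Bool × Perm X)} {B B' : Set X}
    (h : GoodB a l B) (hBB : B ⊆ B') : GoodB a l B' :=
  fun u v hu hv hf => (h u v hu hv hf).trans hBB

lemma existsB (a : Perm X) (l : List (Bool × Perm X)) :
    ∃ B : Set X, B.Finite ∧ GoodB a l B := by
  classical
  set C := cands a l with hC
  refine ⟨⋃ w ∈ {w : Perm X | w ∈ C.flatMap (fun u => C.map (u * ·)) ∧ (psupp w).Finite},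
    psupp w, ?_, ?_⟩
  · apply Set.Finite.biUnion
    · exact (List.finite_toSet _).subset (fun w hw => hw.1)
    · exact fun w hw => hw.2
  · intro u v hu hv hf
    apply Set.subset_biUnion_of_mem
    refine ⟨?_, hf⟩
    simp only [List.mem_flatMap, List.mem_map]
    exact ⟨u, hu, v, hv, rfl⟩

lemma good_of {a : Perm X} {l : List (Bool × Perm X)} {B : Set X} (hB : GoodB a l B)
    (a' : Perm X) (l' : List (Bool × Perm X)) {u v : Perm X}
    (h1 : u ∈ cands a l) (h2 : v ∈ cands a l) (he : lastc a' l' = u * v) :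
    Good a' l' B := by
  intro h
  rw [he] at h ⊢
  exact hB u v h1 h2 h

lemma norm (a : Perm X) (l : List (Bool × Perm X)) (hl : l.length ≤ 3)
    {B : Set X} (hB : GoodB a l B) :
    ∃ (a' : Perm X) (l' : List (Bool × Perm X)),
      (l'.map Prod.fst = [] ∨ l'.map Prod.fst = [true] ∨ l'.map Prod.fst = [true, true] ∨
        l'.map Prod.fst = [true, false] ∨ l'.map Prod.fst = [true, true, true] ∨
        l'.map Prod.fst = [true, true, false]) ∧
      (∀ x : Perm X, gpEval x a' l' = 1 ↔ gpEval x a l = 1) ∧ Good a' l' B := by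
  classical
  have m1 : (1 : Perm X) ∈ cands a l := by simp [cands]
  have ma : a ∈ cands a l := by simp [cands]
  have mai : a⁻¹ ∈ cands a l := by simp [cands]
  rcases l with _ | ⟨⟨e₁, b₁⟩, _ | ⟨⟨e₂, b₂⟩, _ | ⟨⟨e₃, b₃⟩, _ | ⟨p, rest⟩⟩⟩⟩
  · exact ⟨a, [], Or.inl rfl, fun x => Iff.rfl,
      good_of hB _ _ m1 ma (by simp [lastc])⟩
  · have mb : b₁ ∈ cands a [(e₁, b₁)] := by simp [cands]
    have mbi : b₁⁻¹ ∈ cands a [(e₁, b₁)] := by simp [cands]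
    cases e₁
    · exact ⟨b₁⁻¹, [(true, a⁻¹)], Or.inr (Or.inl rfl),
        fun x => (flip1 x a b₁ false).symm,
        good_of hB _ _ mai mbi (by simp [lastc])⟩
    · exact ⟨a, [(true, b₁)], Or.inr (Or.inl rfl), fun x => Iff.rfl,
        good_of hB _ _ mb ma (by simp [lastc])⟩
  · have mb1 : b₁ ∈ cands a [(e₁, b₁), (e₂, b₂)] := by simp [cands]
    have mb2 : b₂ ∈ cands a [(e₁, b₁), (e₂, b₂)] := by simp [cands]
    have mb1i : b₁⁻¹ ∈ cands a [(e₁, b₁), (e₂, b₂)] := by simp [cands]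
    have mb2i : b₂⁻¹ ∈ cands a [(e₁, b₁), (e₂, b₂)] := by simp [cands]
    cases e₁ <;> cases e₂
    · -- (f,f) : flip
      exact ⟨b₂⁻¹, [(true, b₁⁻¹), (true, a⁻¹)], Or.inr (Or.inr (Or.inl rfl)),
        fun x => (flip2 x a b₁ b₂ false false).symm,
        good_of hB _ _ mai mb2i (by simp [lastc])⟩
    · -- (f,t) : rotate
      exact ⟨b₁, [(true, b₂ * a), (false, 1)], Or.inr (Or.inr (Or.inr (Or.inl rfl))),
        fun x => (rot2 x a b₁ b₂ false true).symm,
        good_of hB _ _ m1 mb1 (by simp [lastc])⟩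
    · -- (t,f) : normal
      exact ⟨a, [(true, b₁), (false, b₂)], Or.inr (Or.inr (Or.inr (Or.inl rfl))),
        fun x => Iff.rfl, good_of hB _ _ mb2 ma (by simp [lastc])⟩
    · -- (t,t) : normal
      exact ⟨a, [(true, b₁), (true, b₂)], Or.inr (Or.inr (Or.inl rfl)),
        fun x => Iff.rfl, good_of hB _ _ mb2 ma (by simp [lastc])⟩
  · have mb1 : b₁ ∈ cands a [(e₁, b₁), (e₂, b₂), (e₃, b₃)] := by simp [cands]
    have mb2 : b₂ ∈ cands a [(e₁, b₁), (e₂, b₂), (e₃, b₃)] := by simp [cands]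
    have mb3 : b₃ ∈ cands a [(e₁, b₁), (e₂, b₂), (e₃, b₃)] := by simp [cands]
    have mb1i : b₁⁻¹ ∈ cands a [(e₁, b₁), (e₂, b₂), (e₃, b₃)] := by simp [cands]
    have mb2i : b₂⁻¹ ∈ cands a [(e₁, b₁), (e₂, b₂), (e₃, b₃)] := by simp [cands]
    have mb3i : b₃⁻¹ ∈ cands a [(e₁, b₁), (e₂, b₂), (e₃, b₃)] := by simp [cands]
    cases e₁ <;> cases e₂ <;> cases e₃
    · -- (f,f,f) : flip -> (t,t,t)
      exact ⟨b₃⁻¹, [(true, b₂⁻¹), (true, b₁⁻¹), (true, a⁻¹)],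
        Or.inr (Or.inr (Or.inr (Or.inr (Or.inl rfl)))),
        fun x => (flip3 x a b₁ b₂ b₃ false false false).symm,
        good_of hB _ _ mai mb3i (by simp [lastc])⟩
    · -- (f,f,t) : flip -> (f,t,t) -> rot -> (t,t,f)
      refine ⟨b₂⁻¹, [(true, b₁⁻¹), (true, a⁻¹ * b₃⁻¹), (false, 1)],
        Or.inr (Or.inr (Or.inr (Or.inr (Or.inr rfl)))),
        fun x => ?_, good_of hB _ _ m1 mb2i (by simp [lastc])⟩
      exact (rot3 x b₃⁻¹ b₂⁻¹ b₁⁻¹ a⁻¹ false true true).symm.trans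
        (flip3 x a b₁ b₂ b₃ false false true).symm
    · -- (f,t,f) : flip -> (t,f,t) -> rot² -> (t,t,f)
      refine ⟨b₁⁻¹, [(true, a⁻¹ * b₃⁻¹), (true, 1 * b₂⁻¹), (false, 1)],
        Or.inr (Or.inr (Or.inr (Or.inr (Or.inr rfl)))),
        fun x => ?_, good_of hB _ _ m1 mb1i (by simp [lastc])⟩
      exact ((rot3 x b₂⁻¹ b₁⁻¹ (a⁻¹ * b₃⁻¹) 1 false true true).symm.trans
        (rot3 x b₃⁻¹ b₂⁻¹ b₁⁻¹ a⁻¹ true false true).symm).trans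
        (flip3 x a b₁ b₂ b₃ false true false).symm
    · -- (f,t,t) : rot -> (t,t,f)
      exact ⟨b₁, [(true, b₂), (true, b₃ * a), (false, 1)],
        Or.inr (Or.inr (Or.inr (Or.inr (Or.inr rfl)))),
        fun x => (rot3 x a b₁ b₂ b₃ false true true).symm,
        good_of hB _ _ m1 mb1 (by simp [lastc])⟩
    · -- (t,f,f) : flip -> (t,t,f)
      exact ⟨b₃⁻¹, [(true, b₂⁻¹), (true, b₁⁻¹), (false, a⁻¹)],
        Or.inr (Or.inr (Or.inr (Or.inr (Or.inr rfl)))),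
        fun x => (flip3 x a b₁ b₂ b₃ true false false).symm,
        good_of hB _ _ mai mb3i (by simp [lastc])⟩
    · -- (t,f,t) : rot² -> (t,t,f)
      refine ⟨b₂, [(true, b₃ * a), (true, 1 * b₁), (false, 1)],
        Or.inr (Or.inr (Or.inr (Or.inr (Or.inr rfl)))),
        fun x => ?_, good_of hB _ _ m1 mb2 (by simp [lastc])⟩
      exact (rot3 x b₁ b₂ (b₃ * a) 1 false true true).symm.trans
        (rot3 x a b₁ b₂ b₃ true false true).symm
    · -- (t,t,f) : normal
      exact ⟨a, [(true, b₁), (true, b₂), (false, b₃)],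
        Or.inr (Or.inr (Or.inr (Or.inr (Or.inr rfl)))),
        fun x => Iff.rfl, good_of hB _ _ mb3 ma (by simp [lastc])⟩
    · -- (t,t,t) : normal
      exact ⟨a, [(true, b₁), (true, b₂), (true, b₃)],
        Or.inr (Or.inr (Or.inr (Or.inr (Or.inl rfl)))),
        fun x => Iff.rfl, good_of hB _ _ mb3 ma (by simp [lastc])⟩
  · simp at hl; omega
end Norm
section Step
set_option linter.unusedSectionVars false
open Equiv
variable {X : Type*} [Infinite X]

lemma exists_fresh2 (g : Equiv.Perm X) {S T : Set X} (hS : S.Finite) (hT : T.Finite) :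
    ∃ v, v ∉ S ∧ g v ∉ T := by
  obtain ⟨v, hv⟩ := exists_fresh (S ∪ ⇑g ⁻¹' T)
    (hS.union (hT.preimage (Set.injOn_of_injective g.injective)))
  exact ⟨v, fun h => hv (Or.inl h), fun h => hv (Or.inr h)⟩

structure PExt (B : Set X) (x₀ x₁ : Equiv.Perm X) (L L₁ : Set X) : Prop where
  fin : L₁.Finite
  suppfin : (psupp x₁).Finite
  sub : L ⊆ L₁
  agree : ∀ z ∈ L, x₁ z = x₀ z
  inv : ∀ z ∈ L₁, x₁ z ∉ B

lemma PExt.refl {B : Set X} {x₀ : Perm X} {L : Set X} (hLfin : L.Finite)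
    (hx₀ : (psupp x₀).Finite) (hinv : ∀ z ∈ L, x₀ z ∉ B) : PExt B x₀ x₀ L L :=
  ⟨hLfin, hx₀, subset_rfl, fun _ _ => rfl, hinv⟩

lemma PExt.trans {B : Set X} {x₀ x₁ x₂ : Perm X} {L L₁ L₂ : Set X}
    (h1 : PExt B x₀ x₁ L L₁) (h2 : PExt B x₁ x₂ L₁ L₂) : PExt B x₀ x₂ L L₂ :=
  ⟨h2.fin, h2.suppfin, h1.sub.trans h2.sub,
    fun z hz => (h2.agree z (h1.sub hz)).trans (h1.agree z hz), h2.inv⟩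

lemma pin_ext {B : Set X} (hBfin : B.Finite) {x₀ : Perm X} {L : Set X}
    (hLfin : L.Finite) (hx₀ : (psupp x₀).Finite) (hinv : ∀ z ∈ L, x₀ z ∉ B)
    {p r : X} (hp : p ∉ L) (hr : r ∉ x₀ '' L) (hrB : r ∉ B) :
    ∃ x₁ : Perm X, PExt B x₀ x₁ L (insert p L) ∧ x₁ p = r ∧
      x₁ '' (insert p L) = insert r (x₀ '' L) := by
  classical
  obtain ⟨x₁, hsupp, hagree, hxp, himg⟩ := pin x₀ L hp hr
  refine ⟨x₁, ⟨hLfin.insert p, (hx₀.union ((Set.finite_singleton _).insert _)).subset hsupp,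
    Set.subset_insert _ _, hagree, ?_⟩, hxp, himg⟩
  intro z hz
  rcases Set.mem_insert_iff.mp hz with rfl | hz
  · rw [hxp]; exact hrB
  · rw [hagree z hz]; exact hinv z hz

end Step
section Step2
set_option linter.unusedSectionVars false
open Equiv
variable {X : Type*} [Infinite X]

lemma step0 (B : Set X) (hBfin : B.Finite) (a : Perm X)
    (hnt : ∃ g : Perm X, gpEval g a ([] : List (Bool × Perm X)) ≠ 1)
    (x₀ : Perm X) (L : Set X) (hLfin : L.Finite) (hx₀ : (psupp x₀).Finite)
    (hinv : ∀ z ∈ L, x₀ z ∉ B) :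
    ∃ x₁ L₁, PExt B x₀ x₁ L L₁ ∧
      ∀ x : Perm X, (∀ z ∈ L₁, x z = x₁ z) → gpEval x a ([] : List (Bool × Perm X)) ≠ 1 := by
  obtain ⟨g, hg⟩ := hnt
  refine ⟨x₀, L, PExt.refl hLfin hx₀ hinv, fun x _ h1 => hg ?_⟩
  rw [gpEval_nil] at h1 ⊢
  exact h1

lemma step1 (B : Set X) (hBfin : B.Finite) (a b : Perm X)
    (x₀ : Perm X) (L : Set X) (hLfin : L.Finite) (hx₀ : (psupp x₀).Finite)
    (hinv : ∀ z ∈ L, x₀ z ∉ B) :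
    ∃ x₁ L₁, PExt B x₀ x₁ L L₁ ∧
      ∀ x : Perm X, (∀ z ∈ L₁, x z = x₁ z) → gpEval x a [(true, b)] ≠ 1 := by
  classical
  obtain ⟨p, hp⟩ := exists_fresh L hLfin
  obtain ⟨r, hr⟩ := exists_fresh (x₀ '' L ∪ B ∪ {a⁻¹ (b⁻¹ p)})
    (((hLfin.image _).union hBfin).union (Set.finite_singleton _))
  simp only [Set.mem_union, Set.mem_singleton_iff, not_or] at hr
  obtain ⟨x₁, hE, hx1, _⟩ := pin_ext hBfin hLfin hx₀ hinv hp hr.1.1 hr.1.2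
  refine ⟨x₁, insert p L, hE, ?_⟩
  intro x hx h1
  have hxp : x p = r := (hx p (Set.mem_insert _ _)).trans hx1
  have hz := DFunLike.congr_fun h1 (b⁻¹ p)
  rw [gp1t_apply] at hz
  simp only [Perm.one_apply, Perm.apply_inv_self] at hz
  rw [hxp] at hz
  exact hr.2 (by rw [← hz, Perm.inv_apply_self])

lemma step2a (B : Set X) (hBfin : B.Finite) (a b c : Perm X)
    (x₀ : Perm X) (L : Set X) (hLfin : L.Finite) (hx₀ : (psupp x₀).Finite)
    (hinv : ∀ z ∈ L, x₀ z ∉ B) :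
    ∃ x₁ L₁, PExt B x₀ x₁ L L₁ ∧
      ∀ x : Perm X, (∀ z ∈ L₁, x z = x₁ z) → gpEval x a [(true, b), (true, c)] ≠ 1 := by
  classical
  obtain ⟨p, hp⟩ := exists_fresh L hLfin
  obtain ⟨v, hvS, hvT⟩ := exists_fresh2 b (S := x₀ '' L ∪ B) (T := insert p L)
    ((hLfin.image _).union hBfin) (hLfin.insert _)
  simp only [Set.mem_union, not_or] at hvS
  obtain ⟨x₁, hE1, hx1, himg1⟩ := pin_ext hBfin hLfin hx₀ hinv hp hvS.1 hvS.2
  obtain ⟨w, hw⟩ := exists_fresh (insert v (x₀ '' L) ∪ B ∪ {a⁻¹ (c⁻¹ p)})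
    ((((hLfin.image _).insert _).union hBfin).union (Set.finite_singleton _))
  simp only [Set.mem_union, Set.mem_singleton_iff, not_or] at hw
  obtain ⟨x₂, hE2, hx2, _⟩ := pin_ext hBfin hE1.fin hE1.suppfin hE1.inv hvT
    (by rw [himg1]; exact hw.1.1) hw.1.2
  refine ⟨x₂, insert (b v) (insert p L), hE1.trans hE2, ?_⟩
  intro x hx h1
  have hxp : x p = v := by
    rw [hx p (Set.mem_insert_of_mem _ (Set.mem_insert _ _)),
      hE2.agree p (Set.mem_insert _ _), hx1]
  have hxbv : x (b v) = w := by rw [hx (b v) (Set.mem_insert _ _), hx2]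
  have hz := DFunLike.congr_fun h1 (c⁻¹ p)
  rw [gp2tt_apply] at hz
  simp only [Perm.one_apply, Perm.apply_inv_self] at hz
  rw [hxp, hxbv] at hz
  exact hw.2 (by rw [← hz, Perm.inv_apply_self])

lemma step3a (B : Set X) (hBfin : B.Finite) (a b c d : Perm X)
    (x₀ : Perm X) (L : Set X) (hLfin : L.Finite) (hx₀ : (psupp x₀).Finite)
    (hinv : ∀ z ∈ L, x₀ z ∉ B) :
    ∃ x₁ L₁, PExt B x₀ x₁ L L₁ ∧
      ∀ x : Perm X, (∀ z ∈ L₁, x z = x₁ z) →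
        gpEval x a [(true, b), (true, c), (true, d)] ≠ 1 := by
  classical
  obtain ⟨p, hp⟩ := exists_fresh L hLfin
  obtain ⟨v₁, hv₁S, hv₁T⟩ := exists_fresh2 c (S := x₀ '' L ∪ B) (T := insert p L)
    ((hLfin.image _).union hBfin) (hLfin.insert _)
  simp only [Set.mem_union, not_or] at hv₁S
  obtain ⟨x₁, hE1, hx1, himg1⟩ := pin_ext hBfin hLfin hx₀ hinv hp hv₁S.1 hv₁S.2
  obtain ⟨v₂, hv₂S, hv₂T⟩ := exists_fresh2 b (S := insert v₁ (x₀ '' L) ∪ B)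
    (T := insert (c v₁) (insert p L))
    (((hLfin.image _).insert _).union hBfin) ((hLfin.insert _).insert _)
  simp only [Set.mem_union, not_or] at hv₂S
  obtain ⟨x₂, hE2, hx2, himg2⟩ := pin_ext hBfin hE1.fin hE1.suppfin hE1.inv hv₁T
    (by rw [himg1]; exact hv₂S.1) hv₂S.2
  obtain ⟨v₃, hv₃⟩ := exists_fresh (insert v₂ (insert v₁ (x₀ '' L)) ∪ B ∪ {a⁻¹ (d⁻¹ p)})
    (((((hLfin.image _).insert _).insert _).union hBfin).union (Set.finite_singleton _))
  simp only [Set.mem_union, Set.mem_singleton_iff, not_or] at hv₃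
  obtain ⟨x₃, hE3, hx3, _⟩ := pin_ext hBfin hE2.fin hE2.suppfin hE2.inv hv₂T
    (by rw [himg2, himg1]; exact hv₃.1.1) hv₃.1.2
  refine ⟨x₃, insert (b v₂) (insert (c v₁) (insert p L)), (hE1.trans hE2).trans hE3, ?_⟩
  intro x hx h1
  have hxp : x p = v₁ := by
    rw [hx p (by simp), hE3.agree p (by simp), hE2.agree p (Set.mem_insert _ _), hx1]
  have hxcv : x (c v₁) = v₂ := by
    rw [hx (c v₁) (by simp), hE3.agree (c v₁) (by simp), hx2]
  have hxbv : x (b v₂) = v₃ := by rw [hx (b v₂) (Set.mem_insert _ _), hx3]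
  have hz := DFunLike.congr_fun h1 (d⁻¹ p)
  rw [gp3ttt_apply] at hz
  simp only [Perm.one_apply, Perm.apply_inv_self] at hz
  rw [hxp, hxcv, hxbv] at hz
  exact hv₃.2 (by rw [← hz, Perm.inv_apply_self])
end Step2
section Step3
set_option linter.unusedSectionVars false
open Equiv
variable {X : Type*} [Infinite X]

lemma step2b (B : Set X) (hBfin : B.Finite) (a b c : Perm X)
    (hnt : ∃ g : Perm X, gpEval g a [(true, b), (false, c)] ≠ 1)
    (hGood : Good a [(true, b), (false, c)] B)
    (x₀ : Perm X) (L : Set X) (hLfin : L.Finite) (hx₀ : (psupp x₀).Finite)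
    (hinv : ∀ z ∈ L, x₀ z ∉ B) :
    ∃ x₁ L₁, PExt B x₀ x₁ L L₁ ∧
      ∀ x : Perm X, (∀ z ∈ L₁, x z = x₁ z) → gpEval x a [(true, b), (false, c)] ≠ 1 := by
  classical
  by_cases hb1 : b = 1
  · subst hb1
    obtain ⟨g, hg⟩ := hnt
    have hconst : ∀ y : Perm X, gpEval y a [(true, (1 : Perm X)), (false, c)] = a * c := by
      intro y; simp [gpEval, mul_assoc]
    refine ⟨x₀, L, PExt.refl hLfin hx₀ hinv, fun x _ h1 => hg ?_⟩
    rw [hconst] at h1 ⊢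
    exact h1
  by_cases hs1 : ∃ p₀, b p₀ ≠ p₀ ∧ p₀ ∉ L ∧ b p₀ ∉ insert p₀ L
  · obtain ⟨p₀, hbp₀, hp₀L, hbp₀L⟩ := hs1
    obtain ⟨r, hr⟩ := exists_fresh (x₀ '' L ∪ B) ((hLfin.image _).union hBfin)
    simp only [Set.mem_union, not_or] at hr
    obtain ⟨x₁, hE1, hx1, himg1⟩ := pin_ext hBfin hLfin hx₀ hinv hp₀L hr.1 hr.2
    obtain ⟨s, hs⟩ := exists_fresh (insert r (x₀ '' L) ∪ B ∪ {a⁻¹ (c⁻¹ r)})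
      ((((hLfin.image _).insert _).union hBfin).union (Set.finite_singleton _))
    simp only [Set.mem_union, Set.mem_singleton_iff, not_or] at hs
    obtain ⟨x₂, hE2, hx2, _⟩ := pin_ext hBfin hE1.fin hE1.suppfin hE1.inv hbp₀L
      (by rw [himg1]; exact hs.1.1) hs.1.2
    refine ⟨x₂, insert (b p₀) (insert p₀ L), hE1.trans hE2, ?_⟩
    intro x hx h1
    have hxp : x p₀ = r := by
      rw [hx p₀ (Set.mem_insert_of_mem _ (Set.mem_insert _ _)),
        hE2.agree p₀ (Set.mem_insert _ _), hx1]
    have hxbp : x (b p₀) = s := by rw [hx (b p₀) (Set.mem_insert _ _), hx2]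
    have hz := DFunLike.congr_fun h1 (c⁻¹ r)
    rw [gp2tf_apply] at hz
    simp only [Perm.one_apply, Perm.apply_inv_self] at hz
    rw [x_inv_pin hxp, hxbp] at hz
    exact hs.2 (by rw [← hz, Perm.inv_apply_self])
  · have hbfin : (psupp b).Finite := by
      by_contra hinf
      obtain ⟨q, h1, h2, h3⟩ := exists_moved_fresh hinf L hLfin
      exact hs1 ⟨q, h1, h2, fun h => (Set.mem_insert_iff.mp h).elim (fun h' => h1 h') h3⟩
    have hsupc : (psupp (c * a)).Finite → psupp (c * a) ⊆ B := hGood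
    by_cases hefin : (psupp (c * a)).Finite
    · -- hard conjugation case
      obtain ⟨p₀, hbp₀⟩ : ∃ p₀, b p₀ ≠ p₀ := by
        by_contra hno; push_neg at hno
        exact hb1 (Equiv.ext fun z => (hno z).trans (Perm.one_apply z).symm)
      have key : ∀ (x₁ : Perm X) (L₁ : Set X), PExt B x₀ x₁ L L₁ → p₀ ∈ L₁ →
          ∃ x₂ L₂, PExt B x₀ x₂ L L₂ ∧
            ∀ x : Perm X, (∀ z ∈ L₂, x z = x₂ z) →
              gpEval x a [(true, b), (false, c)] ≠ 1 := by
        intro x₁ L₁ hE hp₀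
        refine ⟨x₁, L₁, hE, ?_⟩
        intro x hx h1
        have hrB : x₁ p₀ ∉ B := hE.inv p₀ hp₀
        have hxp : x p₀ = x₁ p₀ := hx p₀ hp₀
        have hz := DFunLike.congr_fun h1 (c⁻¹ (x₁ p₀))
        rw [gp2tf_apply] at hz
        simp only [Perm.one_apply, Perm.apply_inv_self] at hz
        rw [x_inv_pin hxp] at hz
        have hfix : (c * a) (x₁ p₀) = x₁ p₀ :=
          psupp_apply_eq (fun hm => hrB (hsupc hefin hm))
        have har : a (x₁ p₀) = c⁻¹ (x₁ p₀) := by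
          have h2 : c (a (x₁ p₀)) = x₁ p₀ := by
            simpa [Perm.mul_apply] using hfix
          exact Perm.eq_inv_iff_eq.mpr h2
        have h3 : x (b p₀) = x₁ p₀ := by
          apply a.injective
          rw [hz, har]
        exact hbp₀ (x.injective (h3.trans hxp.symm))
      by_cases hp₀L : p₀ ∈ L
      · exact key x₀ L (PExt.refl hLfin hx₀ hinv) hp₀L
      · obtain ⟨r, hr⟩ := exists_fresh (x₀ '' L ∪ B) ((hLfin.image _).union hBfin)
        simp only [Set.mem_union, not_or] at hr
        obtain ⟨x₁, hE1, _, _⟩ := pin_ext hBfin hLfin hx₀ hinv hp₀L hr.1 hr.2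
        exact key x₁ (insert p₀ L) hE1 (Set.mem_insert _ _)
    · -- supp (c*a) infinite
      obtain ⟨q, hq⟩ := exists_fresh (L ∪ psupp b) (hLfin.union hbfin)
      simp only [Set.mem_union, not_or] at hq
      obtain ⟨r, hr1, hr2, _⟩ := exists_moved_fresh hefin (x₀ '' L ∪ B)
        ((hLfin.image _).union hBfin)
      simp only [Set.mem_union, not_or] at hr2
      obtain ⟨x₁, hE1, hx1, _⟩ := pin_ext hBfin hLfin hx₀ hinv hq.1 hr2.1 hr2.2
      refine ⟨x₁, insert q L, hE1, ?_⟩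
      intro x hx h1
      have hxq : x q = r := (hx q (Set.mem_insert _ _)).trans hx1
      have hz := DFunLike.congr_fun h1 (c⁻¹ r)
      rw [gp2tf_apply] at hz
      simp only [Perm.one_apply, Perm.apply_inv_self] at hz
      rw [x_inv_pin hxq, psupp_apply_eq hq.2, hxq] at hz
      exact hr1 (by rw [Perm.mul_apply, hz, Perm.apply_inv_self])

lemma step3b (B : Set X) (hBfin : B.Finite) (a b c d : Perm X)
    (x₀ : Perm X) (L : Set X) (hLfin : L.Finite) (hx₀ : (psupp x₀).Finite)
    (hinv : ∀ z ∈ L, x₀ z ∉ B) :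
    ∃ x₁ L₁, PExt B x₀ x₁ L L₁ ∧
      ∀ x : Perm X, (∀ z ∈ L₁, x z = x₁ z) →
        gpEval x a [(true, b), (true, c), (false, d)] ≠ 1 := by
  classical
  by_cases hs1 : ∃ q, c q ≠ q ∧ q ∉ L ∧ c q ∉ insert q L
  · obtain ⟨q, hcq, hqL, hcqL⟩ := hs1
    obtain ⟨ζ, hζ⟩ := exists_fresh (x₀ '' L ∪ B) ((hLfin.image _).union hBfin)
    simp only [Set.mem_union, not_or] at hζ
    obtain ⟨x₁, hE1, hx1, himg1⟩ := pin_ext hBfin hLfin hx₀ hinv hqL hζ.1 hζ.2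
    obtain ⟨w, hwS, hwT⟩ := exists_fresh2 b (S := insert ζ (x₀ '' L) ∪ B)
      (T := insert (c q) (insert q L))
      (((hLfin.image _).insert _).union hBfin) ((hLfin.insert _).insert _)
    simp only [Set.mem_union, not_or] at hwS
    obtain ⟨x₂, hE2, hx2, himg2⟩ := pin_ext hBfin hE1.fin hE1.suppfin hE1.inv hcqL
      (by rw [himg1]; exact hwS.1) hwS.2
    obtain ⟨t, ht⟩ := exists_fresh (insert w (insert ζ (x₀ '' L)) ∪ B ∪ {a⁻¹ (d⁻¹ ζ)})
      (((((hLfin.image _).insert _).insert _).union hBfin).union (Set.finite_singleton _))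
    simp only [Set.mem_union, Set.mem_singleton_iff, not_or] at ht
    obtain ⟨x₃, hE3, hx3, _⟩ := pin_ext hBfin hE2.fin hE2.suppfin hE2.inv hwT
      (by rw [himg2, himg1]; exact ht.1.1) ht.1.2
    refine ⟨x₃, insert (b w) (insert (c q) (insert q L)), (hE1.trans hE2).trans hE3, ?_⟩
    intro x hx h1
    have hxq : x q = ζ := by
      rw [hx q (by simp), hE3.agree q (by simp), hE2.agree q (Set.mem_insert _ _), hx1]
    have hxcq : x (c q) = w := by
      rw [hx (c q) (by simp), hE3.agree (c q) (by simp), hx2]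
    have hxbw : x (b w) = t := by rw [hx (b w) (Set.mem_insert _ _), hx3]
    have hz := DFunLike.congr_fun h1 (d⁻¹ ζ)
    rw [gp3ttf_apply] at hz
    simp only [Perm.one_apply, Perm.apply_inv_self] at hz
    rw [x_inv_pin hxq, hxcq, hxbw] at hz
    exact ht.2 (by rw [← hz, Perm.inv_apply_self])
  · have hcfin : (psupp c).Finite := by
      by_contra hinf
      obtain ⟨q, h1, h2, h3⟩ := exists_moved_fresh hinf L hLfin
      exact hs1 ⟨q, h1, h2, fun h => (Set.mem_insert_iff.mp h).elim (fun h' => h1 h') h3⟩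
    by_cases hbinf : (psupp b).Finite
    · -- γ : both finitary
      obtain ⟨q, hq⟩ := exists_fresh (L ∪ psupp c) (hLfin.union hcfin)
      simp only [Set.mem_union, not_or] at hq
      obtain ⟨z₀, hz₀⟩ := exists_fresh (x₀ '' L ∪ B ∪ psupp b ∪ L ∪ {q})
        (((((hLfin.image _).union hBfin).union hbinf).union hLfin).union (Set.finite_singleton _))
      simp only [Set.mem_union, Set.mem_singleton_iff, not_or] at hz₀
      obtain ⟨x₁, hE1, hx1, himg1⟩ := pin_ext hBfin hLfin hx₀ hinv hq.1 hz₀.1.1.1.1 hz₀.1.1.1.2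
      have hz₀L1 : z₀ ∉ insert q L := by
        intro h
        rcases Set.mem_insert_iff.mp h with h' | h'
        · exact hz₀.2 h'
        · exact hz₀.1.2 h'
      obtain ⟨t, ht⟩ := exists_fresh (insert z₀ (x₀ '' L) ∪ B ∪ {a⁻¹ (d⁻¹ z₀)})
        ((((hLfin.image _).insert _).union hBfin).union (Set.finite_singleton _))
      simp only [Set.mem_union, Set.mem_singleton_iff, not_or] at ht
      obtain ⟨x₂, hE2, hx2, _⟩ := pin_ext hBfin hE1.fin hE1.suppfin hE1.inv hz₀L1
        (by rw [himg1]; exact ht.1.1) ht.1.2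
      refine ⟨x₂, insert z₀ (insert q L), hE1.trans hE2, ?_⟩
      intro x hx h1
      have hxq : x q = z₀ := by
        rw [hx q (Set.mem_insert_of_mem _ (Set.mem_insert _ _)),
          hE2.agree q (Set.mem_insert _ _), hx1]
      have hxz₀ : x z₀ = t := by rw [hx z₀ (Set.mem_insert _ _), hx2]
      have hz := DFunLike.congr_fun h1 (d⁻¹ z₀)
      rw [gp3ttf_apply] at hz
      simp only [Perm.one_apply, Perm.apply_inv_self] at hz
      rw [x_inv_pin hxq, psupp_apply_eq hq.2, hxq, psupp_apply_eq hz₀.1.1.2, hxz₀] at hz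
      exact ht.2 (by rw [← hz, Perm.inv_apply_self])
    · -- β : supp b infinite
      obtain ⟨q, hq⟩ := exists_fresh (L ∪ psupp c) (hLfin.union hcfin)
      simp only [Set.mem_union, not_or] at hq
      obtain ⟨z₀, hbz₀, hz₀S, hbz₀S⟩ := exists_moved_fresh hbinf (L ∪ {q} ∪ x₀ '' L ∪ B)
        ((((hLfin.union (Set.finite_singleton _)).union (hLfin.image _)).union hBfin))
      simp only [Set.mem_union, Set.mem_singleton_iff, not_or] at hz₀S hbz₀S
      obtain ⟨x₁, hE1, hx1, himg1⟩ := pin_ext hBfin hLfin hx₀ hinv hq.1 hz₀S.1.2 hz₀S.2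
      have hbz₀L1 : b z₀ ∉ insert q L := by
        intro h
        rcases Set.mem_insert_iff.mp h with h' | h'
        · exact hbz₀S.1.1.2 h'
        · exact hbz₀S.1.1.1 h'
      obtain ⟨t, ht⟩ := exists_fresh (insert z₀ (x₀ '' L) ∪ B ∪ {a⁻¹ (d⁻¹ z₀)})
        ((((hLfin.image _).insert _).union hBfin).union (Set.finite_singleton _))
      simp only [Set.mem_union, Set.mem_singleton_iff, not_or] at ht
      obtain ⟨x₂, hE2, hx2, _⟩ := pin_ext hBfin hE1.fin hE1.suppfin hE1.inv hbz₀L1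
        (by rw [himg1]; exact ht.1.1) ht.1.2
      refine ⟨x₂, insert (b z₀) (insert q L), hE1.trans hE2, ?_⟩
      intro x hx h1
      have hxq : x q = z₀ := by
        rw [hx q (Set.mem_insert_of_mem _ (Set.mem_insert _ _)),
          hE2.agree q (Set.mem_insert _ _), hx1]
      have hxbz : x (b z₀) = t := by rw [hx (b z₀) (Set.mem_insert _ _), hx2]
      have hz := DFunLike.congr_fun h1 (d⁻¹ z₀)
      rw [gp3ttf_apply] at hz
      simp only [Perm.one_apply, Perm.apply_inv_self] at hz
      rw [x_inv_pin hxq, psupp_apply_eq hq.2, hxq, hxbz] at hz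
      exact ht.2 (by rw [← hz, Perm.inv_apply_self])
end Step3
section Main
set_option linter.unusedSectionVars false
open Equiv
variable {X : Type*} [Infinite X]

lemma step (B : Set X) (hBfin : B.Finite) (a : Perm X) (l : List (Bool × Perm X))
    (hlen : l.length ≤ 3) (hnt : ∃ g : Perm X, gpEval g a l ≠ 1) (hB : GoodB a l B)
    (x₀ : Perm X) (L : Set X) (hLfin : L.Finite) (hx₀ : (psupp x₀).Finite)
    (hinv : ∀ z ∈ L, x₀ z ∉ B) :
    ∃ x₁ L₁, PExt B x₀ x₁ L L₁ ∧
      ∀ x : Perm X, (∀ z ∈ L₁, x z = x₁ z) → gpEval x a l ≠ 1 := by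
  classical
  obtain ⟨a', l', hpat, hiff, hGood⟩ := norm a l hlen hB
  have hnt' : ∃ g : Perm X, gpEval g a' l' ≠ 1 := by
    obtain ⟨g, hg⟩ := hnt
    exact ⟨g, fun h => hg ((hiff g).mp h)⟩
  suffices h : ∃ x₁ L₁, PExt B x₀ x₁ L L₁ ∧
      ∀ x : Perm X, (∀ z ∈ L₁, x z = x₁ z) → gpEval x a' l' ≠ 1 by
    obtain ⟨x₁, L₁, hE, hg⟩ := h
    exact ⟨x₁, L₁, hE, fun x hx h1 => hg x hx ((hiff x).mpr h1)⟩
  clear hiff hnt hB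
  rcases l' with _ | ⟨⟨e₁, c₁⟩, l''⟩
  · exact step0 B hBfin a' hnt' x₀ L hLfin hx₀ hinv
  rcases l'' with _ | ⟨⟨e₂, c₂⟩, l'''⟩
  · cases e₁
    · rcases hpat with h | h | h | h | h | h <;> simp at h
    · exact step1 B hBfin a' c₁ x₀ L hLfin hx₀ hinv
  rcases l''' with _ | ⟨⟨e₃, c₃⟩, l''''⟩
  · cases e₁ <;> cases e₂
    · rcases hpat with h | h | h | h | h | h <;> simp at h
    · rcases hpat with h | h | h | h | h | h <;> simp at h
    · exact step2b B hBfin a' c₁ c₂ hnt' hGood x₀ L hLfin hx₀ hinv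
    · exact step2a B hBfin a' c₁ c₂ x₀ L hLfin hx₀ hinv
  rcases l'''' with _ | ⟨p₄, l'''''⟩
  · cases e₁ <;> cases e₂ <;> cases e₃
    · rcases hpat with h | h | h | h | h | h <;> simp at h
    · rcases hpat with h | h | h | h | h | h <;> simp at h
    · rcases hpat with h | h | h | h | h | h <;> simp at h
    · rcases hpat with h | h | h | h | h | h <;> simp at h
    · rcases hpat with h | h | h | h | h | h <;> simp at h
    · rcases hpat with h | h | h | h | h | h <;> simp at h
    · exact step3b B hBfin a' c₁ c₂ c₃ x₀ L hLfin hx₀ hinv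
    · exact step3a B hBfin a' c₁ c₂ c₃ x₀ L hLfin hx₀ hinv
  · rcases hpat with h | h | h | h | h | h <;> simp at h

lemma main_aux (B : Set X) (hBfin : B.Finite)
    (CS : List (Perm X × List (Bool × Perm X)))
    (hCS : ∀ cc ∈ CS, cc.2.length ≤ 3 ∧ (∃ g : Perm X, gpEval g cc.1 cc.2 ≠ 1) ∧
      GoodB cc.1 cc.2 B) :
    ∀ (x₀ : Perm X) (L : Set X), L.Finite → (psupp x₀).Finite → (∀ z ∈ L, x₀ z ∉ B) →
    ∃ x₁ L₁, PExt B x₀ x₁ L L₁ ∧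
      ∀ x : Perm X, (∀ z ∈ L₁, x z = x₁ z) → ∀ cc ∈ CS, gpEval x cc.1 cc.2 ≠ 1 := by
  induction CS with
  | nil =>
    intro x₀ L h1 h2 h3
    exact ⟨x₀, L, PExt.refl h1 h2 h3, fun x hx cc hcc => absurd hcc List.not_mem_nil⟩
  | cons c CS ih =>
    intro x₀ L hL hx₀ hinv
    obtain ⟨hlen, hnt, hB⟩ := hCS c List.mem_cons_self
    obtain ⟨x₁, L₁, hE1, hg1⟩ := step B hBfin c.1 c.2 hlen hnt hB x₀ L hL hx₀ hinv
    obtain ⟨x₂, L₂, hE2, hg2⟩ := ih (fun cc hcc => hCS cc (List.mem_cons_of_mem _ hcc))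
      x₁ L₁ hE1.fin hE1.suppfin hE1.inv
    refine ⟨x₂, L₂, hE1.trans hE2, ?_⟩
    intro x hx cc hcc
    rcases List.mem_cons.mp hcc with rfl | hcc
    · exact hg1 x (fun z hz => (hx z (hE2.sub hz)).trans (hE2.agree z hz))
    · exact hg2 x hx cc hcc

lemma existsB_list (CS : List (Perm X × List (Bool × Perm X))) :
    ∃ B : Set X, B.Finite ∧ ∀ cc ∈ CS, GoodB cc.1 cc.2 B := by
  induction CS with
  | nil => exact ⟨∅, Set.finite_empty, fun cc hcc => absurd hcc List.not_mem_nil⟩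
  | cons c CS ih =>
    obtain ⟨B1, hB1, hg1⟩ := existsB c.1 c.2
    obtain ⟨B2, hB2, hg2⟩ := ih
    refine ⟨B1 ∪ B2, hB1.union hB2, ?_⟩
    intro cc hcc
    rcases List.mem_cons.mp hcc with rfl | hcc
    · exact GoodB_mono hg1 Set.subset_union_left
    · exact GoodB_mono (hg2 cc hcc) Set.subset_union_right

/-- The key combinatorial fact: finitely many nontrivial group polynomials of degree ≤ 3
over `Sym(X)` admit a common finitary non-root. -/
lemma main (CS : List (Perm X × List (Bool × Perm X)))
    (h : ∀ cc ∈ CS, cc.2.length ≤ 3 ∧ ∃ g : Perm X, gpEval g cc.1 cc.2 ≠ 1) :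
    ∃ x : Perm X, (psupp x).Finite ∧ ∀ cc ∈ CS, gpEval x cc.1 cc.2 ≠ 1 := by
  obtain ⟨B, hBfin, hBall⟩ := existsB_list CS
  obtain ⟨x₁, L₁, hE, hg⟩ := main_aux B hBfin CS
    (fun cc hcc => ⟨(h cc hcc).1, (h cc hcc).2, hBall cc hcc⟩) 1 ∅ Set.finite_empty
    (by rw [psupp_one]; exact Set.finite_empty) (by simp)
  exact ⟨x₁, hE.suppfin, hg x₁ (fun z _ => rfl)⟩
end Main
section Hyper
set_option linter.unusedSectionVars false
open Equiv
variable {X : Type*}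

lemma coe_gpEval (G : Subgroup (Equiv.Perm X)) (a : ↥G) (l : List (Bool × ↥G)) (x : ↥G) :
    ((gpEval x a l : ↥G) : Equiv.Perm X)
      = gpEval (↑x) (↑a) (l.map (fun p => (p.1, (p.2 : Equiv.Perm X)))) := by
  induction l generalizing a with
  | nil => simp [gpEval]
  | cons p t ih =>
    obtain ⟨e, b⟩ := p
    rw [gpEval_cons, List.map_cons, gpEval_cons]
    cases e <;> simp [← ih b]

lemma gp_ne_iff (G : Subgroup (Equiv.Perm X)) (a : ↥G) (l : List (Bool × ↥G)) (x : ↥G) :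
    gpEval x a l ≠ 1 ↔
      gpEval (↑x : Equiv.Perm X) (↑a) (l.map (fun p => (p.1, (p.2 : Equiv.Perm X)))) ≠ 1 := by
  rw [← coe_gpEval]
  exact (not_congr (OneMemClass.coe_eq_one)).symm

lemma main_set [Infinite X] (G : Subgroup (Equiv.Perm X))
    (hG : ∀ g : Equiv.Perm X, {x : X | g x ≠ x}.Finite → g ∈ G)
    (T : Set (Set ↥G)) (hT : T.Finite)
    (hmem : ∀ W ∈ T, ∃ cc : Equiv.Perm X × List (Bool × Equiv.Perm X), cc.2.length ≤ 3 ∧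
        (∃ g : Equiv.Perm X, gpEval g cc.1 cc.2 ≠ 1) ∧
        ∀ y : ↥G, gpEval (↑y : Equiv.Perm X) cc.1 cc.2 ≠ 1 → y ∈ W) :
    ∃ y : ↥G, ∀ W ∈ T, y ∈ W := by
  classical
  choose f hf1 hf2 hf3 using hmem
  set CS : List (Equiv.Perm X × List (Bool × Equiv.Perm X)) :=
    hT.toFinset.attach.toList.map
      (fun W => f W.1 (hT.mem_toFinset.mp W.2)) with hCS
  obtain ⟨x, hxfin, hx⟩ := main CS (by
    intro cc hcc
    rw [hCS, List.mem_map] at hcc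
    obtain ⟨W, _, rfl⟩ := hcc
    exact ⟨hf1 _ _, hf2 _ _⟩)
  have hxG : x ∈ G := hG x hxfin
  refine ⟨⟨x, hxG⟩, ?_⟩
  intro W hW
  have hWmem : W ∈ hT.toFinset := by simpa using hW
  have hcc : f W hW ∈ CS := by
    rw [hCS, List.mem_map]
    exact ⟨⟨W, hWmem⟩, by simp [Finset.mem_toList], rfl⟩
  exact hf3 W hW _ (hx _ hcc)

lemma hyper3 [Infinite X] (G : Subgroup (Equiv.Perm X))
    (hG : ∀ g : Equiv.Perm X, {x : X | g x ≠ x}.Finite → g ∈ G) :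
    Hyperconnected (gpZariskiLe ↥G 3) := by
  classical
  intro U V hU hV hUne hVne
  obtain ⟨u, hu⟩ := hUne
  obtain ⟨v, hv⟩ := hVne
  letI : TopologicalSpace ↥G := gpZariskiLe ↥G 3
  have hbasis : TopologicalSpace.IsTopologicalBasis
      ((fun f : Set (Set ↥G) => ⋂₀ f) ''
        {f : Set (Set ↥G) | f.Finite ∧
          f ⊆ {U | ∃ (a : ↥G) (l : List (Bool × ↥G)), l.length ≤ 3 ∧
            U = {x | gpEval x a l ≠ 1}}}) :=
    TopologicalSpace.isTopologicalBasis_of_subbasis rfl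
  obtain ⟨W₁, hW₁mem, huW₁, hW₁U⟩ := hbasis.exists_subset_of_mem_open hu hU
  obtain ⟨W₂, hW₂mem, hvW₂, hW₂V⟩ := hbasis.exists_subset_of_mem_open hv hV
  obtain ⟨F₁, ⟨hF₁fin, hF₁sub⟩, rfl⟩ := hW₁mem
  obtain ⟨F₂, ⟨hF₂fin, hF₂sub⟩, rfl⟩ := hW₂mem
  have key : ∃ y : ↥G, ∀ W ∈ F₁ ∪ F₂, y ∈ W := by
    apply main_set G hG _ (hF₁fin.union hF₂fin)
    intro W hW
    have hwit : ∃ y₀ : ↥G, y₀ ∈ W := by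
      rcases hW with hW | hW
      · exact ⟨u, huW₁ W hW⟩
      · exact ⟨v, hvW₂ W hW⟩
    have hWS : ∃ (a : ↥G) (l : List (Bool × ↥G)), l.length ≤ 3 ∧
        W = {x | gpEval x a l ≠ 1} := by
      rcases hW with hW | hW
      · exact hF₁sub hW
      · exact hF₂sub hW
    obtain ⟨a, l, hlen, rfl⟩ := hWS
    obtain ⟨y₀, hy₀⟩ := hwit
    refine ⟨((a : Equiv.Perm X), l.map (fun p => (p.1, (p.2 : Equiv.Perm X)))), ?_, ?_, ?_⟩
    · simpa using hlen
    · exact ⟨(y₀ : Equiv.Perm X), (gp_ne_iff G a l y₀).mp hy₀⟩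
    · intro y hy
      exact (gp_ne_iff G a l y).mpr hy
  obtain ⟨y, hy⟩ := key
  refine ⟨y, hW₁U ?_, hW₂V ?_⟩
  · exact fun W hW => hy W (Or.inl hW)
  · exact fun W hW => hy W (Or.inr hW)

lemma hyper_le [Infinite X] (G : Subgroup (Equiv.Perm X))
    (hG : ∀ g : Equiv.Perm X, {x : X | g x ≠ x}.Finite → g ∈ G)
    {n : ℕ} (hn : n ≤ 3) : Hyperconnected (gpZariskiLe ↥G n) := by
  intro U V hU hV hUne hVne
  have h3 : gpZariskiLe ↥G 3 ≤ gpZariskiLe ↥G n := by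
    apply TopologicalSpace.generateFrom_anti
    rintro W ⟨a, l, hlen, rfl⟩
    exact ⟨a, l, hlen.trans hn, rfl⟩
  exact hyper3 G hG U V (hU.mono h3) (hV.mono h3) hUne hVne
end Hyper
section Ptwise
set_option linter.unusedSectionVars false
open Equiv
variable {X : Type*}

lemma permPtwise_isOpen_eval (z : X) (U : Set X) :
    IsOpen[permPtwise X] {g : Equiv.Perm X | g z ∈ U} := by
  letI : TopologicalSpace X := ⊥
  haveI : DiscreteTopology X := ⟨rfl⟩
  letI : TopologicalSpace (Perm X) := permPtwise X
  have hc : Continuous fun g : Perm X => g z := by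
    have h1 : Continuous fun (g : Perm X) (x : X) => g x := continuous_induced_dom
    exact (continuous_apply z).comp h1
  have he : {g : Perm X | g z ∈ U} = (fun g : Perm X => g z) ⁻¹' U := rfl
  rw [he]
  exact (isOpen_discrete U).preimage hc

lemma permPtwise_isOpen_eq (z y : X) :
    IsOpen[permPtwise X] {g : Equiv.Perm X | g z = y} :=
  permPtwise_isOpen_eval z {y}

lemma permPtwise_continuous_mul :
    Continuous[@instTopologicalSpaceProd _ _ (permPtwise X) (permPtwise X), permPtwise X]
      (fun gh : Equiv.Perm X × Equiv.Perm X => gh.1 * gh.2) := by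
  letI : TopologicalSpace X := ⊥
  haveI : DiscreteTopology X := ⟨rfl⟩
  letI : TopologicalSpace (Perm X) := permPtwise X
  apply continuous_induced_rng.2
  apply continuous_pi
  intro z
  rw [continuous_def]
  intro U hU
  rw [isOpen_iff_forall_mem_open]
  rintro ⟨g, h⟩ hgh
  have hgh' : g (h z) ∈ U := hgh
  refine ⟨{p : Perm X × Perm X | p.1 (h z) = g (h z)} ∩ {p | p.2 z = h z}, ?_, ?_, rfl, rfl⟩
  · rintro ⟨g', h'⟩ ⟨h1, h2⟩
    show g' (h' z) ∈ U
    have h2' : h' z = h z := h2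
    rw [h2']
    have h1' : g' (h z) = g (h z) := h1
    rw [h1']
    exact hgh'
  · exact IsOpen.inter ((permPtwise_isOpen_eq (h z) (g (h z))).preimage continuous_fst)
      ((permPtwise_isOpen_eq z (h z)).preimage continuous_snd)

lemma permPtwise_continuous_inv :
    Continuous[permPtwise X, permPtwise X] (fun g : Equiv.Perm X => g⁻¹) := by
  letI : TopologicalSpace X := ⊥
  haveI : DiscreteTopology X := ⟨rfl⟩
  letI : TopologicalSpace (Perm X) := permPtwise X
  apply continuous_induced_rng.2
  apply continuous_pi
  intro z
  rw [continuous_def]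
  intro U hU
  rw [isOpen_iff_forall_mem_open]
  intro g hg
  have hg' : g⁻¹ z ∈ U := hg
  refine ⟨{g' : Perm X | g' (g⁻¹ z) = z}, ?_, permPtwise_isOpen_eq _ _, ?_⟩
  · intro g' h1
    show g'⁻¹ z ∈ U
    have h1' : g' (g⁻¹ z) = z := h1
    have : g'⁻¹ z = g⁻¹ z := Perm.inv_eq_iff_eq.mpr h1'.symm
    rw [this]
    exact hg'
  · show g (g⁻¹ z) = z
    exact Perm.apply_inv_self g z

lemma subPtwise_continuousMul (G : Subgroup (Equiv.Perm X)) :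
    @ContinuousMul ↥G (subPtwise G) _ := by
  letI : TopologicalSpace (Perm X) := permPtwise X
  letI : TopologicalSpace ↥G := subPtwise G
  have hval : Continuous (fun g : ↥G => (g : Perm X)) := continuous_induced_dom
  constructor
  apply continuous_induced_rng.2
  show Continuous ((fun q : Perm X × Perm X => q.1 * q.2) ∘
        (fun p : ↥G × ↥G => ((p.1 : Perm X), (p.2 : Perm X))))
  exact permPtwise_continuous_mul.comp ((hval.comp continuous_fst).prodMk (hval.comp continuous_snd))

lemma subPtwise_continuousInv (G : Subgroup (Equiv.Perm X)) :
    @ContinuousInv ↥G (subPtwise G) _ := by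
  letI : TopologicalSpace (Perm X) := permPtwise X
  letI : TopologicalSpace ↥G := subPtwise G
  have hval : Continuous (fun g : ↥G => (g : Perm X)) := continuous_induced_dom
  constructor
  apply continuous_induced_rng.2
  show Continuous ((fun g : Perm X => g⁻¹) ∘ (fun g : ↥G => (g : Perm X)))
  exact permPtwise_continuous_inv.comp hval

lemma gpEval_continuous (G : Subgroup (Equiv.Perm X)) (a : ↥G) (l : List (Bool × ↥G)) :
    Continuous[subPtwise G, subPtwise G] (fun x : ↥G => gpEval x a l) := by
  letI : TopologicalSpace ↥G := subPtwise G
  haveI := subPtwise_continuousMul G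
  haveI := subPtwise_continuousInv G
  induction l generalizing a with
  | nil =>
    simp only [gpEval_nil]
    exact continuous_const
  | cons p t ih =>
    obtain ⟨e, b⟩ := p
    simp only [gpEval_cons]
    apply Continuous.mul continuous_const
    apply Continuous.mul ?_ (ih b)
    cases e
    · exact continuous_inv
    · exact continuous_id

lemma subPtwise_isOpen_ne_one (G : Subgroup (Equiv.Perm X)) :
    IsOpen[subPtwise G] {y : ↥G | y ≠ 1} := by
  letI : TopologicalSpace (Perm X) := permPtwise X
  letI : TopologicalSpace ↥G := subPtwise G
  have hval : Continuous (fun g : ↥G => (g : Perm X)) := continuous_induced_dom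
  have he : {y : ↥G | y ≠ 1} = ⋃ z : X, (fun g : ↥G => (g : Perm X)) ⁻¹' {g : Perm X | g z ∈ ({z}ᶜ : Set X)} := by
    ext y
    simp only [Set.mem_setOf_eq, Set.mem_iUnion, Set.mem_preimage, Set.mem_compl_iff,
      Set.mem_singleton_iff]
    constructor
    · intro h
      by_contra h2
      push_neg at h2
      refine h (Subtype.ext (Equiv.ext fun z => ?_))
      rw [h2 z]
      rfl
    · intro ⟨z, hz⟩ h
      rw [h] at hz
      exact hz rfl
  rw [he]
  exact isOpen_iUnion fun z => (permPtwise_isOpen_eval z _).preimage hval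

lemma zar_le_ptwise (G : Subgroup (Equiv.Perm X)) (n : ℕ) :
    subPtwise G ≤ gpZariskiLe ↥G n := by
  apply le_generateFrom
  rintro U ⟨a, l, hlen, rfl⟩
  letI : TopologicalSpace ↥G := subPtwise G
  have he : {x : ↥G | gpEval x a l ≠ 1} = (fun x : ↥G => gpEval x a l) ⁻¹' {y : ↥G | y ≠ 1} := rfl
  rw [he]
  exact (subPtwise_isOpen_ne_one G).preimage (gpEval_continuous G a l)
end Ptwise
section Swap
set_option linter.unusedSectionVars false
open Equiv
variable {X : Type*}

lemma swap_comm_of_disjoint [DecidableEq X] {a b c d : X} (hac : a ≠ c) (had : a ≠ d)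
    (hbc : b ≠ c) (hbd : b ≠ d) :
    Equiv.swap a b * Equiv.swap c d = Equiv.swap c d * Equiv.swap a b := by
  ext z
  simp only [Perm.mul_apply]
  rcases eq_or_ne z c with rfl | hzc
  · rw [swap_apply_left, swap_apply_of_ne_of_ne (Ne.symm had) (Ne.symm hbd),
      swap_apply_of_ne_of_ne (Ne.symm hac) (Ne.symm hbc), swap_apply_left]
  rcases eq_or_ne z d with rfl | hzd
  · rw [swap_apply_right, swap_apply_of_ne_of_ne (Ne.symm hac) (Ne.symm hbc),
      swap_apply_of_ne_of_ne (Ne.symm had) (Ne.symm hbd), swap_apply_right]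
  rcases eq_or_ne z a with rfl | hza
  · rw [swap_apply_of_ne_of_ne hac had, swap_apply_left,
      swap_apply_of_ne_of_ne hbc hbd]
  rcases eq_or_ne z b with rfl | hzb
  · rw [swap_apply_of_ne_of_ne hbc hbd, swap_apply_right,
      swap_apply_of_ne_of_ne hac had]
  · rw [swap_apply_of_ne_of_ne hzc hzd, swap_apply_of_ne_of_ne hza hzb,
      swap_apply_of_ne_of_ne hzc hzd]

lemma swap_inter_of_ne [DecidableEq X] {a b c d : X}
    (h : (Equiv.swap a b * Equiv.swap c d) * (Equiv.swap a b * Equiv.swap c d) ≠ 1) :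
    a = c ∨ a = d ∨ b = c ∨ b = d := by
  by_contra hno
  push_neg at hno
  obtain ⟨h1, h2, h3, h4⟩ := hno
  apply h
  have hcomm := swap_comm_of_disjoint h1 h2 h3 h4
  calc (Equiv.swap a b * Equiv.swap c d) * (Equiv.swap a b * Equiv.swap c d)
      = Equiv.swap a b * (Equiv.swap c d * Equiv.swap a b) * Equiv.swap c d := by group
    _ = Equiv.swap a b * (Equiv.swap a b * Equiv.swap c d) * Equiv.swap c d := by rw [hcomm]
    _ = (Equiv.swap a b * Equiv.swap a b) * (Equiv.swap c d * Equiv.swap c d) := by group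
    _ = 1 := by rw [Equiv.swap_mul_self, Equiv.swap_mul_self, one_mul]

lemma swap_pair_pow_ne_one [DecidableEq X] {q v w : X} (hvq : v ≠ q) (hvw : v ≠ w)
    (hwq : w ≠ q) :
    (Equiv.swap q v * Equiv.swap q w) * (Equiv.swap q v * Equiv.swap q w) ≠ 1 := by
  apply perm_ne_one_of_apply (z := w)
  simp only [Perm.mul_apply]
  rw [swap_apply_right, swap_apply_left, swap_apply_of_ne_of_ne hvq hvw, swap_apply_right]
  exact Ne.symm hwq

lemma gp4_eval {H : Type*} [Group H] (x σ τ : H) :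
    gpEval x 1 [(true, σ), (false, τ), (true, σ), (false, τ)]
      = (x * σ * x⁻¹ * τ) * (x * σ * x⁻¹ * τ) := by
  simp [gpEval]
  group
end Swap
section Open
set_option linter.unusedSectionVars false
open Equiv
variable {X : Type*}

lemma pigeon_s6 {A : Type*} {gp gu₁ gu₂ gu₃ q w₁ w₂ w₃ w₄ w₅ w₆ : A}
    (i12 : gu₁ ≠ gu₂) (i13 : gu₁ ≠ gu₃) (i23 : gu₂ ≠ gu₃)
    (hd : gp = w₁ ∨ gp = w₂ ∨ gu₁ = q) (he : gp = w₃ ∨ gp = w₄ ∨ gu₂ = q)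
    (hf : gp = w₅ ∨ gp = w₆ ∨ gu₃ = q)
    (d13 : w₁ ≠ w₃) (d14 : w₁ ≠ w₄) (d23 : w₂ ≠ w₃) (d24 : w₂ ≠ w₄)
    (d15 : w₁ ≠ w₅) (d16 : w₁ ≠ w₆) (d25 : w₂ ≠ w₅) (d26 : w₂ ≠ w₆)
    (d35 : w₃ ≠ w₅) (d36 : w₃ ≠ w₆) (d45 : w₄ ≠ w₅) (d46 : w₄ ≠ w₆) : False := by
  rcases hd with d | d | d <;> rcases he with e | e | e <;> rcases hf with f | f | f <;>
    simp_all

lemma ptwise_subbasic_open [Infinite X] (G : Subgroup (Equiv.Perm X))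
    (hG : ∀ g : Equiv.Perm X, {x : X | g x ≠ x}.Finite → g ∈ G) (p q : X) :
    IsOpen[gpZariskiLe ↥G 4] {g : ↥G | (g : Equiv.Perm X) p = q} := by
  classical
  letI : TopologicalSpace ↥G := gpZariskiLe ↥G 4
  rw [isOpen_iff_forall_mem_open]
  intro g₀ hg₀
  have hg₀' : (g₀ : Perm X) p = q := hg₀
  obtain ⟨u₁, hu₁⟩ := Infinite.exists_notMem_finset ({p} : Finset X)
  obtain ⟨u₂, hu₂⟩ := Infinite.exists_notMem_finset ({p, u₁} : Finset X)
  obtain ⟨u₃, hu₃⟩ := Infinite.exists_notMem_finset ({p, u₁, u₂} : Finset X)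
  simp only [Finset.mem_insert, Finset.mem_singleton, not_or] at hu₁ hu₂ hu₃
  obtain ⟨w₁, hw₁⟩ := Infinite.exists_notMem_finset
    ({q, (g₀ : Perm X) u₁, (g₀ : Perm X) u₂, (g₀ : Perm X) u₃} : Finset X)
  obtain ⟨w₂, hw₂⟩ := Infinite.exists_notMem_finset
    ({q, (g₀ : Perm X) u₁, (g₀ : Perm X) u₂, (g₀ : Perm X) u₃, w₁} : Finset X)
  obtain ⟨w₃, hw₃⟩ := Infinite.exists_notMem_finset
    ({q, (g₀ : Perm X) u₁, (g₀ : Perm X) u₂, (g₀ : Perm X) u₃, w₁, w₂} : Finset X)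
  obtain ⟨w₄, hw₄⟩ := Infinite.exists_notMem_finset
    ({q, (g₀ : Perm X) u₁, (g₀ : Perm X) u₂, (g₀ : Perm X) u₃, w₁, w₂, w₃} : Finset X)
  obtain ⟨w₅, hw₅⟩ := Infinite.exists_notMem_finset
    ({q, (g₀ : Perm X) u₁, (g₀ : Perm X) u₂, (g₀ : Perm X) u₃, w₁, w₂, w₃, w₄} : Finset X)
  obtain ⟨w₆, hw₆⟩ := Infinite.exists_notMem_finset
    ({q, (g₀ : Perm X) u₁, (g₀ : Perm X) u₂, (g₀ : Perm X) u₃, w₁, w₂, w₃, w₄, w₅} : Finset X)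
  simp only [Finset.mem_insert, Finset.mem_singleton, not_or] at hw₁ hw₂ hw₃ hw₄ hw₅ hw₆
  have hswap : ∀ z y : X, Equiv.swap z y ∈ G :=
    fun z y => hG _ (((Set.finite_singleton y).insert z).subset (psupp_swap z y))
  have hcond : ∀ (σ τ g : ↥G),
      gpEval g 1 [(true, σ), (false, τ), (true, σ), (false, τ)] ≠ 1 ↔
        ((g : Perm X) * (σ : Perm X) * (g : Perm X)⁻¹ * (τ : Perm X)) *
          ((g : Perm X) * (σ : Perm X) * (g : Perm X)⁻¹ * (τ : Perm X)) ≠ 1 := by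
    intro σ τ g
    rw [gp_ne_iff G 1 [(true, σ), (false, τ), (true, σ), (false, τ)] g]
    simp only [List.map_cons, List.map_nil]
    rw [OneMemClass.coe_one, gp4_eval]
  have hmk : ∀ (z y : X) (g : ↥G),
      gpEval g 1 [(true, (⟨Equiv.swap p z, hswap p z⟩ : ↥G)),
        (false, (⟨Equiv.swap q y, hswap q y⟩ : ↥G)),
        (true, (⟨Equiv.swap p z, hswap p z⟩ : ↥G)),
        (false, (⟨Equiv.swap q y, hswap q y⟩ : ↥G))] ≠ 1 ↔
      (Equiv.swap ((g : Perm X) p) ((g : Perm X) z) * Equiv.swap q y) *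
        (Equiv.swap ((g : Perm X) p) ((g : Perm X) z) * Equiv.swap q y) ≠ 1 := by
    intro z y g
    rw [hcond]
    rw [show ((⟨Equiv.swap p z, hswap p z⟩ : ↥G) : Perm X) = Equiv.swap p z from rfl]
    rw [show ((⟨Equiv.swap q y, hswap q y⟩ : ↥G) : Perm X) = Equiv.swap q y from rfl]
    rw [show (g : Perm X) * Equiv.swap p z * (g : Perm X)⁻¹
        = Equiv.swap ((g : Perm X) p) ((g : Perm X) z) from (Equiv.swap_apply_apply _ p z).symm]
  set mkV : X → X → Set ↥G := fun z y =>
    {g : ↥G | gpEval g 1 [(true, (⟨Equiv.swap p z, hswap p z⟩ : ↥G)),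
      (false, (⟨Equiv.swap q y, hswap q y⟩ : ↥G)),
      (true, (⟨Equiv.swap p z, hswap p z⟩ : ↥G)),
      (false, (⟨Equiv.swap q y, hswap q y⟩ : ↥G))] ≠ 1} with hmkV
  have hopen : ∀ z y : X, IsOpen (mkV z y) := by
    intro z y
    exact TopologicalSpace.isOpen_generateFrom_of_mem
      ⟨1, [(true, (⟨Equiv.swap p z, hswap p z⟩ : ↥G)),
        (false, (⟨Equiv.swap q y, hswap q y⟩ : ↥G)),
        (true, (⟨Equiv.swap p z, hswap p z⟩ : ↥G)),
        (false, (⟨Equiv.swap q y, hswap q y⟩ : ↥G))], by norm_num, rfl⟩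
  have hmem' : ∀ (g : ↥G) (z y : X), g ∈ mkV z y ↔
      (Equiv.swap ((g : Perm X) p) ((g : Perm X) z) * Equiv.swap q y) *
        (Equiv.swap ((g : Perm X) p) ((g : Perm X) z) * Equiv.swap q y) ≠ 1 := by
    intro g z y
    rw [hmkV]
    exact hmk z y g
  refine ⟨mkV u₁ w₁ ∩ mkV u₁ w₂ ∩ mkV u₂ w₃ ∩ mkV u₂ w₄ ∩ mkV u₃ w₅ ∩ mkV u₃ w₆,
    ?_, ?_, ?_⟩
  · rintro g ⟨⟨⟨⟨⟨h11, h12⟩, h21⟩, h22⟩, h31⟩, h32⟩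
    show (g : Perm X) p = q
    by_contra hne
    have H11 := swap_inter_of_ne ((hmem' g u₁ w₁).mp h11)
    have H12 := swap_inter_of_ne ((hmem' g u₁ w₂).mp h12)
    have H21 := swap_inter_of_ne ((hmem' g u₂ w₃).mp h21)
    have H22 := swap_inter_of_ne ((hmem' g u₂ w₄).mp h22)
    have H31 := swap_inter_of_ne ((hmem' g u₃ w₅).mp h31)
    have H32 := swap_inter_of_ne ((hmem' g u₃ w₆).mp h32)
    have E : ∀ (u wa wb : X), wa ≠ wb →
        ((g : Perm X) p = q ∨ (g : Perm X) p = wa ∨ (g : Perm X) u = q ∨ (g : Perm X) u = wa) →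
        ((g : Perm X) p = q ∨ (g : Perm X) p = wb ∨ (g : Perm X) u = q ∨ (g : Perm X) u = wb) →
        ((g : Perm X) p = wa ∨ (g : Perm X) p = wb ∨ (g : Perm X) u = q) := by
      intro u wa wb hne2 h1 h2
      rcases h1 with h1 | h1 | h1 | h1
      · exact absurd h1 hne
      · exact Or.inl h1
      · exact Or.inr (Or.inr h1)
      rcases h2 with h2 | h2 | h2 | h2
      · exact absurd h2 hne
      · exact Or.inr (Or.inl h2)
      · exact Or.inr (Or.inr h2)
      · exact absurd (h1.symm.trans h2) hne2
    have D1 := E u₁ w₁ w₂ (fun h => hw₂.2.2.2.2 h.symm) H11 H12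
    have D2 := E u₂ w₃ w₄ (fun h => hw₄.2.2.2.2.2.2 h.symm) H21 H22
    have D3 := E u₃ w₅ w₆ (fun h => hw₆.2.2.2.2.2.2.2.2 h.symm) H31 H32
    have i12 : (g : Perm X) u₁ ≠ (g : Perm X) u₂ :=
      fun h => hu₂.2 ((g : Perm X).injective h).symm
    have i13 : (g : Perm X) u₁ ≠ (g : Perm X) u₃ :=
      fun h => hu₃.2.1 ((g : Perm X).injective h).symm
    have i23 : (g : Perm X) u₂ ≠ (g : Perm X) u₃ :=
      fun h => hu₃.2.2 ((g : Perm X).injective h).symm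
    exact pigeon_s6 i12 i13 i23 D1 D2 D3
      (fun h => hw₃.2.2.2.2.1 h.symm) (fun h => hw₄.2.2.2.2.1 h.symm)
      (fun h => hw₃.2.2.2.2.2 h.symm) (fun h => hw₄.2.2.2.2.2.1 h.symm)
      (fun h => hw₅.2.2.2.2.1 h.symm) (fun h => hw₆.2.2.2.2.1 h.symm)
      (fun h => hw₅.2.2.2.2.2.1 h.symm) (fun h => hw₆.2.2.2.2.2.1 h.symm)
      (fun h => hw₅.2.2.2.2.2.2.1 h.symm) (fun h => hw₆.2.2.2.2.2.2.1 h.symm)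
      (fun h => hw₅.2.2.2.2.2.2.2 h.symm) (fun h => hw₆.2.2.2.2.2.2.2.1 h.symm)
  · exact ((((((hopen u₁ w₁).inter (hopen u₁ w₂)).inter (hopen u₂ w₃)).inter
      (hopen u₂ w₄)).inter (hopen u₃ w₅)).inter (hopen u₃ w₆))
  · have hgmem : ∀ (u w : X), u ≠ p → w ≠ q → (g₀ : Perm X) u ≠ w → g₀ ∈ mkV u w := by
      intro u w hu hw hvw
      rw [hmem' g₀ u w, hg₀']
      exact swap_pair_pow_ne_one
        (fun h => hu ((g₀ : Perm X).injective (h.trans hg₀'.symm))) hvw hw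
    exact ⟨⟨⟨⟨⟨hgmem u₁ w₁ hu₁ hw₁.1 (fun h => hw₁.2.1 h.symm),
      hgmem u₁ w₂ hu₁ hw₂.1 (fun h => hw₂.2.1 h.symm)⟩,
      hgmem u₂ w₃ hu₂.1 hw₃.1 (fun h => hw₃.2.2.1 h.symm)⟩,
      hgmem u₂ w₄ hu₂.1 hw₄.1 (fun h => hw₄.2.2.1 h.symm)⟩,
      hgmem u₃ w₅ hu₃.1 hw₅.1 (fun h => hw₅.2.2.2.1 h.symm)⟩,
      hgmem u₃ w₆ hu₃.1 hw₆.1 (fun h => hw₆.2.2.2.1 h.symm)⟩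

lemma zar_eq_ptwise [Infinite X] (G : Subgroup (Equiv.Perm X))
    (hG : ∀ g : Equiv.Perm X, {x : X | g x ≠ x}.Finite → g ∈ G) {n : ℕ} (hn : 4 ≤ n) :
    gpZariskiLe ↥G n = subPtwise G := by
  apply le_antisymm
  · have h4 : gpZariskiLe ↥G n ≤ gpZariskiLe ↥G 4 := by
      apply TopologicalSpace.generateFrom_anti
      rintro W ⟨a, l, hlen, rfl⟩
      exact ⟨a, l, hlen.trans hn, rfl⟩
    refine le_trans h4 ?_
    have hcomp : subPtwise G = TopologicalSpace.induced
        (fun g : ↥G => (fun x : X => (g : Perm X) x))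
        (@Pi.topologicalSpace X (fun _ => X) (fun _ => ⊥)) := by
      unfold subPtwise permPtwise
      rw [induced_compose]
      rfl
    rw [hcomp, ← continuous_iff_le_induced]
    letI : TopologicalSpace ↥G := gpZariskiLe ↥G 4
    letI : TopologicalSpace X := ⊥
    apply continuous_pi
    intro z
    rw [continuous_def]
    intro U _
    have he : (fun g : ↥G => (g : Perm X) z) ⁻¹' U
        = ⋃ y ∈ U, {g : ↥G | (g : Perm X) z = y} := by
      ext g; simp
    rw [he]
    exact isOpen_biUnion fun y _ => ptwise_subbasic_open G hG z y
  · exact zar_le_ptwise G n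

lemma td_of [Infinite X] (G : Subgroup (Equiv.Perm X))
    (hG : ∀ g : Equiv.Perm X, {x : X | g x ≠ x}.Finite → g ∈ G) {n : ℕ} (hn : 4 ≤ n) :
    @TotallyDisconnectedSpace ↥G (gpZariskiLe ↥G n) := by
  rw [zar_eq_ptwise G hG hn]
  letI : TopologicalSpace X := ⊥
  haveI : DiscreteTopology X := ⟨rfl⟩
  letI : TopologicalSpace (Perm X) := permPtwise X
  letI : TopologicalSpace ↥G := subPtwise G
  constructor
  intro S _ hS
  have hval : Continuous (fun g : ↥G => (g : Perm X)) := continuous_induced_dom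
  have hcoe : Continuous (fun g : Perm X => (fun x : X => g x)) := continuous_induced_dom
  have hΦ : Continuous (fun g : ↥G => (fun x : X => (g : Perm X) x)) := hcoe.comp hval
  intro x hx y hy
  have himg : IsPreconnected ((fun g : ↥G => (fun x : X => (g : Perm X) x)) '' S) :=
    hS.image _ hΦ.continuousOn
  have hsub := (isTotallyDisconnected_of_totallyDisconnectedSpace
    ((fun g : ↥G => (fun x : X => (g : Perm X) x)) '' S)) _ subset_rfl himg
  have hxy := hsub ⟨x, hx, rfl⟩ ⟨y, hy, rfl⟩
  apply Subtype.ext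
  apply Equiv.coe_fn_injective
  exact hxy
end Open


/-- Dichotomy for `Sym_ω(X) ⊆ G ⊆ Sym(X)` with `X` infinite: for `n ≥ 4`, `Z±_n(G)` is the
topology of pointwise convergence and in particular totally disconnected; for `n ≤ 3`,
`Z±_n(G)` is hyperconnected. -/
theorem statement6 {X : Type*} [Infinite X] (G : Subgroup (Equiv.Perm X))
    (hG : ∀ g : Equiv.Perm X, {x : X | g x ≠ x}.Finite → g ∈ G) (n : ℕ) :
    (4 ≤ n → gpZariskiLe ↥G n = subPtwise G ∧
      @TotallyDisconnectedSpace ↥G (gpZariskiLe ↥G n)) ∧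
    (n ≤ 3 → Hyperconnected (gpZariskiLe ↥G n)) := by
  constructor
  · intro h4
    exact ⟨zar_eq_ptwise G hG h4, td_of G hG h4⟩
  · intro h3
    exact hyper_le G hG h3
end
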